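/- arXiv:2110.13477 — 8 statements merged into one kernel-verified Lean document; each statement's English description precedes it below -/
import Mathlib

section
/- Let d ≥ 2, let Σ ∈ ℝ^{d×d} be symmetric positive definite, let a ∈ ℝ^d not be in (−∞,0]^d, and let ã be the unique solution of Π_Σ(a). Then there exists a unique nonempty index set I ⊆ {1,…,d}, with complement J := {1,…,d} \ I, such that: (i) ã_I = a_I and a_I ≠ 0_I; (ii) Σ_{II}^{−1} a_I > 0_I componentwise, and (if J is nonempty) ã_J = Σ_{JI} Σ_{II}^{−1} a_I ≥ a_J componentwise; (iii) the vector λ := Σ^{−1} ã satisfies λ_I = Σ_{II}^{−1} a_I > 0_I and λ_J = 0_J. -/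
open Matrix Finset

private lemma quad_comm {d : ℕ} {M : Matrix (Fin d) (Fin d) ℝ} (hM : M.IsHermitian)
    (x y : Fin d → ℝ) : x ⬝ᵥ M *ᵥ y = y ⬝ᵥ M *ᵥ x := by
  have hMt : Mᵀ = M := by
    ext i j
    simpa using (hM.apply j i).symm
  rw [dotProduct_mulVec, ← mulVec_transpose, hMt, dotProduct_comm]

private lemma posdef_sub {d : ℕ} {S : Matrix (Fin d) (Fin d) ℝ} (hS : S.PosDef)
    (I : Finset (Fin d)) :
    (Matrix.of fun p q : {x // x ∈ I} => S p.1 q.1).PosDef := by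
  classical
  rw [posDef_iff_dotProduct_mulVec]
  constructor
  · ext p q
    simpa [Matrix.conjTranspose_apply] using (hS.1.apply q.1 p.1).symm
  · intro x hx
    set x' : Fin d → ℝ := fun j => if h : j ∈ I then x ⟨j, h⟩ else 0 with hx'
    have hx'eq : ∀ p : {x // x ∈ I}, x' p.1 = x p := by
      intro p; simp [hx', p.2]
    have hx'ne : x' ≠ 0 := by
      obtain ⟨p, hp⟩ := Function.ne_iff.1 hx
      intro h0
      apply hp
      have := congrFun h0 p.1
      rw [hx'eq p] at this
      simpa using this
    have hpos := hS.dotProduct_mulVec_pos hx'ne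
    have key : x' ⬝ᵥ S *ᵥ x' =
        x ⬝ᵥ (Matrix.of fun p q : {x // x ∈ I} => S p.1 q.1) *ᵥ x := by
      simp only [dotProduct, mulVec, dotProduct, Matrix.of_apply]
      calc ∑ j, x' j * (∑ k, S j k * x' k)
          = ∑ j ∈ I, x' j * (∑ k, S j k * x' k) :=
            (Finset.sum_subset (Finset.subset_univ I)
              (by intro j _ hj; simp [hx', hj])).symm
        _ = ∑ p : {x // x ∈ I}, x' p.1 * (∑ k, S p.1 k * x' k) :=
            (Finset.sum_coe_sort I _).symm
        _ = ∑ p : {x // x ∈ I}, x p * (∑ q : {x // x ∈ I}, S p.1 q.1 * x q) := by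
            refine Finset.sum_congr rfl fun p _ => ?_
            rw [hx'eq p]
            congr 1
            calc ∑ k, S p.1 k * x' k
                = ∑ k ∈ I, S p.1 k * x' k :=
                  (Finset.sum_subset (Finset.subset_univ I)
                    (by intro k _ hk; simp [hx', hk])).symm
              _ = ∑ q : {x // x ∈ I}, S p.1 q.1 * x' q.1 :=
                  (Finset.sum_coe_sort I _).symm
              _ = ∑ q : {x // x ∈ I}, S p.1 q.1 * x q := by
                  refine Finset.sum_congr rfl fun q _ => ?_
                  rw [hx'eq q]
    have hst : star x' ⬝ᵥ S *ᵥ x' = x' ⬝ᵥ S *ᵥ x' := by simp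
    rw [hst, key] at hpos
    simpa using hpos


/-- For `Σ` symmetric positive definite and `a ∉ (-∞,0]^d`, if `ta` is the
(unique) solution of the quadratic program `Π_Σ(a)`, then there exists a unique nonempty
index set `I ⊆ {1,…,d}` such that (i) `ta_I = a_I ≠ 0_I`; (ii) `Σ_{II}⁻¹ a_I > 0` and, for
`j ∈ J := Iᶜ`, `ta_J = Σ_{JI} Σ_{II}⁻¹ a_I ≥ a_J`; (iii) `λ := Σ⁻¹ ta` satisfies
`λ_I = Σ_{II}⁻¹ a_I > 0` and `λ_J = 0`. -/
theorem stmt1 {d : ℕ} (hd : 2 ≤ d)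
    (S : Matrix (Fin d) (Fin d) ℝ) (hS : S.PosDef)
    (a : Fin d → ℝ) (ha : ∃ i, 0 < a i)
    (ta : Fin d → ℝ)
    (hta : (∀ i, a i ≤ ta i) ∧
      ∀ y : Fin d → ℝ, (∀ i, a i ≤ y i) → ta ⬝ᵥ S⁻¹ *ᵥ ta ≤ y ⬝ᵥ S⁻¹ *ᵥ y) :
    ∃! I : Finset (Fin d), I.Nonempty ∧
      -- (i) `ta_I = a_I` and `a_I ≠ 0_I`
      (∀ i ∈ I, ta i = a i) ∧ (∃ i ∈ I, a i ≠ 0) ∧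
      -- (ii) `Σ_{II}⁻¹ a_I > 0` componentwise
      (∀ i : {x // x ∈ I},
        0 < ((Matrix.of fun p q : {x // x ∈ I} => S p.1 q.1)⁻¹ *ᵥ
              fun p : {x // x ∈ I} => a p.1) i) ∧
      -- (ii) for `j ∈ J`: `ta j = (Σ_{JI} Σ_{II}⁻¹ a_I)_j` and `ta j ≥ a j`
      (∀ j, j ∉ I →
        ta j = ∑ i : {x // x ∈ I}, S j i.1 *
          ((Matrix.of fun p q : {x // x ∈ I} => S p.1 q.1)⁻¹ *ᵥ
            fun p : {x // x ∈ I} => a p.1) i ∧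
        a j ≤ ta j) ∧
      -- (iii) `λ_I = Σ_{II}⁻¹ a_I` (which is `> 0` by (ii)) and `λ_J = 0`
      (∀ i : {x // x ∈ I}, (S⁻¹ *ᵥ ta) i.1 =
        ((Matrix.of fun p q : {x // x ∈ I} => S p.1 q.1)⁻¹ *ᵥ
          fun p : {x // x ∈ I} => a p.1) i) ∧
      (∀ j, j ∉ I → (S⁻¹ *ᵥ ta) j = 0) := by
    classical
  obtain ⟨hfeas, hmin⟩ := hta
  have hNpd : (S⁻¹).PosDef := hS.inv
  set lam : Fin d → ℝ := S⁻¹ *ᵥ ta with hlam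
  -- quadratic expansion
  have exp : ∀ (t : ℝ) (v : Fin d → ℝ),
      (ta + t • v) ⬝ᵥ S⁻¹ *ᵥ (ta + t • v) =
        ta ⬝ᵥ S⁻¹ *ᵥ ta + 2 * t * (v ⬝ᵥ lam) + t ^ 2 * (v ⬝ᵥ S⁻¹ *ᵥ v) := by
    intro t v
    have h1 : ta ⬝ᵥ S⁻¹ *ᵥ v = v ⬝ᵥ S⁻¹ *ᵥ ta := quad_comm hNpd.1 ta v
    simp only [mulVec_add, mulVec_smul, dotProduct_add, add_dotProduct,
      dotProduct_smul, smul_dotProduct, smul_eq_mul, h1, hlam]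
    ring
  -- the first-order condition
  have step : ∀ (v : Fin d → ℝ) (ε : ℝ), 0 < ε →
      (∀ t : ℝ, 0 < t → t ≤ ε → ∀ i, a i ≤ ta i + t * v i) → 0 ≤ v ⬝ᵥ lam := by
    intro v ε hε hfe
    by_contra hneg
    push_neg at hneg
    have hv : v ≠ 0 := by
      rintro rfl; simp at hneg
    have hc : 0 < v ⬝ᵥ S⁻¹ *ᵥ v := by
      have := hNpd.dotProduct_mulVec_pos hv
      simpa using this
    set c := v ⬝ᵥ S⁻¹ *ᵥ v with hcdef
    set t := min ε (-(v ⬝ᵥ lam) / c) with ht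
    have ht0 : 0 < t := lt_min hε (div_pos (by linarith) hc)
    have hte : t ≤ ε := min_le_left _ _
    have h2 : t * c ≤ -(v ⬝ᵥ lam) := by
      have h3 : t ≤ -(v ⬝ᵥ lam) / c := min_le_right _ _
      calc t * c ≤ (-(v ⬝ᵥ lam) / c) * c := by nlinarith
        _ = -(v ⬝ᵥ lam) := by field_simp
    have hfeas' : ∀ i, a i ≤ (ta + t • v) i := by
      intro i; simpa [smul_eq_mul] using hfe t ht0 hte i
    have hmin' := hmin (ta + t • v) hfeas'
    rw [exp t v] at hmin'
    nlinarith [mul_pos ht0 ht0]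
  -- KKT sign conditions
  have hA : ∀ j, 0 ≤ lam j := by
    intro j
    have hfe : ∀ t : ℝ, 0 < t → t ≤ 1 → ∀ i, a i ≤ ta i + t * (Pi.single j 1 : Fin d → ℝ) i := by
      intro t ht _ i
      rcases eq_or_ne i j with rfl | h
      · simp only [Pi.single_eq_same]
        have := hfeas i; linarith
      · simp [Pi.single_eq_of_ne h, hfeas i]
    have := step (Pi.single j 1 : Fin d → ℝ) 1 one_pos hfe
    simpa using this
  have hB : ∀ j, a j < ta j → lam j = 0 := by
    intro j hj
    by_contra hne
    have hpos : 0 < lam j := lt_of_le_of_ne (hA j) (Ne.symm hne)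
    have hfe : ∀ t : ℝ, 0 < t → t ≤ ta j - a j →
        ∀ i, a i ≤ ta i + t * (-(Pi.single j 1 : Fin d → ℝ)) i := by
      intro t ht hte i
      rcases eq_or_ne i j with rfl | h
      · simp only [Pi.neg_apply, Pi.single_eq_same]
        linarith
      · simp [Pi.single_eq_of_ne h, hfeas i]
    have := step (-(Pi.single j 1 : Fin d → ℝ)) (ta j - a j) (by linarith) hfe
    simp only [neg_dotProduct, single_dotProduct, one_mul] at this
    linarith
  -- the index set
  set I : Finset (Fin d) := Finset.univ.filter (fun i => lam i ≠ 0) with hI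
  have hmemI : ∀ i, i ∈ I ↔ lam i ≠ 0 := by
    intro i; simp [hI]
  have hlamJ : ∀ j, j ∉ I → lam j = 0 := by
    intro j hj
    by_contra h
    exact hj ((hmemI j).2 h)
  have hlamI : ∀ i, i ∈ I → 0 < lam i :=
    fun i hi => lt_of_le_of_ne (hA i) (Ne.symm ((hmemI i).1 hi))
  have hactive : ∀ i, i ∈ I → ta i = a i := by
    intro i hi
    rcases lt_or_eq_of_le (hfeas i) with h | h
    · exact absurd (hB i h) ((hmemI i).1 hi)
    · exact h.symm
  -- S *ᵥ lam = ta
  have hSlam : S *ᵥ lam = ta := by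
    rw [hlam, mulVec_mulVec, mul_nonsing_inv _ hS.det_pos.ne'.isUnit, one_mulVec]
  have hSlam' : ∀ j, ∑ k, S j k * lam k = ta j := by
    intro j
    have := congrFun hSlam j
    simpa [mulVec, dotProduct] using this
  -- restrict sums to I
  have hsumI : ∀ j, ∑ k, S j k * lam k = ∑ i : {x // x ∈ I}, S j i.1 * lam i.1 := by
    intro j
    rw [Finset.sum_coe_sort I (fun k => S j k * lam k)]
    exact (Finset.sum_subset (Finset.subset_univ I)
      (fun k _ hk => by rw [hlamJ k hk, mul_zero])).symm
  -- I is nonempty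
  have hIne : I.Nonempty := by
    by_contra h
    rw [Finset.not_nonempty_iff_eq_empty] at h
    have hz : lam = 0 := by
      funext k
      exact hlamJ k (by simp [h])
    obtain ⟨i, hi⟩ := ha
    have hta0 : ta = 0 := by rw [← hSlam, hz, mulVec_zero]
    have h2 := hfeas i
    rw [hta0] at h2
    simp at h2
    linarith
  -- submatrix facts
  have hTpd : (Matrix.of fun p q : {x // x ∈ I} => S p.1 q.1).PosDef := posdef_sub hS I
  have hTdet : IsUnit (Matrix.of fun p q : {x // x ∈ I} => S p.1 q.1).det :=
    hTpd.det_pos.ne'.isUnit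
  have hTlam : (Matrix.of fun p q : {x // x ∈ I} => S p.1 q.1) *ᵥ
      (fun p : {x // x ∈ I} => lam p.1) = fun p : {x // x ∈ I} => a p.1 := by
    funext p
    simp only [mulVec, dotProduct, Matrix.of_apply]
    calc ∑ q : {x // x ∈ I}, S p.1 q.1 * lam q.1
        = ∑ k, S p.1 k * lam k := (hsumI p.1).symm
      _ = ta p.1 := hSlam' p.1
      _ = a p.1 := hactive p.1 p.2
  have hmaster : ∀ i : {x // x ∈ I},
      ((Matrix.of fun p q : {x // x ∈ I} => S p.1 q.1)⁻¹ *ᵥ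
        fun p : {x // x ∈ I} => a p.1) i = lam i.1 := by
    intro i
    have : (Matrix.of fun p q : {x // x ∈ I} => S p.1 q.1)⁻¹ *ᵥ
        (fun p : {x // x ∈ I} => a p.1) = fun p : {x // x ∈ I} => lam p.1 := by
      rw [← hTlam, mulVec_mulVec, nonsing_inv_mul _ hTdet, one_mulVec]
    exact congrFun this i
  refine ⟨I, ⟨hIne, hactive, ?_, ?_, ?_, ?_, ?_⟩, ?_⟩
  · -- ∃ i ∈ I, a i ≠ 0
    by_contra h
    push_neg at h
    have hdp : ta ⬝ᵥ lam = 0 := by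
      simp only [dotProduct]
      refine Finset.sum_eq_zero fun k _ => ?_
      by_cases hk : k ∈ I
      · rw [hactive k hk, h k hk, zero_mul]
      · rw [hlamJ k hk, mul_zero]
    have htane : ta ≠ 0 := by
      obtain ⟨i, hi⟩ := ha
      intro h0
      have := hfeas i
      rw [h0] at this
      simp at this
      linarith
    have := hNpd.dotProduct_mulVec_pos htane
    simp only [star_trivial] at this
    rw [hlam] at hdp
    linarith
  · -- positivity
    intro i
    rw [hmaster i]
    exact hlamI i.1 i.2
  · -- j ∉ I
    intro j hj
    constructor
    · calc ta j = ∑ k, S j k * lam k := (hSlam' j).symm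
        _ = ∑ i : {x // x ∈ I}, S j i.1 * lam i.1 := hsumI j
        _ = ∑ i : {x // x ∈ I}, S j i.1 *
            ((Matrix.of fun p q : {x // x ∈ I} => S p.1 q.1)⁻¹ *ᵥ
              fun p : {x // x ∈ I} => a p.1) i := by
            refine Finset.sum_congr rfl fun i _ => ?_
            rw [hmaster i]
    · exact hfeas j
  · -- lam_I = T⁻¹ a_I
    intro i
    exact (hmaster i).symm
  · -- lam_J = 0
    intro j hj
    exact hlamJ j hj
  · -- uniqueness
    intro I' hI'
    obtain ⟨hne', hact', hex', hpos', hJ', hlamI', hzero'⟩ := hI'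
    ext i
    rw [hmemI i]
    constructor
    · intro hi
      have h1 := hlamI' ⟨i, hi⟩
      have h2 := hpos' ⟨i, hi⟩
      rw [← h1] at h2
      exact ne_of_gt h2
    · intro hne0
      by_contra h
      exact hne0 (hzero' i h)
end

section
/- Let d ≥ 2, let Σ ∈ ℝ^{d×d} be symmetric positive definite, let a ∈ ℝ^d not be in (−∞,0]^d, let ã be the unique solution of Π_Σ(a), and let I := {i : (Σ^{−1}ã)_i > 0}. Then the minimum value satisfies min_{x ≥ a} x^⊤ Σ^{−1} x = ã^⊤ Σ^{−1} ã = a^⊤ Σ^{−1} ã = a_I^⊤ Σ_{II}^{−1} a_I, and this common value is strictly positive. -/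
open Matrix

/-- For `Σ` symmetric positive definite, `a ∉ (-∞,0]^d`, `ta` the unique
solution of `Π_Σ(a)` and `I := {i : (Σ⁻¹ ta)_i > 0}`, the minimum value satisfies
`min_{x ≥ a} x^⊤Σ⁻¹x = ta^⊤Σ⁻¹ta = a^⊤Σ⁻¹ta = a_I^⊤ Σ_{II}⁻¹ a_I > 0`. -/
theorem stmt2 {d : ℕ} (hd : 2 ≤ d)
    (S : Matrix (Fin d) (Fin d) ℝ) (hS : S.PosDef)
    (a : Fin d → ℝ) (ha : ∃ i, 0 < a i)
    (ta : Fin d → ℝ)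
    (hta : (∀ i, a i ≤ ta i) ∧
      ∀ y : Fin d → ℝ, (∀ i, a i ≤ y i) → ta ⬝ᵥ S⁻¹ *ᵥ ta ≤ y ⬝ᵥ S⁻¹ *ᵥ y)
    (I : Finset (Fin d)) (hI : ∀ i, i ∈ I ↔ 0 < (S⁻¹ *ᵥ ta) i) :
    IsLeast {r : ℝ | ∃ x : Fin d → ℝ, (∀ i, a i ≤ x i) ∧ r = x ⬝ᵥ S⁻¹ *ᵥ x}
      (ta ⬝ᵥ S⁻¹ *ᵥ ta) ∧
    ta ⬝ᵥ S⁻¹ *ᵥ ta = a ⬝ᵥ S⁻¹ *ᵥ ta ∧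
    ta ⬝ᵥ S⁻¹ *ᵥ ta =
      (fun p : {x // x ∈ I} => a p.1) ⬝ᵥ
        (Matrix.of fun p q : {x // x ∈ I} => S p.1 q.1)⁻¹ *ᵥ
          (fun p : {x // x ∈ I} => a p.1) ∧
    0 < ta ⬝ᵥ S⁻¹ *ᵥ ta := by
  obtain ⟨htale, hmin⟩ := hta
  have hA : (S⁻¹).PosDef := hS.inv
  set A := S⁻¹ with hAdef
  have hAs : Aᵀ = A := (by simpa using hA.isHermitian : A.IsSymm)
  set w : Fin d → ℝ := A *ᵥ ta with hw
  -- symmetric pairing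
  have hpair : ∀ u : Fin d → ℝ, ta ⬝ᵥ A *ᵥ u = (A *ᵥ ta) ⬝ᵥ u := by
    intro u
    rw [Matrix.dotProduct_mulVec, ← Matrix.mulVec_transpose, hAs]
  have hsingle_ne : ∀ i : Fin d, (Pi.single i (1:ℝ) : Fin d → ℝ) ≠ 0 := by
    intro i h
    simpa using congrFun h i
  have hAii : ∀ i, 0 < A i i := by
    intro i
    have := hA.dotProduct_mulVec_pos (hsingle_ne i)
    simpa [dotProduct_single, Matrix.mulVec_single] using this
  -- quadratic expansion
  have expand : ∀ (i : Fin d) (t : ℝ),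
      (ta + t • (Pi.single i 1 : Fin d → ℝ)) ⬝ᵥ A *ᵥ (ta + t • (Pi.single i 1 : Fin d → ℝ))
        = ta ⬝ᵥ A *ᵥ ta + t * (2 * w i) + t ^ 2 * A i i := by
    intro i t
    have h1 : (Pi.single i (1:ℝ) : Fin d → ℝ) ⬝ᵥ (A *ᵥ ta) = w i := by
      simp [single_dotProduct, hw]
    have h2 : ta ⬝ᵥ A *ᵥ (Pi.single i (1:ℝ)) = w i := by
      rw [hpair]
      simp [dotProduct_single, hw]
    have h3 : (Pi.single i (1:ℝ) : Fin d → ℝ) ⬝ᵥ A *ᵥ (Pi.single i (1:ℝ)) = A i i := by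
      simp [single_dotProduct, Matrix.mulVec_single]
    simp only [Matrix.mulVec_add, Matrix.mulVec_smul, dotProduct_add,
      add_dotProduct, dotProduct_smul, smul_dotProduct,
      smul_eq_mul, h1, h2, h3]
    ring
  -- feasibility of perturbations
  have feas : ∀ (i : Fin d) (t : ℝ), a i - ta i ≤ t →
      ∀ j, a j ≤ (ta + t • (Pi.single i 1 : Fin d → ℝ)) j := by
    intro i t ht j
    by_cases hji : j = i
    · subst hji
      simp only [Pi.add_apply, Pi.smul_apply, Pi.single_eq_same, smul_eq_mul, mul_one]
      linarith
    · simp only [Pi.add_apply, Pi.smul_apply, Pi.single_eq_of_ne hji, smul_eq_mul, mul_zero,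
        add_zero]
      exact htale j
  have opt : ∀ (i : Fin d) (t : ℝ), a i - ta i ≤ t →
      0 ≤ t * (2 * w i) + t ^ 2 * A i i := by
    intro i t ht
    have := hmin (ta + t • (Pi.single i 1 : Fin d → ℝ)) (feas i t ht)
    rw [expand i t] at this
    linarith
  -- nonnegativity of the multiplier
  have hw0 : ∀ i, 0 ≤ w i := by
    intro i
    by_contra hneg
    push_neg at hneg
    set t := -w i / A i i with htdef
    have htpos : 0 < t := div_pos (neg_pos.2 hneg) (hAii i)
    have htA : t * A i i = -w i := div_mul_cancel₀ _ (hAii i).ne'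
    have h0 := opt i t (by nlinarith [htale i])
    nlinarith
  -- complementary slackness
  have hcs : ∀ i, a i < ta i → w i = 0 := by
    intro i hlt
    by_contra hne
    have hwpos : 0 < w i := lt_of_le_of_ne (hw0 i) (Ne.symm hne)
    set t := -min (ta i - a i) (w i / A i i) with htdef
    have hm1 : (0:ℝ) < min (ta i - a i) (w i / A i i) :=
      lt_min (by linarith) (div_pos hwpos (hAii i))
    have htneg : t < 0 := htdef ▸ neg_lt_zero.mpr hm1
    have hfeas : a i - ta i ≤ t := by
      have : min (ta i - a i) (w i / A i i) ≤ ta i - a i := min_le_left _ _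
      simp only [htdef]; linarith
    have h0 := opt i t hfeas
    have hmin2 : min (ta i - a i) (w i / A i i) ≤ w i / A i i := min_le_right _ _
    have htA : -w i ≤ t * A i i := by
      have : t ≥ -(w i / A i i) := by simp only [htdef]; linarith
      have h2 : (-(w i / A i i)) * A i i ≤ t * A i i :=
        mul_le_mul_of_nonneg_right this (hAii i).le
      have h3 : (-(w i / A i i)) * A i i = -w i := by
        rw [neg_mul, div_mul_cancel₀ _ (hAii i).ne']
      exact h3 ▸ h2
    nlinarith [mul_le_mul_of_nonpos_left htA htneg.le, mul_neg_of_neg_of_pos htneg hwpos]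
  -- facts about I
  have hwoff : ∀ i, i ∉ I → w i = 0 := by
    intro i hi
    have : ¬ 0 < w i := fun h => hi ((hI i).2 h)
    exact le_antisymm (not_lt.1 this) (hw0 i)
  have htaaI : ∀ i, i ∈ I → ta i = a i := by
    intro i hi
    have hwpos : 0 < w i := (hI i).1 hi
    by_contra hne
    have hlt : a i < ta i := lt_of_le_of_ne (htale i) (Ne.symm hne)
    exact hwpos.ne' (hcs i hlt)
  -- termwise equality of products
  have hterm : ∀ i, ta i * w i = a i * w i := by
    intro i
    by_cases hi : a i < ta i
    · rw [hcs i hi]; ring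
    · rw [le_antisymm (not_lt.1 hi) (htale i)]
  have hEq1 : ta ⬝ᵥ A *ᵥ ta = a ⬝ᵥ A *ᵥ ta := by
    show ta ⬝ᵥ w = a ⬝ᵥ w
    unfold dotProduct
    exact Finset.sum_congr rfl fun i _ => hterm i
  -- invertibility of S
  have hSdet : IsUnit S.det := isUnit_iff_ne_zero.2 hS.det_pos.ne'
  have hSw : S *ᵥ w = ta := by
    rw [hw, hAdef, Matrix.mulVec_mulVec, Matrix.mul_nonsing_inv S hSdet, Matrix.one_mulVec]
  -- the submatrix
  set T : Matrix {x // x ∈ I} {x // x ∈ I} ℝ :=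
    Matrix.of fun p q : {x // x ∈ I} => S p.1 q.1 with hTdef
  set aI : {x // x ∈ I} → ℝ := fun p => a p.1 with haI
  set wI : {x // x ∈ I} → ℝ := fun p => w p.1 with hwI
  have hST : ∀ i j, S i j = S j i := by
    intro i j
    have h := hS.isHermitian
    have := congrFun (congrFun h j) i
    simpa using this
  -- T is positive definite
  have hT : T.PosDef := by
    refine Matrix.PosDef.of_dotProduct_mulVec_pos ?_ ?_
    · ext p q
      simp only [Matrix.conjTranspose_apply, hTdef, Matrix.of_apply, star_trivial]
      exact hST q.1 p.1
    · intro x hx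
      set x' : Fin d → ℝ := fun j => if h : j ∈ I then x ⟨j, h⟩ else 0 with hx'def
      have hx'ne : x' ≠ 0 := by
        intro h0
        apply hx
        funext p
        have := congrFun h0 p.1
        simpa [hx'def, p.2] using this
      have key1 : ∀ v : Fin d → ℝ, x' ⬝ᵥ v = ∑ p : {x // x ∈ I}, x p * v p.1 := by
        intro v
        unfold dotProduct
        rw [← Finset.sum_subset (Finset.subset_univ I)
          (fun j _ hj => by simp [hx'def, hj] : ∀ j ∈ Finset.univ, j ∉ I → x' j * v j = 0)]
        rw [← Finset.sum_coe_sort I (fun j => x' j * v j)]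
        exact Finset.sum_congr rfl fun p _ => by simp [hx'def, p.2]
      have key2 : ∀ j, (S *ᵥ x') j = ∑ p : {x // x ∈ I}, S j p.1 * x p := by
        intro j
        show (fun k => S j k) ⬝ᵥ x' = _
        unfold dotProduct
        rw [← Finset.sum_subset (Finset.subset_univ I)
          (fun k _ hk => by simp [hx'def, hk] : ∀ k ∈ Finset.univ, k ∉ I → S j k * x' k = 0)]
        rw [← Finset.sum_coe_sort I (fun k => S j k * x' k)]
        exact Finset.sum_congr rfl fun p _ => by simp [hx'def, p.2]
      have hval : x' ⬝ᵥ S *ᵥ x' = x ⬝ᵥ T *ᵥ x := by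
        rw [key1]
        unfold dotProduct
        refine Finset.sum_congr rfl fun p _ => ?_
        rw [key2]
        congr 1
      have := hS.dotProduct_mulVec_pos hx'ne
      simp only [star_trivial] at this
      rw [hval] at this
      simpa using this
  have hTdetU : IsUnit T.det := isUnit_iff_ne_zero.2 hT.det_pos.ne'
  -- T *ᵥ wI = aI
  have hTw : T *ᵥ wI = aI := by
    funext p
    show (fun q => T p q) ⬝ᵥ wI = a p.1
    unfold dotProduct
    have : ∑ q : {x // x ∈ I}, T p q * wI q = ∑ j ∈ I, S p.1 j * w j := by
      rw [← Finset.sum_coe_sort I (fun j => S p.1 j * w j)]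
      rfl
    rw [this]
    rw [Finset.sum_subset (Finset.subset_univ I) (fun j _ hj => by rw [hwoff j hj]; ring)]
    have : ∑ j : Fin d, S p.1 j * w j = (S *ᵥ w) p.1 := rfl
    rw [this, hSw, htaaI p.1 p.2]
  have hinvw : T⁻¹ *ᵥ aI = wI := by
    rw [← hTw, Matrix.mulVec_mulVec, Matrix.nonsing_inv_mul T hTdetU, Matrix.one_mulVec]
  -- value equality with submatrix
  have hEq2 : ta ⬝ᵥ A *ᵥ ta = aI ⬝ᵥ T⁻¹ *ᵥ aI := by
    rw [hinvw]
    show ta ⬝ᵥ w = aI ⬝ᵥ wI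
    have h1 : aI ⬝ᵥ wI = ∑ j ∈ I, a j * w j := by
      unfold dotProduct
      rw [← Finset.sum_coe_sort I (fun j => a j * w j)]
    rw [h1]
    rw [Finset.sum_subset (Finset.subset_univ I) (fun j _ hj => by rw [hwoff j hj]; ring)]
    show ∑ x : Fin d, ta x * w x = ∑ x : Fin d, a x * w x
    exact Finset.sum_congr rfl fun i _ => hterm i
  -- positivity
  have htane : ta ≠ 0 := by
    obtain ⟨i, hai⟩ := ha
    intro h0
    have := htale i
    rw [h0] at this
    simp at this
    linarith
  have hpos : 0 < ta ⬝ᵥ A *ᵥ ta := by simpa using hA.dotProduct_mulVec_pos htane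
  refine ⟨⟨⟨ta, htale, rfl⟩, ?_⟩, hEq1, hEq2, hpos⟩
  rintro r ⟨x, hx, rfl⟩
  exact hmin x hx
end

section
/- Let Σ ∈ ℝ^{d×d} be symmetric positive definite with Gaussian density φ(x) := (2π)^{−d/2} (det Σ)^{−1/2} exp(−x^⊤Σ^{−1}x/2), let c ∈ ℝ^d, and let a ∈ ℝ^d not be in (−∞,0]^d. Let ã be the unique solution of Π_Σ(a), λ := Σ^{−1}ã, I := {i : λ_i > 0}, J its complement, and U := {i ∈ J : ã_i = a_i}. Then, as u → ∞, ∫_{{w ∈ ℝ^d : w > u·a + c componentwise}} φ(w) dw is asymptotically equivalent to (u^{−|I|} φ(u·ã + c) / ∏_{i∈I} λ_i) · ∫_{ℝ^{|J|}} 1{x_U < 0_U} · exp(−(1/2) x_J^⊤ (Σ^{−1})_{JJ} x_J + ⟨(Σ^{−1}c)_J, x_J⟩) dx_J, where for J = ∅ the latter integral is interpreted as 1. (Equivalently: for X a centered Gaussian vector with covariance Σ, P(X − c > u·a) has this asymptotic behaviour as u → ∞.) -/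
open Matrix MeasureTheory Filter Set

set_option linter.unusedSectionVars false
set_option maxHeartbeats 1000000

section aux
variable {ι : Type*} [Fintype ι] [DecidableEq ι]

lemma dot_symm (A : Matrix ι ι ℝ) (hA : Aᵀ = A) (x y : ι → ℝ) :
    x ⬝ᵥ A *ᵥ y = y ⬝ᵥ A *ᵥ x := by
  simp only [dotProduct, mulVec, Finset.mul_sum]
  rw [Finset.sum_comm]
  refine Finset.sum_congr rfl fun i _ => Finset.sum_congr rfl fun j _ => ?_
  have h : A j i = A i j := by
    conv_rhs => rw [← hA, Matrix.transpose_apply]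
  rw [h]; ring

lemma quad_continuous (A : Matrix ι ι ℝ) : Continuous (fun x : ι → ℝ => x ⬝ᵥ A *ᵥ x) := by
  simp only [dotProduct, mulVec]
  refine continuous_finset_sum _ fun i _ => ?_
  exact (continuous_apply i).mul (continuous_finset_sum _ fun j _ =>
    (continuous_const.mul (continuous_apply j)))

lemma dot_self_pos {x : ι → ℝ} (hx : x ≠ 0) : 0 < x ⬝ᵥ x := by
  obtain ⟨i, hi⟩ := Function.ne_iff.mp hx
  refine Finset.sum_pos' (fun j _ => mul_self_nonneg _) ⟨i, Finset.mem_univ i, ?_⟩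
  exact mul_self_pos.mpr hi

lemma posdef_lower (A : Matrix ι ι ℝ) (hA : A.PosDef) :
    ∃ α > 0, ∀ x : ι → ℝ, α * (x ⬝ᵥ x) ≤ x ⬝ᵥ A *ᵥ x := by
  have hApos : ∀ x : ι → ℝ, x ≠ 0 → 0 < x ⬝ᵥ A *ᵥ x := by
    intro x hx
    have := hA.dotProduct_mulVec_pos hx
    simpa using this
  cases isEmpty_or_nonempty ι with
  | inl h =>
    refine ⟨1, one_pos, fun x => ?_⟩
    simp [dotProduct]
  | inr h =>
    set K : Set (ι → ℝ) := {x | x ⬝ᵥ x = 1} with hK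
    have hqc : Continuous (fun x : ι → ℝ => x ⬝ᵥ x) := by
      refine continuous_finset_sum _ fun i _ => (continuous_apply i).mul (continuous_apply i)
    have hKc : IsClosed K := isClosed_eq hqc continuous_const
    have hKb : Bornology.IsBounded K := by
      refine (Metric.isBounded_closedBall (x := (0 : ι → ℝ)) (r := 1)).subset fun x hx => ?_
      simp only [Metric.mem_closedBall, dist_zero_right]
      refine (pi_norm_le_iff_of_nonneg zero_le_one).mpr fun i => ?_
      have h1 : x i * x i ≤ 1 := by
        have : x i * x i ≤ x ⬝ᵥ x := by
          refine Finset.single_le_sum (f := fun j => x j * x j)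
            (fun j _ => mul_self_nonneg _) (Finset.mem_univ i)
        calc x i * x i ≤ x ⬝ᵥ x := this
        _ = 1 := hx
      have : |x i| ≤ 1 := by nlinarith [abs_nonneg (x i), abs_mul_abs_self (x i)]
      simpa using this
    have hKcomp : IsCompact K := Metric.isCompact_of_isClosed_isBounded hKc hKb
    have hKne : K.Nonempty := by
      obtain ⟨i⟩ := h
      refine ⟨Pi.single i 1, ?_⟩
      simp [hK, dotProduct_single]
    obtain ⟨x0, hx0K, hx0min⟩ := hKcomp.exists_isMinOn hKne (quad_continuous A).continuousOn
    have hx0ne : x0 ≠ 0 := by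
      intro h0
      rw [h0] at hx0K
      simp [hK, dotProduct] at hx0K
    refine ⟨x0 ⬝ᵥ A *ᵥ x0, hApos x0 hx0ne, fun x => ?_⟩
    rcases eq_or_ne x 0 with rfl | hx
    · simp
    · have hq : 0 < x ⬝ᵥ x := dot_self_pos hx
      set t : ℝ := Real.sqrt (x ⬝ᵥ x) with ht
      have htpos : 0 < t := Real.sqrt_pos.mpr hq
      have ht2 : t * t = x ⬝ᵥ x := Real.mul_self_sqrt hq.le
      have hy : (t⁻¹ • x) ∈ K := by
        simp only [hK, mem_setOf_eq, smul_dotProduct, dotProduct_smul, smul_eq_mul]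
        field_simp
        rw [sq]; exact ht2.symm
      have hmin : x0 ⬝ᵥ A *ᵥ x0 ≤ (t⁻¹ • x) ⬝ᵥ A *ᵥ (t⁻¹ • x) := hx0min hy
      have hyval : (t⁻¹ • x) ⬝ᵥ A *ᵥ (t⁻¹ • x) = t⁻¹ * (t⁻¹ * (x ⬝ᵥ A *ᵥ x)) := by
        rw [smul_dotProduct, Matrix.mulVec_smul, dotProduct_smul]
        simp [smul_eq_mul]
      rw [hyval] at hmin
      have := mul_le_mul_of_nonneg_left hmin (by positivity : (0:ℝ) ≤ t * t)
      calc (x0 ⬝ᵥ A *ᵥ x0) * (x ⬝ᵥ x) = t * t * (x0 ⬝ᵥ A *ᵥ x0) := by rw [ht2]; ring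
      _ ≤ t * t * (t⁻¹ * (t⁻¹ * (x ⬝ᵥ A *ᵥ x))) := this
      _ = x ⬝ᵥ A *ᵥ x := by field_simp

lemma integrable_exp_quad (α : ℝ) (hα : 0 < α) (b : ι → ℝ) :
    Integrable (fun x : ι → ℝ => Real.exp (b ⬝ᵥ x - α * (x ⬝ᵥ x))) := by
  have h1 : ∀ x : ι → ℝ, Real.exp (b ⬝ᵥ x - α * (x ⬝ᵥ x)) =
      ∏ i, Real.exp (b i * x i - α * (x i * x i)) := by
    intro x
    rw [← Real.exp_sum]
    congr 1
    simp only [dotProduct, Finset.mul_sum, ← Finset.sum_sub_distrib]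
  simp only [h1]
  refine Integrable.fintype_prod_dep
    (f := fun i (t : ℝ) => Real.exp (b i * t - α * (t * t))) fun i => ?_
  have h2 : ∀ t : ℝ, Real.exp (b i * t - α * (t * t)) =
      Real.exp ((b i)^2 / (4*α)) * Real.exp (-α * (t - b i/(2*α))^2) := by
    intro t
    rw [← Real.exp_add]
    congr 1
    field_simp
    ring
  simp only [h2]
  exact ((integrable_exp_neg_mul_sq hα).comp_sub_right (b i/(2*α))).const_mul _

lemma integrable_ind_exp {l : ℝ} (hl : 0 < l) :
    Integrable (Set.indicator (Set.Ioi (0:ℝ)) (fun t => Real.exp (-(l*t)))) := by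
  rw [integrable_indicator_iff measurableSet_Ioi]
  exact (exp_neg_integrableOn_Ioi 0 hl).congr_fun (fun x _ => by ring_nf) measurableSet_Ioi

lemma integral_ind_exp {l : ℝ} (hl : 0 < l) :
    ∫ t : ℝ, Set.indicator (Set.Ioi (0:ℝ)) (fun t => Real.exp (-(l*t))) t = l⁻¹ := by
  rw [integral_indicator measurableSet_Ioi]
  have h := integral_comp_mul_left_Ioi (fun x => Real.exp (-x)) 0 hl
  simp only [mul_zero, smul_eq_mul] at h
  calc (∫ x in Ioi (0:ℝ), Real.exp (-(l*x))) = l⁻¹ * ∫ x in Ioi (0:ℝ), Real.exp (-x) := h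
  _ = l⁻¹ := by rw [integral_exp_neg_Ioi_zero, mul_one]

lemma sum_subtype_of_support (Jf : Finset ι) (F : ι → ℝ) (h0 : ∀ i ∉ Jf, F i = 0) :
    ∑ i, F i = ∑ p : {j // j ∈ Jf}, F p.1 := by
  rw [← Finset.sum_subtype Jf (fun i => Iff.rfl) F]
  exact (Finset.sum_subset (Finset.subset_univ Jf) (fun i _ hi => h0 i hi)).symm

lemma quad_subtype (A : Matrix ι ι ℝ) (Jf : Finset ι) (z : ι → ℝ)
    (hz : ∀ i, i ∉ Jf → z i = 0) :
    z ⬝ᵥ A *ᵥ z = (fun p : {j // j ∈ Jf} => z p.1) ⬝ᵥ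
      (Matrix.of fun p q : {j // j ∈ Jf} => A p.1 q.1) *ᵥ (fun p : {j // j ∈ Jf} => z p.1) := by
  simp only [dotProduct, mulVec, Matrix.of_apply]
  rw [sum_subtype_of_support Jf _ (fun i hi => by rw [hz i hi, zero_mul])]
  refine Finset.sum_congr rfl fun p _ => ?_
  congr 1
  rw [sum_subtype_of_support Jf _ (fun k hk => by rw [hz k hk, mul_zero])]

lemma lin_subtype (Jf : Finset ι) (b z : ι → ℝ) (hz : ∀ i, i ∉ Jf → z i = 0) :
    b ⬝ᵥ z = ∑ p : {j // j ∈ Jf}, b p.1 * z p.1 := by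
  simp only [dotProduct]
  rw [sum_subtype_of_support Jf _ (fun i hi => by rw [hz i hi, mul_zero])]

end aux

/-- Lemma 4.1 of the paper. For a centered Gaussian density `φ` with
symmetric positive definite covariance `Σ`, `c ∈ ℝ^d` and `a ∉ (-∞,0]^d`, with `ta` the
solution of `Π_Σ(a)`, `λ = Σ⁻¹ ta`, `I = {i : λ_i > 0}`, `J = Iᶜ`, `U = {i ∈ J : ta_i = a_i}`,
one has, as `u → ∞`,
`P(X - c > u a) ∼ u^{-|I|} φ(u ta + c) / ∏_{i∈I} λ_i ·
  ∫_{ℝ^{|J|}} 1{x_U < 0} exp(-½ x_J^⊤ (Σ⁻¹)_{JJ} x_J + ⟨(Σ⁻¹c)_J, x_J⟩) dx_J`. -/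
theorem stmt3 {d : ℕ}
    (S : Matrix (Fin d) (Fin d) ℝ) (hS : S.PosDef)
    (c a : Fin d → ℝ) (ha : ∃ i, 0 < a i)
    (φ : (Fin d → ℝ) → ℝ)
    (hφ : ∀ x, φ x = (2 * Real.pi) ^ (-(d : ℝ) / 2) * S.det ^ (-(1 : ℝ) / 2) *
        Real.exp (-(x ⬝ᵥ S⁻¹ *ᵥ x) / 2))
    (ta : Fin d → ℝ)
    (hta : (∀ i, a i ≤ ta i) ∧
      ∀ y : Fin d → ℝ, (∀ i, a i ≤ y i) → ta ⬝ᵥ S⁻¹ *ᵥ ta ≤ y ⬝ᵥ S⁻¹ *ᵥ y)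
    (lam : Fin d → ℝ) (hlam : lam = S⁻¹ *ᵥ ta)
    (I J U : Finset (Fin d))
    (hI : ∀ i, i ∈ I ↔ 0 < lam i)
    (hJ : ∀ i, i ∈ J ↔ ¬ 0 < lam i)
    (hU : ∀ i, i ∈ U ↔ (i ∈ J ∧ ta i = a i)) :
    Tendsto (fun u : ℝ =>
      (∫ w in {w : Fin d → ℝ | ∀ i, u * a i + c i < w i}, φ w) /
      (u ^ (-(I.card : ℝ)) * φ (fun i => u * ta i + c i) / (∏ i ∈ I, lam i) *
        ∫ x : {j // j ∈ J} → ℝ,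
          Set.indicator {x : {j // j ∈ J} → ℝ | ∀ j : {j // j ∈ J}, j.1 ∈ U → x j < 0}
            (fun x => Real.exp
              (-(x ⬝ᵥ (Matrix.of fun p q : {j // j ∈ J} => S⁻¹ p.1 q.1) *ᵥ x) / 2 +
                ∑ j : {j // j ∈ J}, (S⁻¹ *ᵥ c) j.1 * x j)) x))
      atTop (nhds 1) := by
  classical
  set A := S⁻¹ with hAdef
  have hA : A.PosDef := hS.inv
  have hAt : Aᵀ = A := by
    have h := hA.isHermitian
    rwa [Matrix.IsHermitian, conjTranspose_eq_transpose_of_trivial] at h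
  have hsym : ∀ x y : Fin d → ℝ, x ⬝ᵥ A *ᵥ y = y ⬝ᵥ A *ᵥ x := dot_symm A hAt
  have hApos : ∀ x : Fin d → ℝ, x ≠ 0 → 0 < x ⬝ᵥ A *ᵥ x := by
    intro x hx; simpa using hA.dotProduct_mulVec_pos hx
  have hexp2 : ∀ x y : Fin d → ℝ,
      (x + y) ⬝ᵥ A *ᵥ (x + y) = x ⬝ᵥ A *ᵥ x + 2 * (x ⬝ᵥ A *ᵥ y) + y ⬝ᵥ A *ᵥ y := by
    intro x y
    rw [Matrix.mulVec_add, add_dotProduct, dotProduct_add, dotProduct_add,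
      hsym y x]
    ring
  -- diagonal positivity
  have hdiag : ∀ i, 0 < A i i := by
    intro i
    have h := hApos (Pi.single i 1) (by
      intro h0
      have := congrFun h0 i
      simp at this)
    simpa [single_dotProduct, Matrix.mulVec_single] using h
  -- KKT
  have key : ∀ (i : Fin d) (t : ℝ), (∀ k, a k ≤ ta k + (Pi.single i t : Fin d → ℝ) k) →
      0 ≤ 2 * (t * lam i) + t * (A i i * t) := by
    intro i t hfeas
    have hineq := hta.2 (ta + Pi.single i t) hfeas
    have h1 : ta ⬝ᵥ A *ᵥ (Pi.single i t) = t * lam i := by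
      rw [hsym, single_dotProduct, ← hlam]
    have h2 : (Pi.single i t) ⬝ᵥ A *ᵥ (Pi.single i t) = t * (A i i * t) := by
      rw [Matrix.mulVec_single, single_dotProduct]
      simp
    rw [hexp2, h1, h2] at hineq
    linarith
  have hlam0 : ∀ i, 0 ≤ lam i := by
    intro i
    by_contra hneg
    push_neg at hneg
    set t : ℝ := -lam i / A i i with htdef
    have htpos : 0 < t := div_pos (neg_pos.mpr hneg) (hdiag i)
    have hfeas : ∀ k, a k ≤ ta k + (Pi.single i t : Fin d → ℝ) k := by
      intro k
      rcases eq_or_ne k i with rfl | hk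
      · simp only [Pi.single_eq_same]
        linarith [hta.1 k]
      · simp only [Pi.single_eq_of_ne hk]
        simpa using hta.1 k
    have hk := key i t hfeas
    have ht2 : A i i * t = -lam i := by
      rw [htdef, mul_div_assoc', mul_comm, mul_div_assoc, div_self (hdiag i).ne', mul_one]
    nlinarith [mul_pos htpos (neg_pos.mpr hneg)]
  have htaI : ∀ i, 0 < lam i → ta i = a i := by
    intro i hpos
    by_contra hne
    have hlt : a i < ta i := lt_of_le_of_ne (hta.1 i) (Ne.symm hne)
    set m : ℝ := min (ta i - a i) (lam i / A i i) with hmdef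
    have hm : 0 < m := lt_min (by linarith) (div_pos hpos (hdiag i))
    have hfeas : ∀ k, a k ≤ ta k + (Pi.single i (-m) : Fin d → ℝ) k := by
      intro k
      rcases eq_or_ne k i with rfl | hk
      · simp only [Pi.single_eq_same]
        have : m ≤ ta k - a k := min_le_left _ _
        linarith
      · simp only [Pi.single_eq_of_ne hk]
        simpa using hta.1 k
    have hk := key i (-m) hfeas
    have hAm : A i i * m ≤ lam i := by
      have h1 : m ≤ lam i / A i i := min_le_right _ _
      calc A i i * m ≤ A i i * (lam i / A i i) :=
        mul_le_mul_of_nonneg_left h1 (hdiag i).le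
      _ = lam i := by rw [mul_div_assoc', mul_comm, mul_div_assoc, div_self (hdiag i).ne', mul_one]
    nlinarith [mul_le_mul_of_nonneg_left hAm hm.le, mul_pos hm hpos]
  have hlamJ : ∀ j, j ∈ J → lam j = 0 := fun j hj =>
    le_antisymm (not_lt.1 ((hJ j).1 hj)) (hlam0 j)
  have hIJ : ∀ i, i ∈ I ↔ ¬ i ∈ J := by
    intro i
    rw [hI i, hJ i, not_not]
  obtain ⟨α, hα, hαle⟩ := posdef_lower A hA
  have hlamI : ∀ i ∈ I, 0 < lam i := fun i hi => (hI i).1 hi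
  have hφpos : ∀ x, 0 < φ x := by
    intro x
    rw [hφ x]
    have h1 : (0:ℝ) < 2 * Real.pi := by positivity
    have h2 : (0:ℝ) < S.det := hS.det_pos
    positivity
  set T : ℝ → (Fin d → ℝ) → (Fin d → ℝ) := fun ε x i => if i ∈ I then ε * x i else -x i
    with hT
  set Eps : ℝ → (Fin d → ℝ) → ℝ := fun ε x =>
    -(∑ i ∈ I, lam i * x i) - (A *ᵥ c) ⬝ᵥ (T ε x) - (T ε x) ⬝ᵥ A *ᵥ (T ε x) / 2 with hEps
  set D : ℝ → Set (Fin d → ℝ) := fun u =>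
    {x | ∀ i, if i ∈ I then 0 < x i else x i < u * (ta i - a i)} with hD
  set Dlim : Set (Fin d → ℝ) :=
    {x | ∀ i, if i ∈ I then 0 < x i else (i ∈ U → x i < 0)} with hDlim
  set f : ℝ → (Fin d → ℝ) → ℝ := fun u x => (D u).indicator 1 x * Real.exp (Eps u⁻¹ x) with hf
  set flim : (Fin d → ℝ) → ℝ := fun x => Dlim.indicator 1 x * Real.exp (Eps 0 x) with hflim
  set C0 : ℝ := c ⬝ᵥ A *ᵥ c / 2 + α/2 * ∑ j ∈ J, c j * c j with hC0
  set g : (Fin d → ℝ) → ℝ := fun x => Real.exp C0 *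
      ∏ i, (if i ∈ I then Set.indicator (Ioi (0:ℝ)) (fun t => Real.exp (-(lam i * t))) (x i)
            else Real.exp (-(α/4 * (x i * x i)))) with hg
  have hDopen : ∀ u, IsOpen (D u) := by
    intro u
    have hDe : D u = ⋂ i, {x : Fin d → ℝ | if i ∈ I then 0 < x i
        else x i < u * (ta i - a i)} := by
      rw [hD]; ext x; simp only [Set.mem_iInter, mem_setOf_eq]
    rw [hDe]
    refine isOpen_iInter_of_finite fun i => ?_
    by_cases hi : i ∈ I
    · simp only [hi, if_true]
      exact isOpen_lt continuous_const (continuous_apply i)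
    · simp only [hi, if_false]
      exact isOpen_lt (continuous_apply i) continuous_const
  have hDlimOpen : IsOpen Dlim := by
    have hDe : Dlim = ⋂ i, {x : Fin d → ℝ | if i ∈ I then 0 < x i
        else (i ∈ U → x i < 0)} := by
      rw [hDlim]; ext x; simp only [Set.mem_iInter, mem_setOf_eq]
    rw [hDe]
    refine isOpen_iInter_of_finite fun i => ?_
    by_cases hi : i ∈ I
    · simp only [hi, if_true]
      exact isOpen_lt continuous_const (continuous_apply i)
    · simp only [hi, if_false]
      by_cases hiU : i ∈ U
      · simp only [hiU, true_implies]
        exact isOpen_lt (continuous_apply i) continuous_const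
      · simp only [hiU, false_implies, setOf_true]
        exact isOpen_univ
  have hDlimMeas : MeasurableSet Dlim := hDlimOpen.measurableSet
  have hTc : ∀ ε, Continuous (fun x : Fin d → ℝ => T ε x) := by
    intro ε
    refine continuous_pi fun i => ?_
    by_cases hi : i ∈ I
    · simp only [hT, hi, if_true]
      exact continuous_const.mul (continuous_apply i)
    · simp only [hT, hi, if_false]
      exact (continuous_apply i).neg
  have hEcont : ∀ ε, Continuous (fun x => Eps ε x) := by
    intro ε
    have h1 : Continuous (fun x : Fin d → ℝ => ∑ i ∈ I, lam i * x i) :=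
      continuous_finset_sum _ fun i _ => continuous_const.mul (continuous_apply i)
    have h2 : Continuous (fun v : Fin d → ℝ => (A *ᵥ c) ⬝ᵥ v) := by
      simp only [dotProduct]
      exact continuous_finset_sum _ fun i _ => continuous_const.mul (continuous_apply i)
    exact ((h1.neg).sub (h2.comp (hTc ε))).sub
      (((quad_continuous A).comp (hTc ε)).div_const 2)
  have hfmeas : ∀ u, AEStronglyMeasurable (f u) volume := by
    intro u
    exact ((measurable_const.indicator (hDopen u).measurableSet).mul
      ((Real.continuous_exp.comp (hEcont u⁻¹)).measurable)).aestronglyMeasurable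
  have hEbound : ∀ ε x,
      Eps ε x ≤ C0 - (∑ i ∈ I, lam i * x i) - α/4 * ∑ j ∈ J, x j * x j := by
    intro ε x
    set v : Fin d → ℝ := T ε x with hv
    have hid : -((A *ᵥ c) ⬝ᵥ v) - v ⬝ᵥ A *ᵥ v / 2
        = c ⬝ᵥ A *ᵥ c / 2 - (v + c) ⬝ᵥ A *ᵥ (v + c) / 2 := by
      have h1 := hexp2 v c
      have h2 : (A *ᵥ c) ⬝ᵥ v = v ⬝ᵥ A *ᵥ c := dotProduct_comm _ _
      linarith
    have hdot : (v + c) ⬝ᵥ (v + c) = ∑ i, (v i + c i) * (v i + c i) := by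
      simp [dotProduct]
    have hsum1 : ∑ j ∈ J, (v j + c j) * (v j + c j) ≤ (v + c) ⬝ᵥ (v + c) := by
      rw [hdot]
      exact Finset.sum_le_sum_of_subset_of_nonneg (Finset.subset_univ J)
        (fun i _ _ => mul_self_nonneg _)
    have hq := hαle (v + c)
    have hsum2 : ∑ j ∈ J, (x j * x j / 2 - c j * c j)
        ≤ ∑ j ∈ J, (v j + c j) * (v j + c j) := by
      refine Finset.sum_le_sum fun j hj => ?_
      have hnotI : ¬ j ∈ I := fun hjI => ((hJ j).1 hj) ((hI j).1 hjI)
      have hvj : v j = -x j := by simp [hv, hT, hnotI]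
      rw [hvj]
      nlinarith [sq_nonneg (x j - 2 * c j)]
    have h3 : α * ∑ j ∈ J, (v j + c j) * (v j + c j) ≤ (v + c) ⬝ᵥ A *ᵥ (v + c) :=
      le_trans (mul_le_mul_of_nonneg_left hsum1 hα.le) hq
    have h4 : α * ∑ j ∈ J, (x j * x j / 2 - c j * c j)
        ≤ α * ∑ j ∈ J, (v j + c j) * (v j + c j) :=
      mul_le_mul_of_nonneg_left hsum2 hα.le
    have h6 : α * ∑ j ∈ J, (x j * x j / 2 - c j * c j)
        = α/2 * ∑ j ∈ J, x j * x j - α * ∑ j ∈ J, c j * c j := by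
      rw [Finset.sum_sub_distrib,
        show ∑ j ∈ J, x j * x j / 2 = (∑ j ∈ J, x j * x j)/2 from by rw [← Finset.sum_div]]
      ring
    simp only [hEps, hC0]
    linarith [hid, h3, h4, h6]
  have hgnn : ∀ x, 0 ≤ g x := by
    intro x
    refine mul_nonneg (Real.exp_nonneg _) (Finset.prod_nonneg fun i _ => ?_)
    by_cases hi : i ∈ I
    · simp only [hi, if_true]
      exact Set.indicator_nonneg (fun t _ => Real.exp_nonneg _) _
    · simp only [hi, if_false]
      exact Real.exp_nonneg _
  have hgint : Integrable g := by
    rw [hg]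
    refine Integrable.const_mul ?_ _
    refine Integrable.fintype_prod_dep (f := fun i (t:ℝ) =>
      if i ∈ I then Set.indicator (Ioi (0:ℝ)) (fun s => Real.exp (-(lam i * s))) t
      else Real.exp (-(α/4 * (t*t)))) fun i => ?_
    by_cases hi : i ∈ I
    · simp only [hi, if_true]
      exact integrable_ind_exp (hlamI i hi)
    · simp only [hi, if_false]
      have hform : (fun t:ℝ => Real.exp (-(α/4 * (t*t)))) = fun t => Real.exp (-(α/4) * t^2) := by
        funext t
        congr 1
        ring
      rw [hform]
      exact integrable_exp_neg_mul_sq (by positivity)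
  have hJc : ∀ i, i ∈ J ↔ ¬ i ∈ I := fun i => by rw [hI i, hJ i]
  have hfg : ∀ u x, |f u x| ≤ g x := by
    intro u x
    simp only [hf]
    by_cases hx : x ∈ D u
    · rw [Set.indicator_of_mem hx, Pi.one_apply, one_mul,
        abs_of_nonneg (Real.exp_nonneg _)]
      have hb := hEbound u⁻¹ x
      refine le_trans (Real.exp_le_exp.mpr hb) (le_of_eq ?_)
      have hxI : ∀ i ∈ I, 0 < x i := by
        intro i hi
        rw [hD] at hx
        have h := hx i
        simpa [hi] using h
      have hstep : Real.exp (C0 - (∑ i ∈ I, lam i * x i) - α/4 * ∑ j ∈ J, x j * x j)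
          = Real.exp C0 * ∏ i, (if i ∈ I then Real.exp (-(lam i * x i))
              else Real.exp (-(α/4 * (x i * x i)))) := by
        have hprod : ∏ i, (if i ∈ I then Real.exp (-(lam i * x i))
            else Real.exp (-(α/4 * (x i * x i))))
            = Real.exp (∑ i, if i ∈ I then -(lam i * x i) else -(α/4 * (x i * x i))) := by
          rw [Real.exp_sum]
          refine Finset.prod_congr rfl fun i _ => ?_
          by_cases hi : i ∈ I <;> simp [hi]
        rw [hprod, ← Real.exp_add]
        congr 1
        have hsplit : ∑ i, (if i ∈ I then -(lam i * x i) else -(α/4 * (x i * x i)))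
            = (∑ i ∈ I, -(lam i * x i)) + ∑ i ∈ Iᶜ, -(α/4 * (x i * x i)) := by
          rw [← Finset.sum_filter_add_sum_filter_not Finset.univ (· ∈ I)]
          congr 1
          · rw [Finset.filter_univ_mem]
            exact Finset.sum_congr rfl fun i hi => if_pos hi
          · have hcompl : Finset.univ.filter (fun i => ¬ i ∈ I) = Iᶜ := by
              ext i; simp [Finset.mem_compl]
            rw [hcompl]
            exact Finset.sum_congr rfl fun i hi => if_neg (Finset.mem_compl.mp hi)
        have hJIc : J = Iᶜ := by
          ext i
          simp [Finset.mem_compl, hJc i]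
        rw [hsplit, ← hJIc, Finset.sum_neg_distrib, Finset.sum_neg_distrib, ← Finset.mul_sum]
        ring
      rw [hstep, hg]
      congr 1
      refine Finset.prod_congr rfl fun i _ => ?_
      by_cases hi : i ∈ I
      · simp only [hi, if_true]
        rw [Set.indicator_of_mem (mem_Ioi.mpr (hxI i hi))]
      · simp only [hi, if_false]
    · rw [Set.indicator_of_notMem hx, zero_mul, abs_zero]
      exact hgnn x
  have hptwise : ∀ x, Tendsto (fun u => f u x) atTop (nhds (flim x)) := by
    intro x
    have hev : ∀ᶠ u in atTop, ∀ j ∈ J, j ∉ U → x j < u * (ta j - a j) := by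
      rw [Filter.eventually_all_finset]
      intro j hj
      by_cases hjU : j ∈ U
      · exact Eventually.of_forall fun u h => absurd hjU h
      · have hne : ta j ≠ a j := fun h => hjU ((hU j).mpr ⟨hj, h⟩)
        have hlt : 0 < ta j - a j := by
          have h1 := hta.1 j
          have h2 := lt_of_le_of_ne h1 (Ne.symm hne)
          linarith
        have htend : Tendsto (fun u : ℝ => u * (ta j - a j)) atTop atTop :=
          Tendsto.atTop_mul_const hlt tendsto_id
        filter_upwards [htend.eventually_gt_atTop (x j)] with u hu _
        exact hu
    have hind : ∀ᶠ u in atTop, (D u).indicator (1 : (Fin d → ℝ) → ℝ) x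
        = Dlim.indicator 1 x := by
      filter_upwards [hev] with u hu
      have hmem : x ∈ D u ↔ x ∈ Dlim := by
        rw [hD, hDlim]
        simp only [mem_setOf_eq]
        constructor
        · intro h i
          have hi := h i
          by_cases hiI : i ∈ I
          · simpa [hiI] using hi
          · simp only [hiI, if_false] at hi ⊢
            intro hiU
            have htaeq : ta i = a i := ((hU i).1 hiU).2
            rw [htaeq] at hi
            simpa using hi
        · intro h i
          have hi := h i
          by_cases hiI : i ∈ I
          · simpa [hiI] using hi
          · simp only [hiI, if_false] at hi ⊢
            have hiJ : i ∈ J := by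
              rw [hJ i]
              intro hpos
              exact hiI ((hI i).2 hpos)
            by_cases hiU : i ∈ U
            · have htaeq : ta i = a i := ((hU i).1 hiU).2
              rw [htaeq]
              simpa using hi hiU
            · exact hu i hiJ hiU
      by_cases hxD : x ∈ D u
      · rw [Set.indicator_of_mem hxD, Set.indicator_of_mem (hmem.1 hxD)]
      · rw [Set.indicator_of_notMem hxD, Set.indicator_of_notMem (fun hc => hxD (hmem.2 hc))]
    have hTce : Continuous (fun ε : ℝ => T ε x) := by
      refine continuous_pi fun i => ?_
      by_cases hi : i ∈ I
      · simp only [hT, hi, if_true]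
        exact continuous_id.mul continuous_const
      · simpa [hT, hi] using (continuous_const : Continuous fun _ : ℝ => -x i)
    have h2 : Continuous (fun v : Fin d → ℝ => (A *ᵥ c) ⬝ᵥ v) := by
      simp only [dotProduct]
      exact continuous_finset_sum _ fun i _ => continuous_const.mul (continuous_apply i)
    have hcont : Continuous (fun ε : ℝ => Eps ε x) := by
      simp only [hEps]
      exact (continuous_const.sub (h2.comp hTce)).sub
        (((quad_continuous A).comp hTce).div_const 2)
    have hexp : Tendsto (fun u : ℝ => Real.exp (Eps u⁻¹ x)) atTop (nhds (Real.exp (Eps 0 x))) :=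
      (Real.continuous_exp.tendsto _).comp ((hcont.tendsto 0).comp tendsto_inv_atTop_zero)
    have hmain : Tendsto (fun u => Dlim.indicator (1 : (Fin d → ℝ) → ℝ) x
        * Real.exp (Eps u⁻¹ x)) atTop (nhds (flim x)) := by
      rw [hflim]
      exact tendsto_const_nhds.mul hexp
    refine Tendsto.congr' ?_ hmain
    filter_upwards [hind] with u hu
    simp only [hf]
    rw [hu]
  have hDCT : Tendsto (fun u => ∫ x, f u x) atTop (nhds (∫ x, flim x)) := by
    refine tendsto_integral_filter_of_dominated_convergence g
      (Eventually.of_forall hfmeas) (Eventually.of_forall fun u => ae_of_all _ (hfg u))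
      hgint (ae_of_all _ hptwise)
  set Jint : ℝ := ∫ x : {j // j ∈ J} → ℝ,
      Set.indicator {x : {j // j ∈ J} → ℝ | ∀ j : {j // j ∈ J}, j.1 ∈ U → x j < 0}
        (fun x => Real.exp
          (-(x ⬝ᵥ (Matrix.of fun p q : {j // j ∈ J} => S⁻¹ p.1 q.1) *ᵥ x) / 2 +
            ∑ j : {j // j ∈ J}, (S⁻¹ *ᵥ c) j.1 * x j)) x with hJintdef
  set HJ : ({j // j ∈ J} → ℝ) → ℝ := fun y =>
    Set.indicator {y : {j // j ∈ J} → ℝ | ∀ j : {j // j ∈ J}, j.1 ∈ U → y j < 0}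
      (fun y => Real.exp (-(y ⬝ᵥ (Matrix.of fun p q : {j // j ∈ J} => A p.1 q.1) *ᵥ y) / 2
        + ∑ j : {j // j ∈ J}, (A *ᵥ c) j.1 * y j)) y with hHJ
  have hJint2 : Jint = ∫ y, HJ y := rfl
  set HI : ({i // ¬ i ∈ J} → ℝ) → ℝ := fun z =>
    ∏ i, Set.indicator (Ioi (0:ℝ)) (fun t => Real.exp (-(lam i.1 * t))) (z i) with hHI
  have hv0supp : ∀ (x : Fin d → ℝ) i, i ∉ J → T 0 x i = 0 := by
    intro x i hiJ
    have hiI : i ∈ I := (hIJ i).2 hiJ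
    simp [hT, hiI]
  have hEps0 : ∀ x : Fin d → ℝ, Eps 0 x
      = (-((fun j : {j // j ∈ J} => x j.1) ⬝ᵥ
          (Matrix.of fun p q : {j // j ∈ J} => A p.1 q.1) *ᵥ
            (fun j : {j // j ∈ J} => x j.1)) / 2
        + ∑ j : {j // j ∈ J}, (A *ᵥ c) j.1 * x j.1) - ∑ i ∈ I, lam i * x i := by
    intro x
    have hq := quad_subtype A J (T 0 x) (hv0supp x)
    have hneg : (fun p : {j // j ∈ J} => T 0 x p.1) = fun p : {j // j ∈ J} => -(x p.1) := by
      funext p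
      have hnI : ¬ p.1 ∈ I := fun h => ((hJ p.1).1 p.2) ((hI p.1).1 h)
      simp [hT, hnI]
    rw [hneg] at hq
    have hq2 : (T 0 x) ⬝ᵥ A *ᵥ (T 0 x) = (fun j : {j // j ∈ J} => x j.1) ⬝ᵥ
        (Matrix.of fun p q : {j // j ∈ J} => A p.1 q.1) *ᵥ
          (fun j : {j // j ∈ J} => x j.1) := by
      rw [hq]
      have hne : (fun p : {j // j ∈ J} => -(x p.1)) = -(fun j : {j // j ∈ J} => x j.1) := rfl
      rw [hne, neg_dotProduct, Matrix.mulVec_neg, dotProduct_neg, neg_neg]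
    have hl := lin_subtype J (A *ᵥ c) (T 0 x) (hv0supp x)
    have hl2 : (A *ᵥ c) ⬝ᵥ (T 0 x) = - ∑ j : {j // j ∈ J}, (A *ᵥ c) j.1 * x j.1 := by
      rw [hl, ← Finset.sum_neg_distrib]
      refine Finset.sum_congr rfl fun p _ => ?_
      have hnI : ¬ p.1 ∈ I := fun h => ((hJ p.1).1 p.2) ((hI p.1).1 h)
      simp [hT, hnI]
    simp only [hEps]
    rw [hq2, hl2]
    ring
  have hsplitpt : ∀ x : Fin d → ℝ, flim x
      = HJ (fun j => x j.1) * HI (fun i => x i.1) := by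
    intro x
    by_cases hxD : x ∈ Dlim
    · have hO : (fun j : {j // j ∈ J} => x j.1) ∈ {y : {j // j ∈ J} → ℝ |
          ∀ j : {j // j ∈ J}, j.1 ∈ U → y j < 0} := by
        intro j hjU
        have hjJ : j.1 ∈ J := ((hU j.1).1 hjU).1
        have hnI : ¬ j.1 ∈ I := fun hI' => ((hJ j.1).1 hjJ) ((hI j.1).1 hI')
        have hx := hxD
        rw [hDlim] at hx
        have hxi := hx j.1
        simp only [hnI, if_false] at hxi
        exact hxi hjU
      have hIpos : ∀ i : {i // ¬ i ∈ J}, 0 < x i.1 := by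
        intro i
        have hiI : i.1 ∈ I := (hIJ i.1).2 i.2
        have hx := hxD
        rw [hDlim] at hx
        have hxi := hx i.1
        simpa [hiI] using hxi
      simp only [hflim, hHJ, hHI]
      rw [Set.indicator_of_mem hxD, Set.indicator_of_mem hO, Pi.one_apply, one_mul]
      have hprodHI : (∏ i : {i // ¬ i ∈ J}, Set.indicator (Ioi (0:ℝ))
          (fun t => Real.exp (-(lam i.1 * t))) (x i.1))
          = Real.exp (-∑ i ∈ I, lam i * x i) := by
        have hpe : ∀ i : {i // ¬ i ∈ J}, Set.indicator (Ioi (0:ℝ))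
            (fun t => Real.exp (-(lam i.1 * t))) (x i.1) = Real.exp (-(lam i.1 * x i.1)) :=
          fun i => Set.indicator_of_mem (mem_Ioi.mpr (hIpos i)) _
        rw [Finset.prod_congr rfl (fun i _ => hpe i), ← Real.exp_sum]
        congr 1
        rw [← Finset.sum_neg_distrib,
          ← Finset.sum_subtype I (fun i => hIJ i) (fun i => -(lam i * x i)),
          Finset.sum_neg_distrib]
      rw [hprodHI, ← Real.exp_add]
      congr 1
      rw [hEps0 x]
      ring
    · simp only [hflim, hHJ, hHI]
      rw [Set.indicator_of_notMem hxD, zero_mul]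
      have hx := hxD
      rw [hDlim] at hx
      simp only [mem_setOf_eq, not_forall] at hx
      obtain ⟨i, hi⟩ := hx
      by_cases hiI : i ∈ I
      · simp only [hiI, if_true] at hi
        have hnJ : ¬ i ∈ J := fun hj => ((hJ i).1 hj) ((hI i).1 hiI)
        have hzero : Set.indicator (Ioi (0:ℝ)) (fun t => Real.exp (-(lam i * t))) (x i) = 0 :=
          Set.indicator_of_notMem (by simpa using hi) _
        rw [Finset.prod_eq_zero (Finset.mem_univ (⟨i, hnJ⟩ : {i // ¬ i ∈ J})) hzero, mul_zero]
      · simp only [hiI, if_false] at hi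
        push_neg at hi
        obtain ⟨hiU, hge⟩ := hi
        have hiJ : i ∈ J := ((hU i).1 hiU).1
        have hnot : ¬ ((fun j : {j // j ∈ J} => x j.1) ∈ {y : {j // j ∈ J} → ℝ |
            ∀ j : {j // j ∈ J}, j.1 ∈ U → y j < 0}) := by
          intro hmem
          exact absurd (hmem ⟨i, hiJ⟩ hiU) (not_lt.mpr hge)
        rw [Set.indicator_of_notMem hnot, zero_mul]
  have hflimsplit : ∫ x, flim x = (∏ i ∈ I, lam i)⁻¹ * Jint := by
    have hEqui := (volume_preserving_piEquivPiSubtypeProd (fun _ : Fin d => ℝ)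
        (fun i => i ∈ J)).integral_comp' (fun y => HJ y.1 * HI y.2)
    rw [Measure.volume_eq_prod, integral_prod_mul] at hEqui
    have hfin : (Subtype.fintype fun i : Fin d => i ∈ J) = Finset.Subtype.fintype J :=
      Subsingleton.elim _ _
    rw [hfin] at hEqui
    have hHIint : ∫ z : {i // ¬ i ∈ J} → ℝ, HI z = (∏ i ∈ I, lam i)⁻¹ := by
      simp only [hHI]
      rw [integral_fintype_prod_volume_eq_prod (fun (i : {i // ¬ i ∈ J}) (t : ℝ) =>
        Set.indicator (Ioi (0:ℝ)) (fun s => Real.exp (-(lam i.1 * s))) t)]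
      have hval : ∀ i : {i // ¬ i ∈ J}, (∫ t : ℝ, Set.indicator (Ioi (0:ℝ))
          (fun s => Real.exp (-(lam i.1 * s))) t) = (lam i.1)⁻¹ :=
        fun i => integral_ind_exp (hlamI i.1 ((hIJ i.1).2 i.2))
      rw [Finset.prod_congr rfl (fun i _ => hval i),
        ← Finset.prod_subtype I (fun i => hIJ i) (fun i => (lam i)⁻¹),
        ← Finset.prod_inv_distrib]
    calc ∫ x, flim x = ∫ x, HJ (fun j => x j.1) * HI (fun i => x i.1) :=
          integral_congr_ae (ae_of_all _ hsplitpt)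
    _ = (∫ y, HJ y) * (∫ z, HI z) := hEqui
    _ = (∏ i ∈ I, lam i)⁻¹ * Jint := by
          rw [hHIint, hJint2]
          ring
  have hAJJ : (Matrix.of fun p q : {j // j ∈ J} => A p.1 q.1).PosDef := by
    rw [posDef_iff_dotProduct_mulVec]
    constructor
    · ext p q
      simp only [Matrix.conjTranspose_apply, Matrix.of_apply, star_trivial]
      have h : A q.1 p.1 = Aᵀ p.1 q.1 := rfl
      rw [h, hAt]
    · intro y hy
      set z : Fin d → ℝ := fun i => if h : i ∈ J then y ⟨i, h⟩ else 0 with hz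
      have hzsupp : ∀ i, i ∉ J → z i = 0 := by
        intro i hi
        simp [hz, hi]
      have hzy : (fun p : {j // j ∈ J} => z p.1) = y := by
        funext p
        simp [hz, p.2]
      have hzne : z ≠ 0 := by
        intro h0
        apply hy
        funext p
        have := congrFun h0 p.1
        rw [← hzy]
        simpa using this
      have hpos := hApos z hzne
      have hq := quad_subtype A J z hzsupp
      rw [hq, hzy] at hpos
      simpa using hpos
  obtain ⟨αJ, hαJ, hαJle⟩ := posdef_lower _ hAJJ
  have hJpos : 0 < Jint := by
    have hOopen : IsOpen {y : {j // j ∈ J} → ℝ |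
        ∀ j : {j // j ∈ J}, j.1 ∈ U → y j < 0} := by
      have hOe : {y : {j // j ∈ J} → ℝ | ∀ j : {j // j ∈ J}, j.1 ∈ U → y j < 0}
          = ⋂ j : {j // j ∈ J}, {y : {j // j ∈ J} → ℝ | j.1 ∈ U → y j < 0} := by
        ext y; simp only [Set.mem_iInter, mem_setOf_eq]
      rw [hOe]
      refine isOpen_iInter_of_finite fun j => ?_
      by_cases hjU : j.1 ∈ U
      · simp only [hjU, true_implies]
        exact isOpen_lt (continuous_apply j) continuous_const
      · simp only [hjU, false_implies, setOf_true]
        exact isOpen_univ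
    have hHJnn : 0 ≤ HJ := by
      intro y
      simp only [hHJ]
      exact Set.indicator_nonneg (fun t _ => Real.exp_nonneg _) _
    have hHJmeas : Measurable HJ := by
      have hcont : Continuous (fun y : {j // j ∈ J} → ℝ =>
          Real.exp (-(y ⬝ᵥ (Matrix.of fun p q : {j // j ∈ J} => A p.1 q.1) *ᵥ y) / 2
            + ∑ j : {j // j ∈ J}, (A *ᵥ c) j.1 * y j)) := by
        refine Real.continuous_exp.comp ?_
        refine Continuous.add ((quad_continuous _).neg.div_const 2) ?_
        exact continuous_finset_sum _ fun j _ => continuous_const.mul (continuous_apply j)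
      exact hcont.measurable.indicator hOopen.measurableSet
    have hHJint : Integrable HJ := by
      set bJ : {j // j ∈ J} → ℝ := fun j => (A *ᵥ c) j.1 with hbJ
      refine Integrable.mono' (integrable_exp_quad (αJ/2) (by positivity) bJ)
        hHJmeas.aestronglyMeasurable (ae_of_all _ fun y => ?_)
      rw [Real.norm_eq_abs, abs_of_nonneg (hHJnn y)]
      simp only [hHJ]
      by_cases hy : y ∈ {y : {j // j ∈ J} → ℝ | ∀ j : {j // j ∈ J}, j.1 ∈ U → y j < 0}
      · rw [Set.indicator_of_mem hy]
        refine Real.exp_le_exp.mpr ?_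
        have h1 := hαJle y
        have h2 : (∑ j : {j // j ∈ J}, (A *ᵥ c) j.1 * y j) = bJ ⬝ᵥ y := by
          simp [hbJ, dotProduct]
        rw [h2]
        linarith
      · rw [Set.indicator_of_notMem hy]
        exact Real.exp_nonneg _
    rw [hJint2]
    rw [integral_pos_iff_support_of_nonneg hHJnn hHJint]
    have hsub : {y : {j // j ∈ J} → ℝ | ∀ j : {j // j ∈ J}, j.1 ∈ U → y j < 0}
        ⊆ Function.support HJ := by
      intro y hy
      simp only [Function.mem_support, hHJ]
      rw [Set.indicator_of_mem hy]
      exact (Real.exp_pos _).ne'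
    refine lt_of_lt_of_le ?_ (measure_mono hsub)
    refine hOopen.measure_pos volume ⟨fun _ => -1, fun j _ => by norm_num⟩
  have hN : ∀ u : ℝ, 1 ≤ u →
      (∫ w in {w : Fin d → ℝ | ∀ i, u * a i + c i < w i}, φ w)
        = u ^ (-(I.card : ℝ)) * φ (fun i => u * ta i + c i) * ∫ x, f u x := by
    intro u hu
    have hu0 : (0:ℝ) < u := lt_of_lt_of_le one_pos hu
    set m : Fin d → ℝ := fun i => u * ta i + c i with hm
    set Su : Set (Fin d → ℝ) := {w | ∀ i, u * a i + c i < w i} with hSu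
    have hSuOpen : IsOpen Su := by
      have hSe : Su = ⋂ i, {w : Fin d → ℝ | u * a i + c i < w i} := by
        ext w'; simp [hSu, Set.mem_iInter]
      rw [hSe]
      exact isOpen_iInter_of_finite fun i => isOpen_lt continuous_const (continuous_apply i)
    have hφcont : Continuous φ := by
      have hφe : φ = fun x => (2*Real.pi) ^ (-(d:ℝ)/2) * S.det ^ (-(1:ℝ)/2)
          * Real.exp (-(x ⬝ᵥ A *ᵥ x)/2) := funext hφ
      rw [hφe]
      exact continuous_const.mul (Real.continuous_exp.comp
        ((quad_continuous A).neg.div_const 2))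
    set h : (Fin d → ℝ) → ℝ := Su.indicator φ with hh
    have hhmeas : Measurable h := (hφcont.measurable).indicator hSuOpen.measurableSet
    have step1 : (∫ w in Su, φ w) = ∫ w, h w := (integral_indicator hSuOpen.measurableSet).symm
    have step2 : ∫ w, h w = ∫ v, h (v + m) := (integral_add_right_eq_self h m).symm
    set σ : Fin d → ℝ := fun i => if i ∈ I then u⁻¹ else -1 with hσ
    set M : Matrix (Fin d) (Fin d) ℝ := Matrix.diagonal σ with hM
    have hdet : M.det = ∏ i, σ i := Matrix.det_diagonal
    have hσne : ∀ i, σ i ≠ 0 := by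
      intro i
      by_cases hi : i ∈ I <;> simp [hσ, hi, hu0.ne', inv_ne_zero]
    have hdetne : M.det ≠ 0 := by
      rw [hdet]; exact Finset.prod_ne_zero_iff.mpr fun i _ => hσne i
    have habs : |M.det| = u ^ (-(I.card:ℝ)) := by
      rw [hdet, Finset.abs_prod]
      have habsσ : ∀ i ∈ Finset.univ, |σ i| = if i ∈ I then u⁻¹ else 1 := by
        intro i _
        by_cases hi : i ∈ I
        · simp [hσ, hi, abs_of_pos (inv_pos.mpr hu0)]
        · simp [hσ, hi]
      rw [Finset.prod_congr rfl habsσ, Finset.prod_ite_mem, Finset.univ_inter,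
        Finset.prod_const, Real.rpow_neg hu0.le, Real.rpow_natCast, ← inv_pow]
    have hTeq : ∀ x : Fin d → ℝ, Matrix.toLin' M x = T u⁻¹ x := by
      intro x; funext i
      rw [Matrix.toLin'_apply, hM, Matrix.mulVec_diagonal]
      by_cases hi : i ∈ I <;> simp [hσ, hT, hi, neg_one_mul]
    have hmeas2 : Measurable (fun v : Fin d → ℝ => h (v + m)) :=
      hhmeas.comp (measurable_add_const m)
    have hL : Measurable (Matrix.toLin' M : (Fin d → ℝ) → (Fin d → ℝ)) :=
      Continuous.measurable (LinearMap.continuous_on_pi _)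
    have hmap := Real.map_matrix_volume_pi_eq_smul_volume_pi (M := M) hdetne
    have e1 : ∫ y, h (y + m) ∂(Measure.map (Matrix.toLin' M) volume)
        = ∫ x, h (Matrix.toLin' M x + m) :=
      integral_map hL.aemeasurable hmeas2.aestronglyMeasurable
    have e2 : ∫ y, h (y + m) ∂(Measure.map (Matrix.toLin' M) volume)
        = |M.det|⁻¹ * ∫ v, h (v + m) := by
      rw [hmap, integral_smul_measure, abs_inv, ENNReal.toReal_ofReal
        (inv_nonneg.mpr (abs_nonneg _)), smul_eq_mul]
    have step3 : ∫ v, h (v + m) = |M.det| * ∫ x, h (Matrix.toLin' M x + m) := by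
      rw [← e1, e2, ← mul_assoc, mul_inv_cancel₀ (abs_ne_zero.mpr hdetne), one_mul]
    have step4 : ∀ x : Fin d → ℝ, h (Matrix.toLin' M x + m) = φ m * f u x := by
      intro x
      rw [hTeq x]
      set v : Fin d → ℝ := T u⁻¹ x with hv
      have hmemiff : (v + m) ∈ Su ↔ x ∈ D u := by
        rw [hSu, hD]
        simp only [mem_setOf_eq, Pi.add_apply]
        refine forall_congr' fun i => ?_
        by_cases hi : i ∈ I
        · have htae : ta i = a i := htaI i ((hI i).1 hi)
          simp only [hv, hT, hi, if_true, hm]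
          rw [← htae]
          constructor
          · intro hlt
            have h1 : 0 < u⁻¹ * x i := by linarith
            have h2 := mul_pos hu0 h1
            rwa [← mul_assoc, mul_inv_cancel₀ hu0.ne', one_mul] at h2
          · intro hlt
            have h1 : 0 < u⁻¹ * x i := mul_pos (inv_pos.mpr hu0) hlt
            linarith
        · simp only [hv, hT, hi, if_false, hm]
          have hring : u * (ta i - a i) = u * ta i - u * a i := by ring
          constructor <;> intro hlt <;> linarith [hring]
      by_cases hxD : x ∈ D u
      · rw [hh, Set.indicator_of_mem (hmemiff.2 hxD)]
        simp only [hf]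
        rw [Set.indicator_of_mem hxD, Pi.one_apply, one_mul]
        rw [hφ (v + m), hφ m]
        -- exponent identity
        have hexpand := hexp2 v m
        have hmsplit : m = u • ta + c := by
          funext i; simp [hm, Pi.smul_apply, smul_eq_mul]
        have hvAm : v ⬝ᵥ A *ᵥ m = (∑ i ∈ I, lam i * x i) + (A *ᵥ c) ⬝ᵥ v := by
          rw [hmsplit, Matrix.mulVec_add, dotProduct_add, Matrix.mulVec_smul,
            dotProduct_smul, ← hlam]
          have hvlam : u • (v ⬝ᵥ lam) = ∑ i ∈ I, lam i * x i := by
            have hsum : v ⬝ᵥ lam = ∑ i, (if i ∈ I then u⁻¹ * (lam i * x i) else 0) := by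
              rw [dotProduct]
              refine Finset.sum_congr rfl fun i _ => ?_
              by_cases hi : i ∈ I
              · simp only [hv, hT, hi, if_true]; ring
              · have hiJ : i ∈ J := (hJ i).2 fun hp => hi ((hI i).2 hp)
                simp only [hv, hT, hi, if_false, hlamJ i hiJ, mul_zero]
            rw [hsum, Finset.sum_ite_mem, Finset.univ_inter, ← Finset.mul_sum,
              smul_eq_mul, ← mul_assoc, mul_inv_cancel₀ hu0.ne', one_mul]
          rw [hvlam, dotProduct_comm]
        have hEe : Eps u⁻¹ x = -(∑ i ∈ I, lam i * x i) - (A *ᵥ c) ⬝ᵥ v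
            - v ⬝ᵥ A *ᵥ v / 2 := by
          simp only [hEps, hv]
        have hq : -((v + m) ⬝ᵥ A *ᵥ (v + m)) / 2
            = -(m ⬝ᵥ A *ᵥ m) / 2 + Eps u⁻¹ x := by
          rw [hEe, hexpand, hvAm]
          ring
        rw [hq, Real.exp_add]
        ring
      · rw [hh, Set.indicator_of_notMem (fun hc => hxD (hmemiff.1 hc))]
        simp only [hf]
        rw [Set.indicator_of_notMem hxD, zero_mul, mul_zero]
    calc (∫ w in Su, φ w) = ∫ w, h w := step1
    _ = ∫ v, h (v + m) := step2
    _ = |M.det| * ∫ x, h (Matrix.toLin' M x + m) := step3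
    _ = |M.det| * ∫ x, φ m * f u x := by
        congr 1
        exact integral_congr_ae (ae_of_all _ step4)
    _ = |M.det| * (φ m * ∫ x, f u x) := by rw [integral_const_mul]
    _ = u ^ (-(I.card:ℝ)) * φ m * ∫ x, f u x := by rw [habs]; ring
  -- assembly
  have hP : 0 < ∏ i ∈ I, lam i := Finset.prod_pos hlamI
  have hL : (0:ℝ) < (∏ i ∈ I, lam i)⁻¹ * Jint := mul_pos (inv_pos.mpr hP) hJpos
  have hmain : Tendsto (fun u => (∫ x, f u x) / ((∏ i ∈ I, lam i)⁻¹ * Jint)) atTop (nhds 1) := by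
    have h := hDCT.div_const ((∏ i ∈ I, lam i)⁻¹ * Jint)
    rwa [hflimsplit, div_self hL.ne'] at h
  refine Tendsto.congr' ?_ hmain
  filter_upwards [eventually_ge_atTop (1:ℝ)] with u hu
  rw [hN u hu]
  have hupos : (0:ℝ) < u ^ (-(I.card:ℝ)) := Real.rpow_pos_of_pos (by linarith) _
  have hφm := hφpos (fun i => u * ta i + c i)
  rw [div_eq_div_iff (by positivity) (by positivity)]
  ring
end

section
/- Under condition B0 (each v_i is C¹, strictly increasing, with v_i(0) = 0) and A nonsingular, the function D(t) := ã(t)^⊤ Σ(t)^{−1} ã(t) is strictly positive and strictly decreasing on (0,T]: for all 0 < t₁ < t₂ ≤ T one has 0 < D(t₂) < D(t₁). -/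
open Matrix Set

/-- `A * diagonal w * Aᵀ` is positive definite when `A` is invertible and `w` positive. -/
lemma aux_posdef_ADA {d : ℕ} (A : Matrix (Fin d) (Fin d) ℝ) (hA : IsUnit A.det)
    (w : Fin d → ℝ) (hw : ∀ i, 0 < w i) :
    (A * Matrix.diagonal w * Aᵀ).PosDef := by
  have hDiag : (Matrix.diagonal w).PosDef := Matrix.PosDef.diagonal hw
  refine Matrix.PosDef.of_dotProduct_mulVec_pos ?_ ?_
  · have := (hDiag.posSemidef.mul_mul_conjTranspose_same A).1
    simpa [Matrix.conjTranspose_eq_transpose_of_trivial] using this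
  · intro x hx
    have hy : Aᵀ *ᵥ x ≠ 0 := by
      have hAT : IsUnit Aᵀ := (Matrix.isUnit_iff_isUnit_det _).2 (by simpa using hA)
      have hinj := Matrix.mulVec_injective_iff_isUnit.mpr hAT
      intro h
      exact hx (hinj (by simpa using h))
    have := hDiag.dotProduct_mulVec_pos hy
    simp only [star_trivial] at this ⊢
    calc (0:ℝ) < (Aᵀ *ᵥ x) ⬝ᵥ Matrix.diagonal w *ᵥ (Aᵀ *ᵥ x) := this
      _ = x ⬝ᵥ (A * Matrix.diagonal w * Aᵀ) *ᵥ x := by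
          rw [show (A * Matrix.diagonal w * Aᵀ) *ᵥ x
              = A *ᵥ (Matrix.diagonal w *ᵥ (Aᵀ *ᵥ x)) by
            rw [Matrix.mulVec_mulVec, Matrix.mulVec_mulVec, Matrix.mul_assoc],
            Matrix.dotProduct_mulVec x A, ← Matrix.mulVec_transpose]

lemma aux_dot_symm {d : ℕ} {S : Matrix (Fin d) (Fin d) ℝ} (hS : Sᵀ = S)
    (x y : Fin d → ℝ) : x ⬝ᵥ S *ᵥ y = y ⬝ᵥ S *ᵥ x := by
  rw [Matrix.dotProduct_mulVec, ← Matrix.mulVec_transpose, hS, dotProduct_comm]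

/-- Completion of squares: `2⟨x,y⟩ - yᵀSy ≤ xᵀS⁻¹x` for `S` positive definite. -/
lemma aux_sq {d : ℕ} {S : Matrix (Fin d) (Fin d) ℝ} (hS : S.PosDef)
    (x y : Fin d → ℝ) : 2 * (x ⬝ᵥ y) - y ⬝ᵥ S *ᵥ y ≤ x ⬝ᵥ S⁻¹ *ᵥ x := by
  have hSsymm : Sᵀ = S := by
    have := hS.isHermitian.eq
    simpa [Matrix.conjTranspose_eq_transpose_of_trivial] using this
  have hdet : IsUnit S.det := hS.det_pos.ne'.isUnit
  set w := S⁻¹ *ᵥ x with hw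
  have hSw : S *ᵥ w = x := by
    rw [hw, Matrix.mulVec_mulVec, Matrix.mul_nonsing_inv _ hdet, Matrix.one_mulVec]
  have h0 : (0:ℝ) ≤ (y - w) ⬝ᵥ S *ᵥ (y - w) := by
    have := hS.posSemidef.dotProduct_mulVec_nonneg (y - w)
    simpa using this
  have hexp : (y - w) ⬝ᵥ S *ᵥ (y - w)
      = y ⬝ᵥ S *ᵥ y - 2 * (x ⬝ᵥ y) + x ⬝ᵥ S⁻¹ *ᵥ x := by
    have h1 : w ⬝ᵥ S *ᵥ y = x ⬝ᵥ y := by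
      rw [aux_dot_symm hSsymm, hSw, dotProduct_comm]
    have h2 : y ⬝ᵥ S *ᵥ w = x ⬝ᵥ y := by
      rw [hSw, dotProduct_comm]
    have h3 : w ⬝ᵥ S *ᵥ w = x ⬝ᵥ S⁻¹ *ᵥ x := by
      rw [hSw, dotProduct_comm, hw]
    rw [Matrix.mulVec_sub, sub_dotProduct, dotProduct_sub, dotProduct_sub,
      h1, h2, h3]
    ring
  nlinarith [h0, hexp]

/-- Lemma 4.3 of the paper, monotonicity part. Under condition B0 and
`A` nonsingular, `D(t) := ã(t)^⊤ Σ(t)⁻¹ ã(t)` is strictly positive and strictly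
decreasing on `(0, T]`. -/
theorem stmt4 {d : ℕ} (T : ℝ) (hT : 0 < T)
    (v : Fin d → ℝ → ℝ)
    (hv_C1 : ∀ i, ContDiffOn ℝ 1 (v i) (Icc 0 T))
    (hv_mono : ∀ i, StrictMonoOn (v i) (Icc 0 T))
    (hv_0 : ∀ i, v i 0 = 0)
    (A : Matrix (Fin d) (Fin d) ℝ) (hA : IsUnit A.det)
    (a : Fin d → ℝ) (ha : ∃ i, 0 < a i)
    (Sg : ℝ → Matrix (Fin d) (Fin d) ℝ)
    (hSg : ∀ t, Sg t = A * Matrix.diagonal (fun i => v i t) * Aᵀ)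
    (ta : ℝ → Fin d → ℝ)
    (hta : ∀ t ∈ Ioc (0 : ℝ) T, (∀ i, a i ≤ ta t i) ∧
      ∀ y : Fin d → ℝ, (∀ i, a i ≤ y i) →
        ta t ⬝ᵥ (Sg t)⁻¹ *ᵥ ta t ≤ y ⬝ᵥ (Sg t)⁻¹ *ᵥ y)
    (D : ℝ → ℝ) (hD : ∀ t, D t = ta t ⬝ᵥ (Sg t)⁻¹ *ᵥ ta t) :
    ∀ t₁ t₂ : ℝ, 0 < t₁ → t₁ < t₂ → t₂ ≤ T → 0 < D t₂ ∧ D t₂ < D t₁ := by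
  intro t₁ t₂ ht₁ h12 ht₂
  have ht₁T : t₁ ∈ Icc (0:ℝ) T := ⟨ht₁.le, le_trans h12.le ht₂⟩
  have ht₂T : t₂ ∈ Icc (0:ℝ) T := ⟨(ht₁.trans h12).le, ht₂⟩
  have h0T : (0:ℝ) ∈ Icc (0:ℝ) T := ⟨le_rfl, hT.le⟩
  -- positivity of v at t₁ and t₂
  have hv_pos : ∀ t ∈ Icc (0:ℝ) T, 0 < t → ∀ i, 0 < v i t := by
    intro t htT ht i
    have := hv_mono i h0T htT ht
    rwa [hv_0 i] at this
  -- positive definiteness of Sg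
  have hpd : ∀ t ∈ Icc (0:ℝ) T, 0 < t → (Sg t).PosDef := by
    intro t htT ht
    rw [hSg t]
    exact aux_posdef_ADA A hA _ (hv_pos t htT ht)
  have hpd1 := hpd t₁ ht₁T ht₁
  have hpd2 := hpd t₂ ht₂T (ht₁.trans h12)
  -- difference Sg t₂ - Sg t₁ is positive definite
  have hdiff : (Sg t₂ - Sg t₁).PosDef := by
    have : Sg t₂ - Sg t₁
        = A * Matrix.diagonal (fun i => v i t₂ - v i t₁) * Aᵀ := by
      rw [hSg t₁, hSg t₂, ← Matrix.sub_mul, ← Matrix.mul_sub, Matrix.diagonal_sub]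
    rw [this]
    exact aux_posdef_ADA A hA _
      (fun i => sub_pos.mpr (hv_mono i ht₁T ht₂T h12))
  -- ta t₁ is a feasible point, nonzero
  have hta1 := hta t₁ ⟨ht₁, le_trans h12.le ht₂⟩
  have hta2 := hta t₂ ⟨ht₁.trans h12, ht₂⟩
  obtain ⟨i₀, hi₀⟩ := ha
  have hx1ne : ta t₁ ≠ 0 := by
    intro h
    have := hta1.1 i₀
    rw [h] at this
    exact absurd (lt_of_lt_of_le hi₀ this) (by simp)
  have hx2ne : ta t₂ ≠ 0 := by
    intro h
    have := hta2.1 i₀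
    rw [h] at this
    exact absurd (lt_of_lt_of_le hi₀ this) (by simp)
  constructor
  · -- 0 < D t₂
    rw [hD t₂]
    have := hpd2.inv.dotProduct_mulVec_pos hx2ne
    simpa using this
  · -- D t₂ < D t₁
    rw [hD t₁, hD t₂]
    set x := ta t₁ with hx
    -- step 1: optimality at t₂: D t₂ ≤ x ⬝ᵥ (Sg t₂)⁻¹ x
    have step1 : ta t₂ ⬝ᵥ (Sg t₂)⁻¹ *ᵥ ta t₂ ≤ x ⬝ᵥ (Sg t₂)⁻¹ *ᵥ x :=
      hta2.2 x hta1.1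
    -- step 2: strict Loewner: x ⬝ᵥ (Sg t₂)⁻¹ x < x ⬝ᵥ (Sg t₁)⁻¹ x
    have hdet2 : IsUnit (Sg t₂).det := hpd2.det_pos.ne'.isUnit
    set y := (Sg t₂)⁻¹ *ᵥ x with hy
    have hyne : y ≠ 0 := by
      intro h
      apply hx1ne
      have : Sg t₂ *ᵥ y = Sg t₂ *ᵥ 0 := by rw [h]
      rw [hy, Matrix.mulVec_mulVec, Matrix.mul_nonsing_inv _ hdet2,
        Matrix.one_mulVec, Matrix.mulVec_zero] at this
      exact this
    have hSy : Sg t₂ *ᵥ y = x := by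
      rw [hy, Matrix.mulVec_mulVec, Matrix.mul_nonsing_inv _ hdet2, Matrix.one_mulVec]
    have heq2 : x ⬝ᵥ (Sg t₂)⁻¹ *ᵥ x = 2 * (x ⬝ᵥ y) - y ⬝ᵥ Sg t₂ *ᵥ y := by
      rw [hSy, dotProduct_comm y x, ← hy]
      ring
    have hstrict : y ⬝ᵥ Sg t₁ *ᵥ y < y ⬝ᵥ Sg t₂ *ᵥ y := by
      have := hdiff.dotProduct_mulVec_pos hyne
      simp only [star_trivial, Matrix.sub_mulVec, dotProduct_sub] at this
      linarith
    have step2 : x ⬝ᵥ (Sg t₂)⁻¹ *ᵥ x < x ⬝ᵥ (Sg t₁)⁻¹ *ᵥ x := by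
      have hub := aux_sq hpd1 x y
      rw [heq2]
      linarith
    exact lt_of_le_of_lt step1 step2
end

section
/- Under condition B0 (each v_i is C¹, strictly increasing, with v_i(0) = 0) and A nonsingular, for all 0 < t₁ < t₂ ≤ T the following quantitative decrease holds: D(t₂) ≤ D(t₁) − ‖ diag( √((v_i(t₂) − v_i(t₁))/(v_i(t₂) v_i(t₁)))_{i=1,…,d} ) · A^{−1} ã(t₁) ‖₂², and the subtracted squared norm is strictly positive. -/
open Matrix Set

lemma quadform_aux {d : ℕ} (B : Matrix (Fin d) (Fin d) ℝ) (w x : Fin d → ℝ) :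
    x ⬝ᵥ (Bᵀ * Matrix.diagonal w * B) *ᵥ x = ∑ i, w i * ((B *ᵥ x) i) ^ 2 := by
  rw [← Matrix.mulVec_mulVec, ← Matrix.mulVec_mulVec, Matrix.dotProduct_mulVec,
    Matrix.vecMul_transpose]
  simp only [dotProduct, Matrix.mulVec_diagonal]
  exact Finset.sum_congr rfl fun i _ => by ring

/-- quantitative decrease of `D`, from the proof of Lemma 4.3. For
`0 < t₁ < t₂ ≤ T`,
`D(t₂) ≤ D(t₁) - ‖diag(√((v_i(t₂)-v_i(t₁))/(v_i(t₂)v_i(t₁)))) A⁻¹ ã(t₁)‖₂²`,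
and the subtracted squared norm is strictly positive. -/
theorem stmt5 {d : ℕ} (T : ℝ) (hT : 0 < T)
    (v : Fin d → ℝ → ℝ)
    (hv_C1 : ∀ i, ContDiffOn ℝ 1 (v i) (Icc 0 T))
    (hv_mono : ∀ i, StrictMonoOn (v i) (Icc 0 T))
    (hv_0 : ∀ i, v i 0 = 0)
    (A : Matrix (Fin d) (Fin d) ℝ) (hA : IsUnit A.det)
    (a : Fin d → ℝ) (ha : ∃ i, 0 < a i)
    (Sg : ℝ → Matrix (Fin d) (Fin d) ℝ)
    (hSg : ∀ t, Sg t = A * Matrix.diagonal (fun i => v i t) * Aᵀ)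
    (ta : ℝ → Fin d → ℝ)
    (hta : ∀ t ∈ Ioc (0 : ℝ) T, (∀ i, a i ≤ ta t i) ∧
      ∀ y : Fin d → ℝ, (∀ i, a i ≤ y i) →
        ta t ⬝ᵥ (Sg t)⁻¹ *ᵥ ta t ≤ y ⬝ᵥ (Sg t)⁻¹ *ᵥ y)
    (D : ℝ → ℝ) (hD : ∀ t, D t = ta t ⬝ᵥ (Sg t)⁻¹ *ᵥ ta t) :
    ∀ t₁ t₂ : ℝ, 0 < t₁ → t₁ < t₂ → t₂ ≤ T →
      D t₂ ≤ D t₁ -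
        ∑ i, (Real.sqrt ((v i t₂ - v i t₁) / (v i t₂ * v i t₁)) * (A⁻¹ *ᵥ ta t₁) i) ^ 2 ∧
      0 < ∑ i, (Real.sqrt ((v i t₂ - v i t₁) / (v i t₂ * v i t₁)) * (A⁻¹ *ᵥ ta t₁) i) ^ 2 := by
  intro t₁ t₂ ht₁ h12 h2T
  have ht₂ : 0 < t₂ := ht₁.trans h12
  have h1T : t₁ ≤ T := h12.le.trans h2T
  -- positivity of v on (0,T]
  have hvpos : ∀ (i : Fin d) (t : ℝ), 0 < t → t ≤ T → 0 < v i t := fun i t ht htT => by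
    have := hv_mono i (left_mem_Icc.2 hT.le) ⟨ht.le, htT⟩ ht
    rwa [hv_0 i] at this
  have hv1 : ∀ i, 0 < v i t₁ := fun i => hvpos i t₁ ht₁ h1T
  have hv2 : ∀ i, 0 < v i t₂ := fun i => hvpos i t₂ ht₂ h2T
  have hvlt : ∀ i, v i t₁ < v i t₂ := fun i =>
    hv_mono i ⟨ht₁.le, h1T⟩ ⟨ht₂.le, h2T⟩ h12
  -- inverse formula
  have hinv : ∀ t, (∀ i, 0 < v i t) →
      (Sg t)⁻¹ = (A⁻¹)ᵀ * Matrix.diagonal (fun i => (v i t)⁻¹) * A⁻¹ := by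
    intro t hv
    have hdiag : (Matrix.diagonal (fun i => v i t))⁻¹
        = Matrix.diagonal (fun i => (v i t)⁻¹) := by
      apply Matrix.inv_eq_right_inv
      rw [Matrix.diagonal_mul_diagonal]
      convert Matrix.diagonal_one with i
      exact mul_inv_cancel₀ (hv i).ne'
    rw [hSg, Matrix.mul_inv_rev, Matrix.mul_inv_rev, hdiag,
      ← Matrix.transpose_nonsing_inv, Matrix.mul_assoc]
  -- quadratic form identity
  have hquad : ∀ t, (∀ i, 0 < v i t) → ∀ x,
      x ⬝ᵥ (Sg t)⁻¹ *ᵥ x = ∑ i, (v i t)⁻¹ * ((A⁻¹ *ᵥ x) i) ^ 2 := by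
    intro t hv x
    rw [hinv t hv]
    exact quadform_aux A⁻¹ (fun i => (v i t)⁻¹) x
  set c : Fin d → ℝ := A⁻¹ *ᵥ ta t₁ with hc
  -- sqrt squared
  have hsq : ∀ i, (Real.sqrt ((v i t₂ - v i t₁) / (v i t₂ * v i t₁)) * c i) ^ 2
      = (v i t₂ - v i t₁) / (v i t₂ * v i t₁) * (c i) ^ 2 := fun i => by
    have hr : 0 ≤ (v i t₂ - v i t₁) / (v i t₂ * v i t₁) :=
      div_nonneg (by linarith [hvlt i]) (mul_nonneg (hv2 i).le (hv1 i).le)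
    rw [mul_pow, Real.sq_sqrt hr]
  obtain ⟨hfeas, _⟩ := hta t₁ ⟨ht₁, h1T⟩
  obtain ⟨_, hopt₂⟩ := hta t₂ ⟨ht₂, h2T⟩
  have key : D t₂ ≤ D t₁ - ∑ i, (v i t₂ - v i t₁) / (v i t₂ * v i t₁) * (c i) ^ 2 := by
    have h1 : D t₂ ≤ ta t₁ ⬝ᵥ (Sg t₂)⁻¹ *ᵥ ta t₁ := by
      rw [hD]; exact hopt₂ (ta t₁) hfeas
    rw [hquad t₂ hv2 (ta t₁), ← hc] at h1
    rw [hD t₁, hquad t₁ hv1 (ta t₁), ← hc, ← Finset.sum_sub_distrib]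
    refine h1.trans_eq (Finset.sum_congr rfl fun i _ => ?_)
    rw [← sub_mul]
    congr 1
    have h1' := (hv1 i).ne'
    have h2' := (hv2 i).ne'
    field_simp
    ring
  have hcne : ∃ i, c i ≠ 0 := by
    by_contra h
    push_neg at h
    have hc0 : c = 0 := funext h
    have : ta t₁ = 0 := by
      have := congrArg (fun x => A *ᵥ x) hc0
      simpa [hc, Matrix.mulVec_mulVec, Matrix.mul_nonsing_inv A hA] using this
    obtain ⟨i, hai⟩ := ha
    have h2 := hfeas i
    rw [this] at h2
    simp at h2
    linarith
  constructor
  · calc D t₂ ≤ D t₁ - ∑ i, (v i t₂ - v i t₁) / (v i t₂ * v i t₁) * (c i) ^ 2 := key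
      _ = D t₁ - ∑ i, (Real.sqrt ((v i t₂ - v i t₁) / (v i t₂ * v i t₁)) * c i) ^ 2 := by
        rw [sub_right_inj]
        exact (Finset.sum_congr rfl fun i _ => (hsq i)).symm
  · obtain ⟨i, hci⟩ := hcne
    refine Finset.sum_pos' (fun j _ => sq_nonneg _) ⟨i, Finset.mem_univ i, ?_⟩
    rw [hsq i]
    have hr : 0 < (v i t₂ - v i t₁) / (v i t₂ * v i t₁) :=
      div_pos (by linarith [hvlt i]) (mul_pos (hv2 i) (hv1 i))
    exact mul_pos hr (lt_of_le_of_ne (sq_nonneg _) (Ne.symm (pow_ne_zero 2 hci)))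
end

section
/- Under condition B0 (each v_i is C¹, strictly increasing, with v_i(0) = 0), condition BI (the derivative v̇_i(T) > 0 for each i), and A nonsingular, the function D has a (one-sided, from the left) derivative at t = T given by Ḋ(T) = −‖ diag( √(v̇_i(T))/v_i(T) )_{i=1,…,d} · A^{−1} ã(T) ‖₂² < 0; that is, (D(T) − D(t))/(T − t) converges to this negative value as t → T from the left. -/
open Matrix Set Filter
open Topology

lemma quadform {d : ℕ} (A : Matrix (Fin d) (Fin d) ℝ)
    (w : Fin d → ℝ) (hw : ∀ i, w i ≠ 0) (x : Fin d → ℝ) :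
    x ⬝ᵥ (A * Matrix.diagonal w * Aᵀ)⁻¹ *ᵥ x = ∑ i, ((A⁻¹ *ᵥ x) i)^2 / w i := by
  have hd : (Matrix.diagonal w)⁻¹ = Matrix.diagonal (fun i => (w i)⁻¹) :=
    Matrix.inv_eq_right_inv (by
      rw [Matrix.diagonal_mul_diagonal]
      convert Matrix.diagonal_one with i
      exact mul_inv_cancel₀ (hw i))
  have h1 : (A * Matrix.diagonal w * Aᵀ)⁻¹
      = (A⁻¹)ᵀ * (Matrix.diagonal (fun i => (w i)⁻¹) * A⁻¹) := by
    rw [Matrix.mul_inv_rev, Matrix.mul_inv_rev, Matrix.transpose_nonsing_inv, hd]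
  rw [h1, ← Matrix.mulVec_mulVec, Matrix.dotProduct_mulVec, Matrix.vecMul_transpose,
    ← Matrix.mulVec_mulVec]
  simp only [dotProduct, Matrix.mulVec_diagonal]
  congr 1; ext i; ring

set_option maxHeartbeats 1000000

/-- Lemma 4.3, derivative part. Under B0, BI and `A` nonsingular, the
function `D` has a left derivative at `t = T`:
`(D(T) - D(t))/(T - t) → -‖diag(√(v̇_i(T))/v_i(T)) A⁻¹ ã(T)‖₂² < 0` as `t → T⁻`. -/
theorem stmt6 {d : ℕ} (T : ℝ) (hT : 0 < T)
    (v : Fin d → ℝ → ℝ)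
    (hv_C1 : ∀ i, ContDiffOn ℝ 1 (v i) (Icc 0 T))
    (hv_mono : ∀ i, StrictMonoOn (v i) (Icc 0 T))
    (hv_0 : ∀ i, v i 0 = 0)
    (v' : Fin d → ℝ)
    (hv' : ∀ i, HasDerivWithinAt (v i) (v' i) (Icc 0 T) T)
    (hBI : ∀ i, 0 < v' i)
    (A : Matrix (Fin d) (Fin d) ℝ) (hA : IsUnit A.det)
    (a : Fin d → ℝ) (ha : ∃ i, 0 < a i)
    (Sg : ℝ → Matrix (Fin d) (Fin d) ℝ)
    (hSg : ∀ t, Sg t = A * Matrix.diagonal (fun i => v i t) * Aᵀ)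
    (ta : ℝ → Fin d → ℝ)
    (hta : ∀ t ∈ Ioc (0 : ℝ) T, (∀ i, a i ≤ ta t i) ∧
      ∀ y : Fin d → ℝ, (∀ i, a i ≤ y i) →
        ta t ⬝ᵥ (Sg t)⁻¹ *ᵥ ta t ≤ y ⬝ᵥ (Sg t)⁻¹ *ᵥ y)
    (D : ℝ → ℝ) (hD : ∀ t, D t = ta t ⬝ᵥ (Sg t)⁻¹ *ᵥ ta t) :
    Tendsto (fun t => (D T - D t) / (T - t)) (nhdsWithin T (Iio T))
      (nhds (-∑ i, (Real.sqrt (v' i) / v i T * (A⁻¹ *ᵥ ta T) i) ^ 2)) ∧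
    (-∑ i, (Real.sqrt (v' i) / v i T * (A⁻¹ *ᵥ ta T) i) ^ 2) < 0 := by
  classical
  have hvpos : ∀ i, ∀ t ∈ Ioc (0:ℝ) T, 0 < v i t := by
    intro i t ht
    have h := hv_mono i (left_mem_Icc.mpr hT.le) ⟨ht.1.le, ht.2⟩ ht.1
    rwa [hv_0 i] at h
  have hTmem : T ∈ Ioc (0:ℝ) T := ⟨hT, le_refl T⟩
  have hvT : ∀ i, 0 < v i T := fun i => hvpos i T hTmem
  set b : ℝ → Fin d → ℝ := fun t => A⁻¹ *ᵥ ta t with hbdef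
  have key : ∀ t ∈ Ioc (0:ℝ) T, ∀ x : Fin d → ℝ,
      x ⬝ᵥ (Sg t)⁻¹ *ᵥ x = ∑ i, ((A⁻¹ *ᵥ x) i)^2 / v i t := by
    intro t ht x
    rw [hSg t]
    exact quadform A _ (fun i => (hvpos i t ht).ne') x
  have feas : ∀ t ∈ Ioc (0:ℝ) T, ∀ i, a i ≤ ta t i := fun t ht => (hta t ht).1
  have Dform : ∀ t ∈ Ioc (0:ℝ) T, D t = ∑ i, (b t i)^2 / v i t := by
    intro t ht; rw [hD t, key t ht]
  have Dmin : ∀ t ∈ Ioc (0:ℝ) T, ∀ y : Fin d → ℝ, (∀ i, a i ≤ y i) →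
      D t ≤ ∑ i, ((A⁻¹ *ᵥ y) i)^2 / v i t := by
    intro t ht y hy
    rw [hD t]
    calc ta t ⬝ᵥ (Sg t)⁻¹ *ᵥ ta t ≤ y ⬝ᵥ (Sg t)⁻¹ *ᵥ y := (hta t ht).2 y hy
    _ = ∑ i, ((A⁻¹ *ᵥ y) i)^2 / v i t := key t ht y
  -- filters
  have hfilt : 𝓝[Iio T] T = 𝓝[Ioo 0 T] T := (nhdsWithin_Ioo_eq_nhdsLT hT).symm
  have hev : ∀ᶠ t in 𝓝[Iio T] T, t ∈ Ioo 0 T := by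
    rw [hfilt]; exact self_mem_nhdsWithin
  have hvcont : ∀ i, Tendsto (v i) (𝓝[Iio T] T) (𝓝 (v i T)) := by
    intro i
    have h := (hv' i).continuousWithinAt
    rw [hfilt]
    exact h.tendsto.mono_left (nhdsWithin_mono T Ioo_subset_Icc_self)
  -- difference quotients of 1/v i
  set q : Fin d → ℝ → ℝ := fun i t => ((v i t)⁻¹ - (v i T)⁻¹)/(t - T) with hqdef
  have hq : ∀ i, Tendsto (q i) (𝓝[Iio T] T) (𝓝 (-(v' i) / (v i T)^2)) := by
    intro i
    have hinv : HasDerivWithinAt (fun s => (v i s)⁻¹) (-(v' i) / (v i T)^2) (Icc 0 T) T :=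
      (hv' i).inv (hvT i).ne'
    have h1 := hasDerivWithinAt_iff_tendsto_slope.mp hinv
    have hsub : 𝓝[Iio T] T ≤ 𝓝[Icc 0 T \ {T}] T := by
      rw [hfilt]
      exact nhdsWithin_mono T (fun x hx => ⟨⟨hx.1.le, hx.2.le⟩, ne_of_lt hx.2⟩)
    refine (h1.mono_left hsub).congr fun t => ?_
    rw [slope_def_field]
  -- difference formula
  have diffq : ∀ t ∈ Ioo (0:ℝ) T, ∀ u : Fin d → ℝ,
      (∑ i, (u i)^2 / v i T - ∑ i, (u i)^2 / v i t) / (T - t) = ∑ i, (u i)^2 * q i t := by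
    intro t ht u
    rw [← Finset.sum_sub_distrib, Finset.sum_div]
    refine Finset.sum_congr rfl fun i _ => ?_
    have h1 : v i t ≠ 0 := (hvpos i t ⟨ht.1, ht.2.le⟩).ne'
    have h2 : v i T ≠ 0 := (hvT i).ne'
    have h3 : T - t ≠ 0 := sub_ne_zero.mpr (ne_of_gt ht.2)
    have h4 : t - T ≠ 0 := sub_ne_zero.mpr (ne_of_lt ht.2)
    show (u i ^ 2 / v i T - u i ^ 2 / v i t) / (T - t)
        = u i ^ 2 * (((v i t)⁻¹ - (v i T)⁻¹)/(t - T))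
    field_simp
    ring
  -- sandwich
  have sandwich_lo : ∀ t ∈ Ioo (0:ℝ) T,
      ∑ i, (b T i)^2 * q i t ≤ (D T - D t)/(T - t) := by
    intro t ht
    have htm : t ∈ Ioc (0:ℝ) T := ⟨ht.1, ht.2.le⟩
    have hTt : 0 < T - t := sub_pos.mpr ht.2
    rw [← diffq t ht (b T)]
    have hnum : D t ≤ ∑ i, (b T i)^2 / v i t := Dmin t htm (ta T) (feas T hTmem)
    have hDT : D T = ∑ i, (b T i)^2 / v i T := Dform T hTmem
    have hsub : (∑ i, (b T i)^2 / v i T) - (∑ i, (b T i)^2 / v i t) ≤ D T - D t := by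
      linarith
    exact (div_le_div_iff_of_pos_right hTt).mpr hsub
  have sandwich_hi : ∀ t ∈ Ioo (0:ℝ) T,
      (D T - D t)/(T - t) ≤ ∑ i, (b t i)^2 * q i t := by
    intro t ht
    have htm : t ∈ Ioc (0:ℝ) T := ⟨ht.1, ht.2.le⟩
    have hTt : 0 < T - t := sub_pos.mpr ht.2
    rw [← diffq t ht (b t)]
    have hnum : D T ≤ ∑ i, (b t i)^2 / v i T := Dmin T hTmem (ta t) (feas t htm)
    have hDt : D t = ∑ i, (b t i)^2 / v i t := Dform t htm
    have hsub : D T - D t ≤ (∑ i, (b t i)^2 / v i T) - (∑ i, (b t i)^2 / v i t) := by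
      linarith
    exact (div_le_div_iff_of_pos_right hTt).mpr hsub
  -- limits of fixed-vector quotients
  have hlow : Tendsto (fun t => ∑ i, (b T i)^2 * q i t) (𝓝[Iio T] T)
      (𝓝 (∑ i, (b T i)^2 * (-(v' i)/(v i T)^2))) :=
    tendsto_finset_sum _ fun i _ => (hq i).const_mul _
  -- continuity of v i ⁻¹ and of G (b T) t
  have hvinv : ∀ i, Tendsto (fun t => (v i t)⁻¹) (𝓝[Iio T] T) (𝓝 ((v i T)⁻¹)) :=
    fun i => (hvcont i).inv₀ (hvT i).ne'
  have hGbT : Tendsto (fun t => ∑ i, (b T i)^2 / v i t) (𝓝[Iio T] T) (𝓝 (D T)) := by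
    rw [Dform T hTmem]
    exact tendsto_finset_sum _ fun i _ =>
      (tendsto_const_nhds.div (hvcont i) (hvT i).ne')
  -- eventual boundedness of D and b
  have hDub : ∀ᶠ t in 𝓝[Iio T] T, D t ≤ D T + 1 := by
    filter_upwards [hev, hGbT.eventually (gt_mem_nhds (lt_add_one (D T)))] with t ht hlt
    exact le_trans (Dmin t ⟨ht.1, ht.2.le⟩ (ta T) (feas T hTmem)) hlt.le
  have hDnn : ∀ᶠ t in 𝓝[Iio T] T, 0 ≤ D t := by
    filter_upwards [hev] with t ht
    rw [Dform t ⟨ht.1, ht.2.le⟩]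
    exact Finset.sum_nonneg fun i _ => div_nonneg (sq_nonneg _) (hvpos i t ⟨ht.1, ht.2.le⟩).le
  have hbsq : ∀ᶠ t in 𝓝[Iio T] T, ∀ i, (b t i)^2 ≤ v i T * (D T + 1) := by
    filter_upwards [hev, hDub, hDnn] with t ht hub hnn
    intro i
    have htm : t ∈ Ioc (0:ℝ) T := ⟨ht.1, ht.2.le⟩
    have h1 : (b t i)^2 / v i t ≤ D t := by
      rw [Dform t htm]
      exact Finset.single_le_sum
        (fun j _ => div_nonneg (sq_nonneg _) (hvpos j t htm).le) (Finset.mem_univ i)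
    have hvt : 0 < v i t := hvpos i t htm
    have h2 : (b t i)^2 ≤ v i t * D t := by
      rw [div_le_iff₀ hvt] at h1; linarith [h1]
    have h3 : v i t ≤ v i T := (hv_mono i).monotoneOn ⟨ht.1.le, ht.2.le⟩
      ⟨hT.le, le_refl T⟩ ht.2.le
    nlinarith [h2, h3, hub, hnn, hvt.le]
  -- correction term tends to 0
  have hcorr : Tendsto (fun t => ∑ i, (b t i)^2 * ((v i T)⁻¹ - (v i t)⁻¹))
      (𝓝[Iio T] T) (𝓝 0) := by
    have hterm : ∀ i : Fin d, Tendsto (fun t => (b t i)^2 * ((v i T)⁻¹ - (v i t)⁻¹))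
        (𝓝[Iio T] T) (𝓝 0) := by
      intro i
      apply squeeze_zero_norm' (a := fun t => (v i T * (D T + 1)) * |(v i T)⁻¹ - (v i t)⁻¹|)
      · filter_upwards [hbsq] with t hb
        rw [Real.norm_eq_abs, abs_mul]
        refine mul_le_mul_of_nonneg_right ?_ (abs_nonneg _)
        rw [abs_of_nonneg (sq_nonneg _)]
        exact hb i
      · have h0 : Tendsto (fun t => (v i T)⁻¹ - (v i t)⁻¹) (𝓝[Iio T] T) (𝓝 0) := by
          have := (tendsto_const_nhds (x := (v i T)⁻¹) (f := 𝓝[Iio T] T)).sub (hvinv i)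
          simpa using this
        have := h0.abs.const_mul (v i T * (D T + 1))
        simpa using this
    have := tendsto_finset_sum Finset.univ (fun i (_ : i ∈ Finset.univ) => hterm i)
    simpa using this
  -- split identity
  have hsplit : ∀ᶠ t in 𝓝[Iio T] T,
      ∑ i, (b t i)^2 / v i T = D t + ∑ i, (b t i)^2 * ((v i T)⁻¹ - (v i t)⁻¹) := by
    filter_upwards [hev] with t ht
    have htm : t ∈ Ioc (0:ℝ) T := ⟨ht.1, ht.2.le⟩
    rw [Dform t htm, ← Finset.sum_add_distrib]
    refine Finset.sum_congr rfl fun i _ => ?_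
    have h1 : v i t ≠ 0 := (hvpos i t htm).ne'
    have h2 : v i T ≠ 0 := (hvT i).ne'
    field_simp
    ring
  -- D tends to D T
  have hDtend : Tendsto D (𝓝[Iio T] T) (𝓝 (D T)) := by
    have hub : ∀ᶠ t in 𝓝[Iio T] T, D t ≤ ∑ i, (b T i)^2 / v i t := by
      filter_upwards [hev] with t ht
      exact Dmin t ⟨ht.1, ht.2.le⟩ (ta T) (feas T hTmem)
    have hDlb : ∀ᶠ t in 𝓝[Iio T] T,
        D T - ∑ i, (b t i)^2 * ((v i T)⁻¹ - (v i t)⁻¹) ≤ D t := by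
      filter_upwards [hev, hsplit] with t ht hs
      have htm : t ∈ Ioc (0:ℝ) T := ⟨ht.1, ht.2.le⟩
      have h := Dmin T hTmem (ta t) (feas t htm)
      rw [hs] at h
      linarith
    have hlo : Tendsto (fun t => D T - ∑ i, (b t i)^2 * ((v i T)⁻¹ - (v i t)⁻¹))
        (𝓝[Iio T] T) (𝓝 (D T)) := by
      have := (tendsto_const_nhds (x := D T) (f := 𝓝[Iio T] T)).sub hcorr
      simpa using this
    exact tendsto_of_tendsto_of_tendsto_of_le_of_le' hlo hGbT hDlb hub
  -- G (b t) T tends to D T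
  have hGbt : Tendsto (fun t => ∑ i, (b t i)^2 / v i T) (𝓝[Iio T] T) (𝓝 (D T)) := by
    have h := hDtend.add hcorr
    rw [add_zero] at h
    exact Tendsto.congr' (hsplit.mono fun t ht => ht.symm) h
  -- strong convexity at the minimizer
  have strong : ∀ x : Fin d → ℝ, (∀ i, a i ≤ x i) →
      D T + ∑ i, ((A⁻¹ *ᵥ x) i - b T i)^2 / v i T ≤ ∑ i, ((A⁻¹ *ᵥ x) i)^2 / v i T := by
    intro x hx
    set w : Fin d → ℝ := fun i => (A⁻¹ *ᵥ x) i - b T i with hwdef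
    set P : ℝ := ∑ i, b T i * w i / v i T with hPdef
    set Q : ℝ := ∑ i, (w i)^2 / v i T with hQdef
    have hQnn : 0 ≤ Q := Finset.sum_nonneg fun i _ => div_nonneg (sq_nonneg _) (hvT i).le
    have hkey : ∀ s : ℝ, s ∈ Ioc (0:ℝ) 1 → 0 ≤ 2*P + s*Q := by
      intro s hs
      have hfeas : ∀ i, a i ≤ ta T i + s * (x i - ta T i) := by
        intro i
        have h1 := feas T hTmem i
        have h2 := hx i
        nlinarith [hs.1, hs.2]
      have h := Dmin T hTmem (fun i => ta T i + s * (x i - ta T i)) hfeas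
      have hlin : (A⁻¹ *ᵥ (fun i => ta T i + s * (x i - ta T i)))
          = fun i => b T i + s * w i := by
        have h0 : (fun i => ta T i + s * (x i - ta T i)) = ta T + s • (x - ta T) := by
          funext i; simp [smul_eq_mul]
        rw [h0, Matrix.mulVec_add, Matrix.mulVec_smul, Matrix.mulVec_sub]
        funext i
        simp only [hwdef, hbdef, Pi.add_apply, Pi.smul_apply, Pi.sub_apply, smul_eq_mul]
      rw [hlin] at h
      have hexp : ∑ i, (b T i + s * w i)^2 / v i T = D T + s*(2*P) + s^2*Q := by
        rw [Dform T hTmem, hPdef, hQdef]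
        simp only [Finset.mul_sum, ← Finset.sum_add_distrib]
        refine Finset.sum_congr rfl fun i _ => ?_
        have h1 : v i T ≠ 0 := (hvT i).ne'
        field_simp
        ring
      rw [hexp] at h
      have hs0 : 0 < s := hs.1
      nlinarith [h]
    have hP : 0 ≤ 2*P := by
      have hlim : Tendsto (fun s : ℝ => 2*P + s*Q) (𝓝[>] (0:ℝ)) (𝓝 (2*P)) := by
        have h1 : Tendsto (fun s : ℝ => 2*P + s*Q) (𝓝 (0:ℝ)) (𝓝 (2*P + 0*Q)) :=
          tendsto_const_nhds.add ((continuous_id.tendsto 0).mul tendsto_const_nhds)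
        rw [zero_mul, add_zero] at h1
        exact h1.mono_left nhdsWithin_le_nhds
      refine ge_of_tendsto hlim ?_
      have hIoc : Ioc (0:ℝ) 1 ∈ 𝓝[>] (0:ℝ) :=
        Ioc_mem_nhdsGT_of_mem ⟨le_refl 0, zero_lt_one⟩
      filter_upwards [hIoc] with s hs
      exact hkey s hs
    have hfin : ∑ i, ((A⁻¹ *ᵥ x) i)^2 / v i T = D T + 2*P + Q := by
      rw [Dform T hTmem, hPdef, hQdef]
      simp only [Finset.mul_sum, ← Finset.sum_add_distrib]
      refine Finset.sum_congr rfl fun i _ => ?_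
      have h1 : v i T ≠ 0 := (hvT i).ne'
      have h2 : (A⁻¹ *ᵥ x) i = b T i + w i := by simp [hwdef]
      rw [h2]
      field_simp
      ring
    rw [hfin]
    linarith
  -- convergence of b
  have hQtend : Tendsto (fun t => ∑ i, (b t i - b T i)^2 / v i T) (𝓝[Iio T] T) (𝓝 0) := by
    have hub : ∀ᶠ t in 𝓝[Iio T] T,
        ∑ i, (b t i - b T i)^2 / v i T ≤ ∑ i, (b t i)^2 / v i T - D T := by
      filter_upwards [hev] with t ht
      have hst := strong (ta t) (feas t ⟨ht.1, ht.2.le⟩)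
      have heq : (A⁻¹ *ᵥ ta t) = b t := rfl
      rw [heq] at hst
      linarith
    have hlb : ∀ᶠ t in 𝓝[Iio T] T, (0:ℝ) ≤ ∑ i, (b t i - b T i)^2 / v i T :=
      Eventually.of_forall fun t =>
        Finset.sum_nonneg fun i _ => div_nonneg (sq_nonneg _) (hvT i).le
    have hubt : Tendsto (fun t => ∑ i, (b t i)^2 / v i T - D T) (𝓝[Iio T] T) (𝓝 0) := by
      have := hGbt.sub (tendsto_const_nhds (x := D T) (f := 𝓝[Iio T] T))
      simpa using this
    exact tendsto_of_tendsto_of_tendsto_of_le_of_le' tendsto_const_nhds hubt hlb hub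
  have hbt : ∀ i, Tendsto (fun t => b t i) (𝓝[Iio T] T) (𝓝 (b T i)) := by
    intro i
    have h1 : Tendsto (fun t => (b t i - b T i)^2 / v i T) (𝓝[Iio T] T) (𝓝 0) := by
      refine tendsto_of_tendsto_of_tendsto_of_le_of_le' tendsto_const_nhds hQtend ?_ ?_
      · exact Eventually.of_forall fun t => div_nonneg (sq_nonneg _) (hvT i).le
      · exact Eventually.of_forall fun t => Finset.single_le_sum
          (f := fun j => (b t j - b T j)^2 / v j T)
          (fun j _ => div_nonneg (sq_nonneg _) (hvT j).le) (Finset.mem_univ i)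
    have h2 : Tendsto (fun t => (b t i - b T i)^2) (𝓝[Iio T] T) (𝓝 0) := by
      have h := h1.const_mul (v i T)
      rw [mul_zero] at h
      refine h.congr fun t => ?_
      rw [← mul_div_assoc]
      exact mul_div_cancel_left₀ _ (hvT i).ne'
    have h3 : Tendsto (fun t => |b t i - b T i|) (𝓝[Iio T] T) (𝓝 0) := by
      have h := h2.sqrt
      rw [Real.sqrt_zero] at h
      exact h.congr fun t => Real.sqrt_sq_eq_abs _
    have h4 : Tendsto (fun t => b t i - b T i) (𝓝[Iio T] T) (𝓝 0) := by
      rw [tendsto_zero_iff_norm_tendsto_zero]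
      simpa [Real.norm_eq_abs] using h3
    have h5 := h4.add (tendsto_const_nhds (x := b T i) (f := 𝓝[Iio T] T))
    simpa using h5
  -- upper limit
  have hup : Tendsto (fun t => ∑ i, (b t i)^2 * q i t) (𝓝[Iio T] T)
      (𝓝 (∑ i, (b T i)^2 * (-(v' i)/(v i T)^2))) :=
    tendsto_finset_sum _ fun i _ => ((hbt i).pow 2).mul (hq i)
  -- identify the target
  have hLtar : (-∑ i, (Real.sqrt (v' i) / v i T * (A⁻¹ *ᵥ ta T) i) ^ 2)
      = ∑ i, (b T i)^2 * (-(v' i)/(v i T)^2) := by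
    rw [← Finset.sum_neg_distrib]
    refine Finset.sum_congr rfl fun i _ => ?_
    rw [mul_pow, div_pow, Real.sq_sqrt (hBI i).le]
    have heq : (A⁻¹ *ᵥ ta T) i = b T i := rfl
    rw [heq]
    ring
  constructor
  · rw [hLtar]
    exact tendsto_of_tendsto_of_tendsto_of_le_of_le' hlow hup
      (hev.mono fun t ht => sandwich_lo t ht) (hev.mono fun t ht => sandwich_hi t ht)
  · have hne : ∃ j, b T j ≠ 0 := by
      by_contra hc
      push_neg at hc
      have hz : b T = 0 := funext fun j => hc j
      obtain ⟨i0, hi0⟩ := ha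
      have hta0 : ta T = A *ᵥ b T := by
        have : b T = A⁻¹ *ᵥ ta T := rfl
        rw [this, Matrix.mulVec_mulVec, Matrix.mul_nonsing_inv A hA, Matrix.one_mulVec]
      have hz2 : ta T = 0 := by rw [hta0, hz, Matrix.mulVec_zero]
      have hfe := feas T hTmem i0
      rw [hz2] at hfe
      simp at hfe
      linarith
    obtain ⟨j, hj⟩ := hne
    have hpos : 0 < ∑ i, (Real.sqrt (v' i) / v i T * (A⁻¹ *ᵥ ta T) i) ^ 2 := by
      refine Finset.sum_pos' (fun i _ => sq_nonneg _) ⟨j, Finset.mem_univ j, ?_⟩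
      apply sq_pos_of_ne_zero
      apply mul_ne_zero
      · exact div_ne_zero (Real.sqrt_ne_zero'.mpr (hBI j)) (hvT j).ne'
      · exact hj
    linarith
end

section
/- Under condition B0 (each v_i is C¹, strictly increasing, with v_i(0) = 0) and A nonsingular, for any T₀ ∈ (0,T] the functions t ↦ D(t), t ↦ ã_i(t), t ↦ λ_i(t), and t ↦ λ_i(t)/D(t) are Lipschitz continuous on the interval [T₀, T], for every i ∈ {1,…,d}. -/
open Matrix Set

/-- bounded + Lipschitz on a set, private toolkit -/
def SLB (s : Set ℝ) (f : ℝ → ℝ) : Prop :=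
  ∃ K C : ℝ, 0 ≤ K ∧ 0 ≤ C ∧ (∀ x ∈ s, |f x| ≤ C) ∧
    ∀ x ∈ s, ∀ y ∈ s, |f x - f y| ≤ K * |x - y|

lemma SLB.congr {s : Set ℝ} {f g : ℝ → ℝ} (h : SLB s f) (he : ∀ x ∈ s, f x = g x) :
    SLB s g := by
  obtain ⟨K, C, hK, hC, hb, hl⟩ := h
  exact ⟨K, C, hK, hC, fun x hx => (he x hx) ▸ hb x hx,
    fun x hx y hy => (he x hx) ▸ (he y hy) ▸ hl x hx y hy⟩

lemma SLB.const (s : Set ℝ) (c : ℝ) : SLB s (fun _ => c) :=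
  ⟨0, |c|, le_rfl, abs_nonneg c, fun _ _ => le_rfl, fun x _ y _ => by
    simp [abs_nonneg]⟩

lemma SLB.add {s : Set ℝ} {f g : ℝ → ℝ} (hf : SLB s f) (hg : SLB s g) :
    SLB s (fun x => f x + g x) := by
  obtain ⟨K, C, hK, hC, hb, hl⟩ := hf
  obtain ⟨K', C', hK', hC', hb', hl'⟩ := hg
  refine ⟨K + K', C + C', by positivity, by positivity, fun x hx => ?_, fun x hx y hy => ?_⟩
  · calc |f x + g x| ≤ |f x| + |g x| := abs_add_le _ _
      _ ≤ C + C' := add_le_add (hb x hx) (hb' x hx)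
  · calc |f x + g x - (f y + g y)| = |(f x - f y) + (g x - g y)| := by ring_nf
      _ ≤ |f x - f y| + |g x - g y| := abs_add_le _ _
      _ ≤ K * |x - y| + K' * |x - y| := add_le_add (hl x hx y hy) (hl' x hx y hy)
      _ = (K + K') * |x - y| := by ring

lemma SLB.mul {s : Set ℝ} {f g : ℝ → ℝ} (hf : SLB s f) (hg : SLB s g) :
    SLB s (fun x => f x * g x) := by
  obtain ⟨K, C, hK, hC, hb, hl⟩ := hf
  obtain ⟨K', C', hK', hC', hb', hl'⟩ := hg
  refine ⟨K * C' + C * K', C * C', by positivity, by positivity, fun x hx => ?_,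
    fun x hx y hy => ?_⟩
  · rw [abs_mul]
    exact mul_le_mul (hb x hx) (hb' x hx) (abs_nonneg _) hC
  · have h1 : |f x * g x - f y * g y| ≤ |f x - f y| * |g x| + |f y| * |g x - g y| := by
      calc |f x * g x - f y * g y| = |(f x - f y) * g x + f y * (g x - g y)| := by ring_nf
        _ ≤ |(f x - f y) * g x| + |f y * (g x - g y)| := abs_add_le _ _
        _ = |f x - f y| * |g x| + |f y| * |g x - g y| := by rw [abs_mul, abs_mul]
    calc |f x * g x - f y * g y| ≤ |f x - f y| * |g x| + |f y| * |g x - g y| := h1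
      _ ≤ (K * |x - y|) * C' + C * (K' * |x - y|) := by
          apply add_le_add
          · exact mul_le_mul (hl x hx y hy) (hb' x hx) (abs_nonneg _) (by positivity)
          · exact mul_le_mul (hb y hy) (hl' x hx y hy) (abs_nonneg _) hC
      _ = (K * C' + C * K') * |x - y| := by ring

lemma SLB.sum {s : Set ℝ} {ι : Type*} (t : Finset ι) (f : ι → ℝ → ℝ)
    (h : ∀ i ∈ t, SLB s (f i)) : SLB s (fun x => ∑ i ∈ t, f i x) := by
  classical
  induction t using Finset.induction_on with
  | empty => exact (SLB.const s 0).congr (by simp)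
  | insert _ _ hni ih =>
    rename_i j t'
    have := ((h j (Finset.mem_insert_self j t')).add
      (ih (fun i hi => h i (Finset.mem_insert_of_mem hi))))
    exact this.congr (fun x hx => by rw [Finset.sum_insert hni])

lemma SLB.inv_of_lb {s : Set ℝ} {f : ℝ → ℝ} {m : ℝ} (hf : SLB s f) (hm : 0 < m)
    (h : ∀ x ∈ s, m ≤ f x) : SLB s (fun x => (f x)⁻¹) := by
  obtain ⟨K, C, hK, hC, hb, hl⟩ := hf
  refine ⟨K / (m * m), m⁻¹, by positivity, by positivity, fun x hx => ?_, fun x hx y hy => ?_⟩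
  · have h1 := h x hx
    have hfx0 : 0 < f x := lt_of_lt_of_le hm h1
    rw [abs_of_pos (by positivity : (0:ℝ) < (f x)⁻¹)]
    exact inv_anti₀ hm h1
  · have hx1 := h x hx; have hy1 := h y hy
    have hfx : 0 < f x := lt_of_lt_of_le hm hx1
    have hfy : 0 < f y := lt_of_lt_of_le hm hy1
    have : (f x)⁻¹ - (f y)⁻¹ = (f y - f x) / (f x * f y) := by
      field_simp
    rw [this, abs_div, abs_of_pos (by positivity : (0:ℝ) < f x * f y)]
    rw [div_le_iff₀ (by positivity)]
    have h2 : |f y - f x| ≤ K * |x - y| := by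
      rw [abs_sub_comm]; exact hl x hx y hy
    have h3 : m * m ≤ f x * f y := mul_le_mul hx1 hy1 hm.le (le_of_lt hfx)
    calc |f y - f x| ≤ K * |x - y| := h2
      _ = K / (m * m) * |x - y| * (m * m) := by
          rw [div_mul_eq_mul_div, div_mul_eq_mul_div, mul_div_assoc,
            div_self (by positivity : m * m ≠ 0), mul_one]
      _ ≤ K / (m * m) * |x - y| * (f x * f y) := by
          apply mul_le_mul_of_nonneg_left h3 (by positivity)

lemma SLB.div {s : Set ℝ} {f g : ℝ → ℝ} {m : ℝ} (hf : SLB s f) (hg : SLB s g)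
    (hm : 0 < m) (h : ∀ x ∈ s, m ≤ g x) : SLB s (fun x => f x / g x) :=
  (hf.mul (hg.inv_of_lb hm h)).congr (fun x _ => by rw [div_eq_mul_inv])

lemma SLB.lipschitz {s : Set ℝ} {f : ℝ → ℝ} (h : SLB s f) :
    ∃ K : NNReal, LipschitzOnWith K f s := by
  obtain ⟨K, _, hK, _, _, hl⟩ := h
  refine ⟨K.toNNReal, ?_⟩
  rw [lipschitzOnWith_iff_dist_le_mul]
  intro x hx y hy
  rw [Real.dist_eq, Real.dist_eq, Real.coe_toNNReal K hK]
  exact hl x hx y hy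

variable {d : ℕ}

lemma aux_inv_formula (A : Matrix (Fin d) (Fin d) ℝ) (c : Fin d → ℝ) (hc : ∀ k, c k ≠ 0) :
    (A * Matrix.diagonal c * Aᵀ)⁻¹ =
      (A⁻¹)ᵀ * Matrix.diagonal (fun k => (c k)⁻¹) * A⁻¹ := by
  have hd : (Matrix.diagonal c)⁻¹ = Matrix.diagonal (fun k => (c k)⁻¹) := by
    apply Matrix.inv_eq_right_inv
    rw [Matrix.diagonal_mul_diagonal]
    convert Matrix.diagonal_one with k
    exact mul_inv_cancel₀ (hc k)
  rw [Matrix.mul_inv_rev, Matrix.mul_inv_rev, hd, Matrix.transpose_nonsing_inv,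
    Matrix.mul_assoc]

lemma aux_entry (M N : Matrix (Fin d) (Fin d) ℝ) (c : Fin d → ℝ) (i j : Fin d) :
    (M * Matrix.diagonal c * N) i j = ∑ k, M i k * c k * N k j := by
  rw [Matrix.mul_apply]
  congr 1; ext k
  rw [Matrix.mul_diagonal]

lemma aux_quadform (M : Matrix (Fin d) (Fin d) ℝ) (c : Fin d → ℝ) (x : Fin d → ℝ) :
    x ⬝ᵥ ((Mᵀ * Matrix.diagonal c * M) *ᵥ x) = ∑ k, c k * (M *ᵥ x) k ^ 2 := by
  rw [Matrix.mul_assoc, ← Matrix.mulVec_mulVec, Matrix.dotProduct_mulVec,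
    Matrix.vecMul_transpose, ← Matrix.mulVec_mulVec]
  simp [dotProduct, Matrix.mulVec_diagonal]
  congr 1; ext k; ring

/-- variational inequality from minimality over `{x | a ≤ x}` for a symmetric PSD form -/
lemma aux_VI (M : Matrix (Fin d) (Fin d) ℝ) (hsym : Mᵀ = M)
    (hpsd : ∀ w, 0 ≤ w ⬝ᵥ (M *ᵥ w)) (a u : Fin d → ℝ)
    (hfeas : ∀ i, a i ≤ u i)
    (hmin : ∀ y : Fin d → ℝ, (∀ i, a i ≤ y i) → u ⬝ᵥ (M *ᵥ u) ≤ y ⬝ᵥ (M *ᵥ y))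
    (x : Fin d → ℝ) (hx : ∀ i, a i ≤ x i) :
    0 ≤ (M *ᵥ u) ⬝ᵥ (x - u) := by
  have hsymuse : (x - u) ⬝ᵥ (M *ᵥ u) = u ⬝ᵥ (M *ᵥ (x - u)) := by
    rw [Matrix.dotProduct_mulVec, ← Matrix.mulVec_transpose, hsym, dotProduct_comm]
  have e0 : (M *ᵥ u) ⬝ᵥ (x - u) = u ⬝ᵥ (M *ᵥ (x - u)) := by
    rw [dotProduct_comm]; exact hsymuse
  have hpnn : 0 ≤ (x - u) ⬝ᵥ (M *ᵥ (x - u)) := hpsd _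
  have key : ∀ θ : ℝ, 0 ≤ θ → θ ≤ 1 →
      0 ≤ 2 * θ * (u ⬝ᵥ (M *ᵥ (x - u))) + θ ^ 2 * ((x - u) ⬝ᵥ (M *ᵥ (x - u))) := by
    intro θ hθ0 hθ1
    have hyfeas : ∀ i, a i ≤ (u + θ • (x - u)) i := by
      intro i
      have h1 : (u + θ • (x - u)) i = (1 - θ) * u i + θ * x i := by
        simp [Pi.add_apply, Pi.smul_apply, Pi.sub_apply]; ring
      rw [h1]
      calc a i = (1 - θ) * a i + θ * a i := by ring
        _ ≤ (1 - θ) * u i + θ * x i :=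
          add_le_add (mul_le_mul_of_nonneg_left (hfeas i) (by linarith))
            (mul_le_mul_of_nonneg_left (hx i) hθ0)
    have hmin' := hmin (u + θ • (x - u)) hyfeas
    have hexp : (u + θ • (x - u)) ⬝ᵥ (M *ᵥ (u + θ • (x - u))) =
        u ⬝ᵥ (M *ᵥ u) + 2 * θ * (u ⬝ᵥ (M *ᵥ (x - u)))
          + θ ^ 2 * ((x - u) ⬝ᵥ (M *ᵥ (x - u))) := by
      rw [Matrix.mulVec_add, Matrix.mulVec_smul, dotProduct_add, add_dotProduct,
        add_dotProduct, dotProduct_smul, smul_dotProduct, smul_dotProduct,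
        dotProduct_smul]
      simp only [smul_eq_mul]
      rw [hsymuse]; ring
    rw [hexp] at hmin'
    linarith
  rw [e0]
  by_contra hcon
  push_neg at hcon
  set g : ℝ := u ⬝ᵥ (M *ᵥ (x - u)) with hgdef
  set p : ℝ := (x - u) ⬝ᵥ (M *ᵥ (x - u)) with hpdef
  set θ : ℝ := min 1 ((-g) / (p + 1)) with hθ
  have hθpos : 0 < θ := lt_min one_pos (div_pos (by linarith) (by linarith))
  have hθ1 : θ ≤ 1 := min_le_left _ _
  have hθ2 : θ ≤ (-g) / (p + 1) := min_le_right _ _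
  have h1 := key θ hθpos.le hθ1
  have h2 : θ * (p + 1) ≤ -g := by
    rw [← le_div_iff₀ (by linarith)]; exact hθ2
  nlinarith [mul_le_mul_of_nonneg_left h2 hθpos.le, mul_pos hθpos hθpos,
    mul_neg_of_pos_of_neg hθpos hcon]

lemma abs_le_of_sq_le_sq'' {x y : ℝ} (h : x ^ 2 ≤ y ^ 2) (hy : 0 ≤ y) : |x| ≤ y := by
  nlinarith [sq_abs x, abs_nonneg x]

lemma double_le {d : ℕ} {f : Fin d → Fin d → ℝ} (hf : ∀ i j, 0 ≤ f i j) (i j : Fin d) :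
    f i j ≤ ∑ i', ∑ j', f i' j' := by
  calc f i j ≤ ∑ j', f i j' :=
        Finset.single_le_sum (fun j' _ => hf i j') (Finset.mem_univ j)
    _ ≤ ∑ i', ∑ j', f i' j' :=
        Finset.single_le_sum (fun i' _ => Finset.sum_nonneg fun j' _ => hf i' j')
          (Finset.mem_univ i)

set_option maxHeartbeats 1600000 in
/-- Lemma 4.4 of the paper. Under B0 and `A` nonsingular, for any
`T₀ ∈ (0, T]` the functions `D(·)`, `ã_i(·)`, `λ_i(·)` and `λ_i(·)/D(·)` are Lipschitz
continuous on `[T₀, T]`, for every `i`. -/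
theorem stmt7 {d : ℕ} (T : ℝ) (hT : 0 < T)
    (v : Fin d → ℝ → ℝ)
    (hv_C1 : ∀ i, ContDiffOn ℝ 1 (v i) (Icc 0 T))
    (hv_mono : ∀ i, StrictMonoOn (v i) (Icc 0 T))
    (hv_0 : ∀ i, v i 0 = 0)
    (A : Matrix (Fin d) (Fin d) ℝ) (hA : IsUnit A.det)
    (a : Fin d → ℝ) (ha : ∃ i, 0 < a i)
    (Sg : ℝ → Matrix (Fin d) (Fin d) ℝ)
    (hSg : ∀ t, Sg t = A * Matrix.diagonal (fun i => v i t) * Aᵀ)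
    (ta : ℝ → Fin d → ℝ)
    (hta : ∀ t ∈ Ioc (0 : ℝ) T, (∀ i, a i ≤ ta t i) ∧
      ∀ y : Fin d → ℝ, (∀ i, a i ≤ y i) →
        ta t ⬝ᵥ (Sg t)⁻¹ *ᵥ ta t ≤ y ⬝ᵥ (Sg t)⁻¹ *ᵥ y)
    (lam : ℝ → Fin d → ℝ) (hlam : ∀ t, lam t = (Sg t)⁻¹ *ᵥ ta t)
    (D : ℝ → ℝ) (hD : ∀ t, D t = ta t ⬝ᵥ (Sg t)⁻¹ *ᵥ ta t) :
    ∀ T₀ : ℝ, 0 < T₀ → T₀ ≤ T →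
      (∃ K : NNReal, LipschitzOnWith K D (Icc T₀ T)) ∧
      (∀ i, ∃ K : NNReal, LipschitzOnWith K (fun t => ta t i) (Icc T₀ T)) ∧
      (∀ i, ∃ K : NNReal, LipschitzOnWith K (fun t => lam t i) (Icc T₀ T)) ∧
      (∀ i, ∃ K : NNReal, LipschitzOnWith K (fun t => lam t i / D t) (Icc T₀ T)) := by
  intro T₀ hT₀ hT₀T
  classical
  obtain ⟨i₀, hi₀⟩ := ha
  set s : Set ℝ := Icc T₀ T with hs
  have hsub0 : s ⊆ Icc 0 T := fun t ht => ⟨le_trans hT₀.le ht.1, ht.2⟩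
  have hT0mem : (T₀ : ℝ) ∈ Icc (0:ℝ) T := ⟨hT₀.le, hT₀T⟩
  have hTmem : (T : ℝ) ∈ Icc (0:ℝ) T := ⟨hT.le, le_rfl⟩
  -- positivity of v on s
  have hvT₀ : ∀ k, 0 < v k T₀ := by
    intro k
    have := hv_mono k ⟨le_rfl, hT.le⟩ hT0mem hT₀
    rwa [hv_0 k] at this
  have hvlb : ∀ k, ∀ t ∈ s, v k T₀ ≤ v k t := fun k t ht =>
    (hv_mono k).monotoneOn hT0mem (hsub0 ht) ht.1
  have hvpos : ∀ k, ∀ t ∈ s, 0 < v k t := fun k t ht =>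
    lt_of_lt_of_le (hvT₀ k) (hvlb k t ht)
  have hvub : ∀ k, ∀ t ∈ s, v k t ≤ v k T := fun k t ht =>
    (hv_mono k).monotoneOn (hsub0 ht) hTmem ht.2
  -- Lipschitz of v on Icc 0 T
  have hvlip : ∀ k, ∃ K : ℝ, 0 ≤ K ∧ ∀ x ∈ Icc (0:ℝ) T, ∀ y ∈ Icc (0:ℝ) T,
      |v k x - v k y| ≤ K * |x - y| := by
    intro k
    have hu : UniqueDiffOn ℝ (Icc (0:ℝ) T) := uniqueDiffOn_Icc hT
    have hc : ContinuousOn (fun x => fderivWithin ℝ (v k) (Icc 0 T) x) (Icc 0 T) :=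
      (hv_C1 k).continuousOn_fderivWithin hu le_rfl
    obtain ⟨C, hC⟩ := isCompact_Icc.exists_bound_of_continuousOn hc
    refine ⟨max C 0, le_max_right _ _, fun x hx y hy => ?_⟩
    have := (convex_Icc (0:ℝ) T).norm_image_sub_le_of_norm_fderivWithin_le
      (C := max C 0) ((hv_C1 k).differentiableOn one_ne_zero)
      (fun z hz => le_trans (hC z hz) (le_max_left _ _)) hy hx
    simpa [Real.norm_eq_abs] using this
  -- SLB of 1/v k on s
  have hvinv : ∀ k, SLB s (fun t => (v k t)⁻¹) := by
    intro k
    obtain ⟨K, hK0, hK⟩ := hvlip k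
    have hvS : SLB s (v k) := by
      refine ⟨K, |v k T|, hK0, abs_nonneg _, fun t ht => ?_, fun x hx y hy =>
        hK x (hsub0 hx) y (hsub0 hy)⟩
      rw [abs_of_pos (hvpos k t ht)]
      exact le_trans (hvub k t ht) (le_abs_self _)
    exact hvS.inv_of_lb (hvT₀ k) (hvlb k)
  -- Step B : inverse formula and entries
  set q : Fin d → Fin d → ℝ → ℝ :=
    fun i j t => ∑ k, (A⁻¹)ᵀ i k * (v k t)⁻¹ * A⁻¹ k j with hq_def
  have hQform : ∀ t ∈ s, (Sg t)⁻¹ =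
      (A⁻¹)ᵀ * Matrix.diagonal (fun k => (v k t)⁻¹) * A⁻¹ := by
    intro t ht
    rw [hSg t, aux_inv_formula A _ (fun k => (hvpos k t ht).ne')]
  have hQentry : ∀ t ∈ s, ∀ i j, (Sg t)⁻¹ i j = q i j t := by
    intro t ht i j
    rw [hQform t ht, aux_entry]
  have hQsym : ∀ t ∈ s, ((Sg t)⁻¹)ᵀ = (Sg t)⁻¹ := by
    intro t ht
    rw [hQform t ht, Matrix.transpose_mul, Matrix.transpose_mul,
      Matrix.transpose_transpose, Matrix.diagonal_transpose, ← Matrix.mul_assoc]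
  have hqSLB : ∀ i j, SLB s (q i j) := by
    intro i j
    exact SLB.sum Finset.univ _ (fun k _ =>
      ((SLB.const s ((A⁻¹)ᵀ i k)).mul (hvinv k)).mul (SLB.const s (A⁻¹ k j)))
  -- Step C : quadratic form, PSD, PD
  have hquad : ∀ t ∈ s, ∀ x : Fin d → ℝ,
      x ⬝ᵥ ((Sg t)⁻¹ *ᵥ x) = ∑ k, (v k t)⁻¹ * (A⁻¹ *ᵥ x) k ^ 2 := by
    intro t ht x
    rw [hQform t ht, aux_quadform]
  have hpsd : ∀ t ∈ s, ∀ x : Fin d → ℝ, 0 ≤ x ⬝ᵥ ((Sg t)⁻¹ *ᵥ x) := by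
    intro t ht x
    rw [hquad t ht]
    exact Finset.sum_nonneg fun k _ =>
      mul_nonneg (inv_nonneg.2 (hvpos k t ht).le) (sq_nonneg _)
  -- constants
  set CA : ℝ := ∑ i, ∑ j, (A i j) ^ 2 with hCA_def
  have hCA0 : 0 ≤ CA := Finset.sum_nonneg fun i _ => Finset.sum_nonneg fun j _ => sq_nonneg _
  have hCA : 0 < CA := by
    rcases hCA0.lt_or_eq with h | h
    · exact h
    · exfalso
      have hz : ∀ i j, (A i j) ^ 2 = 0 := by
        intro i j
        have h1 := Finset.sum_eq_zero_iff_of_nonneg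
          (fun i (_ : i ∈ Finset.univ) => Finset.sum_nonneg
            fun j (_ : j ∈ Finset.univ) => sq_nonneg (A i j))|>.1 h.symm
        have h2 := Finset.sum_eq_zero_iff_of_nonneg
          (fun j (_ : j ∈ Finset.univ) => sq_nonneg (A i j)) |>.1
          (h1 i (Finset.mem_univ i))
        exact h2 j (Finset.mem_univ j)
      have hA0 : A = 0 := by
        ext i j
        have := hz i j
        simpa [pow_eq_zero_iff] using this
      rw [hA0, (show (0 : Matrix (Fin d) (Fin d) ℝ).det = 0 from by haveI : Nonempty (Fin d) := ⟨i₀⟩; exact Matrix.det_zero)] at hA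
      simpa using hA
  set Vmax : ℝ := ∑ k, v k T with hVmax_def
  have hVmax : 0 < Vmax := by
    apply Finset.sum_pos (fun k _ => lt_of_lt_of_le (hvT₀ k)
      ((hv_mono k).monotoneOn hT0mem hTmem hT₀T)) ⟨i₀, Finset.mem_univ i₀⟩
  have hvVmax : ∀ k, ∀ t ∈ s, v k t ≤ Vmax := by
    intro k t ht
    calc v k t ≤ v k T := hvub k t ht
      _ ≤ Vmax := Finset.single_le_sum
          (fun k' _ => (lt_of_lt_of_le (hvT₀ k')
            ((hv_mono k').monotoneOn hT0mem hTmem hT₀T)).le) (Finset.mem_univ k)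
  set μ : ℝ := (Vmax * CA)⁻¹ with hμ_def
  have hμ : 0 < μ := inv_pos.2 (mul_pos hVmax hCA)
  have hPD : ∀ t ∈ s, ∀ x : Fin d → ℝ,
      μ * ∑ i, x i ^ 2 ≤ x ⬝ᵥ ((Sg t)⁻¹ *ᵥ x) := by
    intro t ht x
    set y : Fin d → ℝ := A⁻¹ *ᵥ x with hy_def
    have hAy : A *ᵥ y = x := by
      rw [hy_def, Matrix.mulVec_mulVec, Matrix.mul_nonsing_inv A hA, Matrix.one_mulVec]
    have hxi : ∀ i, x i = ∑ j, A i j * y j := by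
      intro i
      conv_lhs => rw [← hAy]
      simp [Matrix.mulVec, dotProduct]
    have h1 : ∑ i, x i ^ 2 ≤ CA * ∑ k, y k ^ 2 := by
      calc ∑ i, x i ^ 2 ≤ ∑ i, ((∑ j, (A i j) ^ 2) * ∑ j, y j ^ 2) := by
            apply Finset.sum_le_sum
            intro i _
            rw [hxi i]
            exact Finset.sum_mul_sq_le_sq_mul_sq Finset.univ _ _
        _ = CA * ∑ k, y k ^ 2 := by rw [hCA_def, Finset.sum_mul]
    have h2 : Vmax⁻¹ * ∑ k, y k ^ 2 ≤ x ⬝ᵥ ((Sg t)⁻¹ *ᵥ x) := by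
      rw [hquad t ht x, Finset.mul_sum]
      apply Finset.sum_le_sum
      intro k _
      exact mul_le_mul_of_nonneg_right
        (inv_anti₀ (hvpos k t ht) (hvVmax k t ht)) (sq_nonneg _)
    calc μ * ∑ i, x i ^ 2 ≤ μ * (CA * ∑ k, y k ^ 2) :=
          mul_le_mul_of_nonneg_left h1 hμ.le
      _ = Vmax⁻¹ * ∑ k, y k ^ 2 := by
          rw [hμ_def, mul_inv]
          field_simp
      _ ≤ x ⬝ᵥ ((Sg t)⁻¹ *ᵥ x) := h2
  -- Step D : uniform constants and boundedness of ta
  have hsubIoc : s ⊆ Ioc 0 T := fun t ht => ⟨lt_of_lt_of_le hT₀ ht.1, ht.2⟩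
  have hqSLB' : ∀ i j, ∃ K C : ℝ, 0 ≤ K ∧ 0 ≤ C ∧ (∀ x ∈ s, |q i j x| ≤ C) ∧
      ∀ x ∈ s, ∀ y ∈ s, |q i j x - q i j y| ≤ K * |x - y| := hqSLB
  choose Kq Cq hKq0 hCq0 hqbd hqlip using hqSLB'
  set KQ : ℝ := ∑ i, ∑ j, Kq i j with hKQ_def
  set CQ : ℝ := ∑ i, ∑ j, Cq i j with hCQ_def
  have hKQ0 : 0 ≤ KQ := Finset.sum_nonneg fun i _ => Finset.sum_nonneg fun j _ => hKq0 i j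
  have hCQ0 : 0 ≤ CQ := Finset.sum_nonneg fun i _ => Finset.sum_nonneg fun j _ => hCq0 i j
  have hqbd' : ∀ t ∈ s, ∀ i j, |q i j t| ≤ CQ := fun t ht i j =>
    le_trans (hqbd i j t ht) (double_le hCq0 i j)
  have hqlip' : ∀ t1 ∈ s, ∀ t2 ∈ s, ∀ i j, |q i j t1 - q i j t2| ≤ KQ * |t1 - t2| :=
    fun t1 h1 t2 h2 i j => le_trans (hqlip i j t1 h1 t2 h2)
      (mul_le_mul_of_nonneg_right (double_le hKq0 i j) (abs_nonneg _))
  set Sa : ℝ := ∑ i, |a i| with hSa_def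
  have hSa0 : 0 ≤ Sa := Finset.sum_nonneg fun i _ => abs_nonneg _
  have hDub : ∀ t ∈ s, ta t ⬝ᵥ ((Sg t)⁻¹ *ᵥ ta t) ≤ CQ * Sa * Sa := by
    intro t ht
    obtain ⟨hfeas, hmin⟩ := hta t (hsubIoc ht)
    have h1 := hmin (fun i => |a i|) (fun i => le_abs_self _)
    refine le_trans h1 ?_
    have h2 : (fun i => |a i|) ⬝ᵥ ((Sg t)⁻¹ *ᵥ fun i => |a i|) =
        ∑ i, ∑ j, |a i| * q i j t * |a j| := by
      simp only [dotProduct, Matrix.mulVec]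
      refine Finset.sum_congr rfl fun i _ => ?_
      rw [Finset.mul_sum]
      refine Finset.sum_congr rfl fun j _ => ?_
      rw [hQentry t ht i j]; ring
    rw [h2]
    calc ∑ i, ∑ j, |a i| * q i j t * |a j| ≤ ∑ i, ∑ j, |a i| * CQ * |a j| := by
          refine Finset.sum_le_sum fun i _ => Finset.sum_le_sum fun j _ => ?_
          refine mul_le_mul_of_nonneg_right ?_ (abs_nonneg _)
          exact mul_le_mul_of_nonneg_left
            (le_trans (le_abs_self _) (hqbd' t ht i j)) (abs_nonneg _)
      _ = (∑ i, |a i| * CQ) * (∑ j, |a j|) := (Finset.sum_mul_sum _ _ _ _).symm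
      _ = CQ * Sa * Sa := by rw [← Finset.sum_mul, hSa_def]; ring
  set R : ℝ := Real.sqrt (CQ * Sa * Sa / μ) with hR_def
  have hR0 : 0 ≤ R := Real.sqrt_nonneg _
  have hRsq : R ^ 2 = CQ * Sa * Sa / μ := Real.sq_sqrt
    (div_nonneg (mul_nonneg (mul_nonneg hCQ0 hSa0) hSa0) hμ.le)
  have htabd : ∀ t ∈ s, ∀ i, |ta t i| ≤ R := by
    intro t ht i
    have h1 := hPD t ht (ta t)
    have h2 := hDub t ht
    have h3 : (ta t i) ^ 2 ≤ ∑ j, (ta t j) ^ 2 :=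
      Finset.single_le_sum (f := fun j => ta t j ^ 2)
        (fun j _ => sq_nonneg _) (Finset.mem_univ i)
    have h4 : μ * (ta t i) ^ 2 ≤ CQ * Sa * Sa :=
      le_trans (mul_le_mul_of_nonneg_left h3 hμ.le) (le_trans h1 h2)
    refine abs_le_of_sq_le_sq'' ?_ hR0
    rw [hRsq, le_div_iff₀ hμ]
    linarith
  -- Step E : Lipschitz continuity of ta via the variational inequality
  have entry_sum : ∀ t ∈ s, ∀ z w : Fin d → ℝ,
      ((Sg t)⁻¹ *ᵥ z) ⬝ᵥ w = ∑ i, (∑ j, q i j t * z j) * w i := by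
    intro t ht z w
    simp only [dotProduct, Matrix.mulVec]
    refine Finset.sum_congr rfl fun i _ => ?_
    congr 1
    exact Finset.sum_congr rfl fun j _ => by rw [hQentry t ht]
  have hkey : ∀ t1 ∈ s, ∀ t2 ∈ s,
      μ * (∑ i, (ta t1 i - ta t2 i) ^ 2) ≤
        ∑ i, ((∑ j, (q i j t2 - q i j t1) * ta t1 j) * (ta t1 i - ta t2 i)) := by
    intro t1 h1 t2 h2
    obtain ⟨hf1, hm1⟩ := hta t1 (hsubIoc h1)
    obtain ⟨hf2, hm2⟩ := hta t2 (hsubIoc h2)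
    have hVI1 : 0 ≤ ((Sg t2)⁻¹ *ᵥ ta t2) ⬝ᵥ (ta t1 - ta t2) :=
      aux_VI _ (hQsym t2 h2) (hpsd t2 h2) a (ta t2) hf2 hm2 (ta t1) hf1
    have hVI2 : 0 ≤ ((Sg t1)⁻¹ *ᵥ ta t1) ⬝ᵥ (ta t2 - ta t1) :=
      aux_VI _ (hQsym t1 h1) (hpsd t1 h1) a (ta t1) hf1 hm1 (ta t2) hf2
    have hPDu := hPD t2 h2 (ta t1 - ta t2)
    rw [entry_sum t2 h2 (ta t2) (ta t1 - ta t2)] at hVI1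
    rw [entry_sum t1 h1 (ta t1) (ta t2 - ta t1)] at hVI2
    rw [dotProduct_comm, entry_sum t2 h2 (ta t1 - ta t2) (ta t1 - ta t2)] at hPDu
    simp only [Pi.sub_apply] at hVI1 hVI2 hPDu
    have e1 : ∑ i, (∑ j, (q i j t2 - q i j t1) * ta t1 j) * (ta t1 i - ta t2 i)
        = (∑ i, (∑ j, q i j t2 * ta t1 j) * (ta t1 i - ta t2 i))
          - ∑ i, (∑ j, q i j t1 * ta t1 j) * (ta t1 i - ta t2 i) := by
      rw [← Finset.sum_sub_distrib]
      refine Finset.sum_congr rfl fun i _ => ?_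
      rw [← sub_mul, ← Finset.sum_sub_distrib]
      congr 1
      exact Finset.sum_congr rfl fun j _ => by ring
    have e2 : ∑ i, (∑ j, q i j t2 * (ta t1 j - ta t2 j)) * (ta t1 i - ta t2 i)
        = (∑ i, (∑ j, q i j t2 * ta t1 j) * (ta t1 i - ta t2 i))
          - ∑ i, (∑ j, q i j t2 * ta t2 j) * (ta t1 i - ta t2 i) := by
      rw [← Finset.sum_sub_distrib]
      refine Finset.sum_congr rfl fun i _ => ?_
      rw [← sub_mul, ← Finset.sum_sub_distrib]
      congr 1
      exact Finset.sum_congr rfl fun j _ => by ring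
    have e3 : ∑ i, (∑ j, q i j t1 * ta t1 j) * (ta t2 i - ta t1 i)
        = - ∑ i, (∑ j, q i j t1 * ta t1 j) * (ta t1 i - ta t2 i) := by
      rw [← Finset.sum_neg_distrib]
      exact Finset.sum_congr rfl fun i _ => by ring
    rw [e2] at hPDu
    rw [e3] at hVI2
    rw [e1]
    linarith
  have hd1 : (1:ℝ) ≤ (d:ℝ) := by
    have : 0 < d := Fin.pos i₀
    exact_mod_cast this
  have htaSLB : ∀ i, SLB s (fun t => ta t i) := by
    intro i
    refine ⟨(d:ℝ) * ((d:ℝ) * (KQ * R)) / μ, R,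
      div_nonneg (mul_nonneg (Nat.cast_nonneg d)
        (mul_nonneg (Nat.cast_nonneg d) (mul_nonneg hKQ0 hR0))) hμ.le,
      hR0, fun t ht => htabd t ht i, ?_⟩
    intro t1 ht1 t2 ht2
    have hkey12 := hkey t1 ht1 t2 ht2
    set β : ℝ := (d:ℝ) * (KQ * R) with hβ_def
    have hβ0 : 0 ≤ β := mul_nonneg (Nat.cast_nonneg d) (mul_nonneg hKQ0 hR0)
    set Δ : ℝ := |t1 - t2| with hΔ_def
    have hΔ0 : 0 ≤ Δ := abs_nonneg _
    have hc : ∀ i', |∑ j, (q i' j t2 - q i' j t1) * ta t1 j| ≤ β * Δ := by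
      intro i'
      calc |∑ j, (q i' j t2 - q i' j t1) * ta t1 j|
          ≤ ∑ j, |(q i' j t2 - q i' j t1) * ta t1 j| := Finset.abs_sum_le_sum_abs _ _
        _ ≤ ∑ _j : Fin d, (KQ * Δ) * R := by
            refine Finset.sum_le_sum fun j _ => ?_
            rw [abs_mul]
            refine mul_le_mul ?_ (htabd t1 ht1 j) (abs_nonneg _)
              (mul_nonneg hKQ0 hΔ0)
            have h5 := hqlip' t2 ht2 t1 ht1 i' j
            rwa [abs_sub_comm t2 t1] at h5
        _ = β * Δ := by
            rw [Finset.sum_const, Finset.card_univ, Fintype.card_fin,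
              nsmul_eq_mul, hβ_def]
            ring
    have h6 : ∀ i' : Fin d, 2 * μ * ((∑ j, (q i' j t2 - q i' j t1) * ta t1 j)
        * (ta t1 i' - ta t2 i')) ≤ (β * Δ) ^ 2 + μ ^ 2 * (ta t1 i' - ta t2 i') ^ 2 := by
      intro i'
      have h5 := hc i'
      nlinarith [sq_nonneg ((∑ j, (q i' j t2 - q i' j t1) * ta t1 j)
          - μ * (ta t1 i' - ta t2 i')),
        sq_abs (∑ j, (q i' j t2 - q i' j t1) * ta t1 j),
        mul_le_mul h5 h5 (abs_nonneg _) (le_trans (abs_nonneg _) h5), hμ]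
    have h7 : 2 * μ * (∑ i', (∑ j, (q i' j t2 - q i' j t1) * ta t1 j)
        * (ta t1 i' - ta t2 i'))
        ≤ (d:ℝ) * (β * Δ) ^ 2 + μ ^ 2 * ∑ i', (ta t1 i' - ta t2 i') ^ 2 := by
      rw [Finset.mul_sum]
      calc ∑ i', 2 * μ * ((∑ j, (q i' j t2 - q i' j t1) * ta t1 j)
            * (ta t1 i' - ta t2 i'))
          ≤ ∑ i', ((β * Δ) ^ 2 + μ ^ 2 * (ta t1 i' - ta t2 i') ^ 2) :=
            Finset.sum_le_sum fun i' _ => h6 i'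
        _ = (d:ℝ) * (β * Δ) ^ 2 + μ ^ 2 * ∑ i', (ta t1 i' - ta t2 i') ^ 2 := by
            rw [Finset.sum_add_distrib, Finset.sum_const, Finset.card_univ,
              Fintype.card_fin, nsmul_eq_mul, ← Finset.mul_sum]
    have h8 : μ ^ 2 * ∑ i', (ta t1 i' - ta t2 i') ^ 2 ≤ (d:ℝ) * (β * Δ) ^ 2 := by
      have hk' := mul_le_mul_of_nonneg_left hkey12 (by linarith : (0:ℝ) ≤ 2 * μ)
      linarith [hk', h7]
    have h9 : (ta t1 i - ta t2 i) ^ 2 ≤ ∑ i', (ta t1 i' - ta t2 i') ^ 2 :=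
      Finset.single_le_sum (f := fun i' => (ta t1 i' - ta t2 i') ^ 2)
        (fun i' _ => sq_nonneg _) (Finset.mem_univ i)
    have h10 : (μ * (ta t1 i - ta t2 i)) ^ 2 ≤ ((d:ℝ) * β * Δ) ^ 2 := by
      have t1' := mul_le_mul_of_nonneg_left h9 (sq_nonneg μ)
      have t2' := mul_nonneg (sub_nonneg.2 hd1)
          (mul_nonneg (Nat.cast_nonneg (α := ℝ) d) (sq_nonneg (β * Δ)))
      nlinarith [t1', h8, t2']
    have h12 : |μ * (ta t1 i - ta t2 i)| ≤ (d:ℝ) * β * Δ := by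
      refine abs_le_of_sq_le_sq'' h10 ?_
      exact mul_nonneg (mul_nonneg (Nat.cast_nonneg d) hβ0) hΔ0
    rw [abs_mul, abs_of_pos hμ] at h12
    rw [div_mul_eq_mul_div, le_div_iff₀ hμ]
    calc |ta t1 i - ta t2 i| * μ = μ * |ta t1 i - ta t2 i| := by ring
      _ ≤ (d:ℝ) * β * Δ := h12
      _ = (d:ℝ) * ((d:ℝ) * (KQ * R)) * Δ := by rw [hβ_def]
  -- Step F : assemble
  have hlamSLB : ∀ i, SLB s (fun t => lam t i) := by
    intro i
    have h1 : SLB s (fun t => ∑ j, q i j t * ta t j) :=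
      SLB.sum Finset.univ _ (fun j _ => (hqSLB i j).mul (htaSLB j))
    refine h1.congr fun t ht => ?_
    rw [hlam t]
    simp only [Matrix.mulVec, dotProduct]
    exact Finset.sum_congr rfl fun j _ => by rw [hQentry t ht]
  have hDSLB : SLB s D := by
    have h1 : SLB s (fun t => ∑ i, ta t i * ∑ j, q i j t * ta t j) :=
      SLB.sum Finset.univ _ (fun i _ => (htaSLB i).mul
        (SLB.sum Finset.univ _ (fun j _ => (hqSLB i j).mul (htaSLB j))))
    refine h1.congr fun t ht => ?_
    rw [hD t]
    simp only [dotProduct, Matrix.mulVec]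
    refine Finset.sum_congr rfl fun i _ => ?_
    congr 1
    exact Finset.sum_congr rfl fun j _ => by rw [hQentry t ht]
  have hDlow : ∀ t ∈ s, μ * a i₀ ^ 2 ≤ D t := by
    intro t ht
    obtain ⟨hfeas, _⟩ := hta t (hsubIoc ht)
    have h1 := hPD t ht (ta t)
    have h2 : a i₀ ^ 2 ≤ (ta t i₀) ^ 2 := by nlinarith [hfeas i₀, hi₀]
    have h3 : (ta t i₀) ^ 2 ≤ ∑ j, (ta t j) ^ 2 :=
      Finset.single_le_sum (f := fun j => ta t j ^ 2)
        (fun j _ => sq_nonneg _) (Finset.mem_univ i₀)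
    rw [hD t]
    calc μ * a i₀ ^ 2 ≤ μ * ∑ j, ta t j ^ 2 :=
          mul_le_mul_of_nonneg_left (le_trans h2 h3) hμ.le
      _ ≤ _ := h1
  have hquot : ∀ i, SLB s (fun t => lam t i / D t) := fun i =>
    (hlamSLB i).div hDSLB (mul_pos hμ (pow_pos hi₀ 2)) hDlow
  exact ⟨hDSLB.lipschitz, fun i => (htaSLB i).lipschitz,
    fun i => (hlamSLB i).lipschitz, fun i => (hquot i).lipschitz⟩
end

section
/- For any vector f = (f₁,…,f_d) ∈ ℝ^d and any L > 0, writing f_i⁺ := max(f_i, 0), f_i⁻ := min(f_i, 0), and S := Σ_{i=1}^d f_i, the following integral identity holds: ∫_{ℝ^d} 1{∃ t ∈ [0,L] : x_i < f_i·t for all i = 1,…,d} · exp(Σ_{i=1}^d x_i) dx equals 1 + (Σ_{i=1}^d f_i⁺)·L when S = 0, and equals (Σ_{i=1}^d f_i⁻)/S + ((Σ_{i=1}^d f_i⁺)/S)·e^{S·L} when S ≠ 0. -/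
open MeasureTheory Set Real

namespace Stmt8Aux

variable {d : ℕ}

/-! ### Basic set definitions -/

def Aset (f : Fin d → ℝ) (a b : ℝ) : Set (Fin d → ℝ) :=
  {x | ∃ t ∈ Icc a b, ∀ i, x i < f i * t}

lemma mem_Aset {f : Fin d → ℝ} {a b : ℝ} {x : Fin d → ℝ} :
    x ∈ Aset f a b ↔ ∃ t ∈ Icc a b, ∀ i, x i < f i * t := Iff.rfl

lemma isOpen_Aset (f : Fin d → ℝ) (a b : ℝ) : IsOpen (Aset f a b) := by
  have h : Aset f a b = ⋃ t ∈ Icc a b, ⋂ i, {x : Fin d → ℝ | x i < f i * t} := by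
    ext x; simp [Aset]
  rw [h]
  exact isOpen_biUnion fun t _ =>
    isOpen_iInter_of_finite fun i => isOpen_lt (continuous_apply i) continuous_const

lemma exists_Ioo (f : Fin d → ℝ) {a b : ℝ} (hab : a < b) {x : Fin d → ℝ}
    (hx : x ∈ Aset f a b) : ∃ t ∈ Ioo a b, ∀ i, x i < f i * t := by
  obtain ⟨t, ht, hxt⟩ := hx
  have hU : IsOpen {s : ℝ | ∀ i, x i < f i * s} := by
    have h : {s : ℝ | ∀ i, x i < f i * s} = ⋂ i, {s : ℝ | x i < f i * s} := by ext s; simp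
    rw [h]
    exact isOpen_iInter_of_finite fun i =>
      isOpen_lt continuous_const (continuous_const.mul continuous_id)
  obtain ⟨ε, hε, hball⟩ := Metric.isOpen_iff.1 hU t hxt
  set δ := min ε (b - a) with hδ
  have hδ0 : 0 < δ := lt_min hε (by linarith [hab])
  have hδε : δ ≤ ε := min_le_left _ _
  have hδba : δ ≤ b - a := min_le_right _ _
  rcases le_or_gt t ((a + b) / 2) with hcase | hcase
  · refine ⟨t + δ / 3, ⟨by nlinarith [ht.1], by nlinarith⟩, hball ?_⟩
    simp only [Metric.mem_ball, Real.dist_eq]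
    rw [abs_of_nonneg (by linarith)]; linarith
  · refine ⟨t - δ / 3, ⟨by nlinarith, by nlinarith [ht.2]⟩, hball ?_⟩
    simp only [Metric.mem_ball, Real.dist_eq]
    rw [abs_of_nonpos (by linarith), neg_sub]; linarith

lemma mul_le_bound {a b t : ℝ} (c : ℝ) (ht : t ∈ Icc a b) :
    c * t ≤ |c| * (|a| + |b|) := by
  have h1 : |t| ≤ |a| + |b| := by
    rw [abs_le]
    constructor
    · have h1 := neg_abs_le a; have h2 := abs_nonneg b; linarith [ht.1]
    · have h1 := le_abs_self b; have h2 := abs_nonneg a; linarith [ht.2]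
  calc c * t ≤ |c * t| := le_abs_self _
  _ = |c| * |t| := abs_mul _ _
  _ ≤ |c| * (|a| + |b|) := mul_le_mul_of_nonneg_left h1 (abs_nonneg _)

lemma Aset_subset_box (f : Fin d → ℝ) (a b : ℝ) :
    Aset f a b ⊆ {x | ∀ i, x i < |f i| * (|a| + |b|) + 1} := by
  rintro x ⟨t, ht, hxt⟩ i
  have := mul_le_bound (f i) ht
  linarith [hxt i]

lemma measurableSet_box (c : Fin d → ℝ) :
    MeasurableSet {x : Fin d → ℝ | ∀ i, x i < c i} := by
  have h : {x : Fin d → ℝ | ∀ i, x i < c i} = ⋂ i, {x | x i < c i} := by ext x; simp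
  rw [h]
  exact MeasurableSet.iInter fun i =>
    measurableSet_lt (measurable_pi_apply i) measurable_const

lemma integrableOn_box (c : Fin d → ℝ) :
    IntegrableOn (fun x : Fin d → ℝ => exp (∑ i, x i)) {x | ∀ i, x i < c i} := by
  rw [← integrable_indicator_iff (measurableSet_box c)]
  have h : ∀ i, Integrable (Set.indicator (Iio (c i)) exp) := fun i =>
    (integrable_indicator_iff measurableSet_Iio).2
      ((integrableOn_exp_Iic (c i)).mono_set Iio_subset_Iic_self)
  have h2 := Integrable.fintype_prod (f := fun i => Set.indicator (Iio (c i)) exp) h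
  convert h2 using 1
  · rfl
  funext x
  by_cases hx : x ∈ {x : Fin d → ℝ | ∀ i, x i < c i}
  · rw [Set.indicator_of_mem hx, Real.exp_sum]
    exact Finset.prod_congr rfl fun i _ =>
      (Set.indicator_of_mem (show x i ∈ Iio (c i) from hx i) Real.exp).symm
  · rw [Set.indicator_of_notMem hx]
    simp only [mem_setOf_eq, not_forall, not_lt] at hx
    obtain ⟨i, hi⟩ := hx
    exact (Finset.prod_eq_zero (Finset.mem_univ i)
      (Set.indicator_of_notMem (show x i ∉ Iio (c i) by simpa using hi) Real.exp)).symm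
  · rfl

lemma integrableOn_Aset (f : Fin d → ℝ) (a b : ℝ) :
    IntegrableOn (fun x : Fin d → ℝ => exp (∑ i, x i)) (Aset f a b) :=
  (integrableOn_box _).mono_set (Aset_subset_box f a b)

/-! ### One-dimensional calculus helpers -/

lemma integral_exp_mul {c : ℝ} (hc : c ≠ 0) (a b : ℝ) :
    ∫ u in a..b, exp (c * u) = (exp (c * b) - exp (c * a)) / c := by
  have h : ∀ u ∈ uIcc a b, HasDerivAt (fun u => exp (c * u) / c) (exp (c * u)) u := by
    intro u _
    have h1 : HasDerivAt (fun u : ℝ => c * u) c u := by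
      simpa using (hasDerivAt_id u).const_mul c
    have h2 := (h1.exp).div_const c
    convert h2 using 1
    · rfl
    · rfl
    field_simp
  rw [intervalIntegral.integral_eq_sub_of_hasDerivAt h
    ((Real.continuous_exp.comp (continuous_const.mul continuous_id)).intervalIntegrable a b)]
  ring

lemma integral_exp_Iio (c : ℝ) : ∫ y in Iio c, exp y = exp c := by
  rw [← MeasureTheory.integral_Iic_eq_integral_Iio]
  exact integral_exp_Iic c

lemma hasDerivAt_expmul (g u : ℝ) : HasDerivAt (fun v => exp (g * v)) (g * exp (g * u)) u := by
  have h1 : HasDerivAt (fun v : ℝ => g * v) g u := by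
    simpa using (hasDerivAt_id u).const_mul g
  simpa [mul_comm] using h1.exp

lemma continuous_expmul (g : ℝ) : Continuous fun v : ℝ => exp (g * v) :=
  Real.continuous_exp.comp (continuous_const.mul continuous_id)

lemma hasDerivAt_K (e c : ℝ) (u : ℝ) :
    HasDerivAt (fun v => ∫ t in c..v, exp (e * t)) (exp (e * u)) u :=
  ((continuous_expmul e).integral_hasStrictDerivAt c u).hasDerivAt

lemma continuous_K (e c : ℝ) : Continuous fun v => ∫ t in c..v, exp (e * t) := by
  have h : Differentiable ℝ fun v => ∫ t in c..v, exp (e * t) :=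
    fun v => (hasDerivAt_K e c v).differentiableAt
  exact h.continuous

lemma K'_eq (e c : ℝ) : (fun v => ∫ t in v..c, exp (e * t))
    = fun v => -∫ t in c..v, exp (e * t) :=
  funext fun v => by rw [intervalIntegral.integral_symm]

lemma continuous_K' (e c : ℝ) : Continuous fun v => ∫ t in v..c, exp (e * t) := by
  rw [K'_eq]; exact (continuous_K e c).neg

lemma hasDerivAt_K' (e c : ℝ) (u : ℝ) :
    HasDerivAt (fun v => ∫ t in v..c, exp (e * t)) (-exp (e * u)) u := by
  rw [K'_eq]; exact (hasDerivAt_K e c u).neg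

lemma parts1 (g e a b : ℝ) :
    ∫ u in a..b, (g * (exp (g * u) * ∫ t in u..b, exp (e * t)) - exp ((g + e) * u))
      = -(exp (g * a) * ∫ t in a..b, exp (e * t)) := by
  have hFd : ∀ u ∈ uIcc a b,
      HasDerivAt (fun v => exp (g * v) * ∫ t in v..b, exp (e * t))
        (g * (exp (g * u) * ∫ t in u..b, exp (e * t)) - exp ((g + e) * u)) u := by
    intro u _
    have h := (hasDerivAt_expmul g u).mul (hasDerivAt_K' e b u)
    convert h using 1
    · rfl
    · rfl
    · rfl
    rw [add_mul, Real.exp_add]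
    ring
  have hcont : Continuous fun u =>
      g * (exp (g * u) * ∫ t in u..b, exp (e * t)) - exp ((g + e) * u) :=
    (continuous_const.mul ((continuous_expmul g).mul (continuous_K' e b))).sub
      (continuous_expmul (g + e))
  rw [intervalIntegral.integral_eq_sub_of_hasDerivAt hFd (hcont.intervalIntegrable a b)]
  simp

lemma parts2 (g e a b : ℝ) :
    ∫ u in a..b, (g * (exp (g * u) * ∫ t in a..u, exp (e * t)) + exp ((g + e) * u))
      = exp (g * b) * ∫ t in a..b, exp (e * t) := by
  have hFd : ∀ u ∈ uIcc a b,
      HasDerivAt (fun v => exp (g * v) * ∫ t in a..v, exp (e * t))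
        (g * (exp (g * u) * ∫ t in a..u, exp (e * t)) + exp ((g + e) * u)) u := by
    intro u _
    have h := (hasDerivAt_expmul g u).mul (hasDerivAt_K e a u)
    convert h using 1
    · rfl
    · rfl
    · rfl
    rw [add_mul, Real.exp_add]
    ring
  have hcont : Continuous fun u =>
      g * (exp (g * u) * ∫ t in a..u, exp (e * t)) + exp ((g + e) * u) :=
    (continuous_const.mul ((continuous_expmul g).mul (continuous_K e a))).add
      (continuous_expmul (g + e))
  rw [intervalIntegral.integral_eq_sub_of_hasDerivAt hFd (hcont.intervalIntegrable a b)]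
  simp

lemma outer_split {c₁ c₂ : ℝ} (hc : c₁ ≤ c₂) (C : ℝ) (φ : ℝ → ℝ) (hφ : Continuous φ) :
    ∫ y : ℝ, (Set.indicator (Iio c₁) (fun y => exp y * C) y
      + Set.indicator (Ico c₁ c₂) (fun y => exp y * φ y) y)
    = exp c₁ * C + ∫ y in c₁..c₂, exp y * φ y := by
  have h1 : Integrable (Set.indicator (Iio c₁) fun y => exp y * C) :=
    (integrable_indicator_iff measurableSet_Iio).2
      (((integrableOn_exp_Iic c₁).mono_set Iio_subset_Iic_self).mul_const C)
  have h2 : Integrable (Set.indicator (Ico c₁ c₂) fun y => exp y * φ y) :=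
    (integrable_indicator_iff measurableSet_Ico).2
      (((Real.continuous_exp.mul hφ).integrableOn_Icc).mono_set Ico_subset_Icc_self)
  rw [integral_add h1 h2, MeasureTheory.integral_indicator measurableSet_Iio,
    MeasureTheory.integral_indicator measurableSet_Ico]
  congr 1
  · rw [integral_mul_const, integral_exp_Iio]
  · rw [setIntegral_congr_set Ico_ae_eq_Ioc, ← intervalIntegral.integral_of_le hc]

lemma comp_mul_left (h : ℝ → ℝ) (g a b : ℝ) :
    ∫ y in (g * a)..(g * b), h y = g * ∫ u in a..b, h (g * u) := by
  have h0 := intervalIntegral.smul_integral_comp_mul_left (f := h) (a := a) (b := b) g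
  rw [← h0, smul_eq_mul]



def Bset (g : ℝ) (f' : Fin d → ℝ) (a b : ℝ) : Set (ℝ × (Fin d → ℝ)) :=
  {z | ∃ t ∈ Icc a b, z.1 < g * t ∧ ∀ i, z.2 i < f' i * t}

lemma mem_Bset {g : ℝ} {f' : Fin d → ℝ} {a b : ℝ} {z : ℝ × (Fin d → ℝ)} :
    z ∈ Bset g f' a b ↔ ∃ t ∈ Icc a b, z.1 < g * t ∧ ∀ i, z.2 i < f' i * t := Iff.rfl

lemma step (g : ℝ) (f' : Fin d → ℝ)
    (ih : ∀ u v : ℝ, u ≤ v → ∫ x in Aset f' u v, exp (∑ i, x i)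
      = exp ((∑ i, f' i) * u) + (∑ i, max (f' i) 0) * ∫ t in u..v, exp ((∑ i, f' i) * t))
    (a b : ℝ) (hab : a ≤ b) :
    ∫ x in Aset (Fin.cons g f' : Fin (d + 1) → ℝ) a b, exp (∑ i, x i)
      = exp ((g + ∑ i, f' i) * a)
        + (max g 0 + ∑ i, max (f' i) 0) * ∫ t in a..b, exp ((g + ∑ i, f' i) * t) := by
  have hmem : ∀ z : ℝ × (Fin d → ℝ),
      Fin.cons z.1 z.2 ∈ Aset (Fin.cons g f' : Fin (d + 1) → ℝ) a b ↔ z ∈ Bset g f' a b := by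
    intro z
    rw [mem_Aset, mem_Bset]
    constructor
    · rintro ⟨t, ht, hxt⟩
      refine ⟨t, ht, ?_, fun i => ?_⟩
      · have h0 := hxt 0; simpa using h0
      · have hi := hxt i.succ; simpa using hi
    · rintro ⟨t, ht, h0, hs⟩
      refine ⟨t, ht, fun j => ?_⟩
      refine Fin.cases ?_ (fun i => ?_) j
      · simpa using h0
      · simpa using hs i
  have hcons : ∀ z : ℝ × (Fin d → ℝ),
      (MeasurableEquiv.piFinSuccAbove (fun _ : Fin (d + 1) => ℝ) 0).symm z
        = Fin.cons z.1 z.2 := fun z => by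
    simp [MeasurableEquiv.piFinSuccAbove_symm_apply, Fin.insertNthEquiv,
      Fin.insertNth_zero']
  have hBmeas : MeasurableSet (Bset g f' a b) := by
    have hBeq : Bset g f' a b
        = (MeasurableEquiv.piFinSuccAbove (fun _ : Fin (d + 1) => ℝ) 0).symm ⁻¹'
          Aset (Fin.cons g f' : Fin (d + 1) → ℝ) a b := by
      ext z
      rw [mem_preimage, hcons z]
      exact (hmem z).symm
    rw [hBeq]
    exact (isOpen_Aset _ a b).measurableSet.preimage (MeasurableEquiv.measurable _)
  rw [← MeasureTheory.integral_indicator (isOpen_Aset _ a b).measurableSet,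
    ← ((volume_preserving_piFinSuccAbove (fun _ : Fin (d + 1) => ℝ) 0).symm).integral_comp
      (MeasurableEquiv.measurableEmbedding _)
      (Set.indicator (Aset (Fin.cons g f' : Fin (d + 1) → ℝ) a b) fun x => exp (∑ i, x i))]
  have hindeq : ∀ z : ℝ × (Fin d → ℝ),
      Set.indicator (Aset (Fin.cons g f' : Fin (d + 1) → ℝ) a b) (fun x => exp (∑ i, x i))
        ((MeasurableEquiv.piFinSuccAbove (fun _ : Fin (d + 1) => ℝ) 0).symm z)
      = Set.indicator (Bset g f' a b)
          (fun z : ℝ × (Fin d → ℝ) => exp z.1 * exp (∑ i, z.2 i)) z := by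
    intro z
    rw [hcons z]
    by_cases hz : z ∈ Bset g f' a b
    · rw [Set.indicator_of_mem ((hmem z).2 hz), Set.indicator_of_mem hz, Fin.sum_univ_succ]
      simp [Real.exp_add]
    · rw [Set.indicator_of_notMem fun h => hz ((hmem z).1 h), Set.indicator_of_notMem hz]
  simp_rw [hindeq]
  have hInt : Integrable
      (Set.indicator (Bset g f' a b)
        fun z : ℝ × (Fin d → ℝ) => exp z.1 * exp (∑ i, z.2 i))
      ((volume : Measure ℝ).prod (volume : Measure (Fin d → ℝ))) := by
    have h1 : Integrable (Set.indicator (Iio (|g| * (|a| + |b|) + 1)) exp) :=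
      (integrable_indicator_iff measurableSet_Iio).2
        ((integrableOn_exp_Iic _).mono_set Iio_subset_Iic_self)
    have h2 : Integrable
        (Set.indicator {x : Fin d → ℝ | ∀ i, x i < |f' i| * (|a| + |b|) + 1}
          fun x => exp (∑ i, x i)) :=
      (integrable_indicator_iff (measurableSet_box _)).2 (integrableOn_box _)
    have h12 := h1.mul_prod h2
    refine h12.mono ?_ (ae_of_all _ ?_)
    · refine (Measurable.indicator ?_ hBmeas).aestronglyMeasurable
      exact ((Real.continuous_exp.comp continuous_fst).mul
        (Real.continuous_exp.comp (continuous_finset_sum _ fun i _ =>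
          (continuous_apply i).comp continuous_snd))).measurable
    · intro z
      by_cases hz : z ∈ Bset g f' a b
      · obtain ⟨t, ht, h0, hs⟩ := hz
        have hz1 : z.1 ∈ Iio (|g| * (|a| + |b|) + 1) := by
          have hb := mul_le_bound g ht
          simp only [mem_Iio]; linarith
        have hz2 : z.2 ∈ {x : Fin d → ℝ | ∀ i, x i < |f' i| * (|a| + |b|) + 1} := by
          intro i
          have hb := mul_le_bound (f' i) ht
          have hsi := hs i
          linarith
        rw [Set.indicator_of_mem (mem_Bset.2 ⟨t, ht, h0, hs⟩),
          Set.indicator_of_mem hz1, Set.indicator_of_mem hz2]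
      · rw [Set.indicator_of_notMem hz]
        simp only [norm_zero]
        exact norm_nonneg _
  rw [Measure.volume_eq_prod, MeasureTheory.integral_prod _ hInt]
  -- the slice computation helper
  have hslice : ∀ (y : ℝ) (s : Set (Fin d → ℝ)), MeasurableSet s →
      (∀ x' : Fin d → ℝ, (y, x') ∈ Bset g f' a b ↔ x' ∈ s) →
      (∫ x' : Fin d → ℝ, Set.indicator (Bset g f' a b)
          (fun z : ℝ × (Fin d → ℝ) => exp z.1 * exp (∑ i, z.2 i)) (y, x'))
        = exp y * ∫ x' in s, exp (∑ i, x' i) := by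
    intro y s hsm hs
    have hpt : ∀ x' : Fin d → ℝ,
        Set.indicator (Bset g f' a b)
          (fun z : ℝ × (Fin d → ℝ) => exp z.1 * exp (∑ i, z.2 i)) (y, x')
          = Set.indicator s (fun x' => exp y * exp (∑ i, x' i)) x' := by
      intro x'
      by_cases hx : x' ∈ s
      · rw [Set.indicator_of_mem ((hs x').2 hx), Set.indicator_of_mem hx]
      · rw [Set.indicator_of_notMem fun h => hx ((hs x').1 h), Set.indicator_of_notMem hx]
    simp_rw [hpt]
    rw [MeasureTheory.integral_indicator hsm, MeasureTheory.integral_const_mul]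
  rcases lt_trichotomy g 0 with hg | hg | hg
  · -- g < 0
    have hg0 : g ≠ 0 := ne_of_lt hg
    have hfun : ∀ y : ℝ,
        (∫ x' : Fin d → ℝ, Set.indicator (Bset g f' a b)
          (fun z : ℝ × (Fin d → ℝ) => exp z.1 * exp (∑ i, z.2 i)) (y, x'))
        = Set.indicator (Iio (g * b))
            (fun y => exp y * (exp ((∑ i, f' i) * a)
              + (∑ i, max (f' i) 0) * ∫ t in a..b, exp ((∑ i, f' i) * t))) y
          + Set.indicator (Ico (g * b) (g * a))
            (fun y => exp y * (exp ((∑ i, f' i) * a)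
              + (∑ i, max (f' i) 0) * ∫ t in a..(y / g), exp ((∑ i, f' i) * t))) y := by
      intro y
      rcases lt_or_ge y (g * b) with hy | hy
      · have hset : ∀ x' : Fin d → ℝ, (y, x') ∈ Bset g f' a b ↔ x' ∈ Aset f' a b := by
          intro x'
          rw [mem_Bset, mem_Aset]
          constructor
          · rintro ⟨t, ht, h0, hs⟩; exact ⟨t, ht, hs⟩
          · rintro ⟨t, ht, hs⟩
            refine ⟨t, ht, ?_, hs⟩
            have h2 : g * b ≤ g * t := mul_le_mul_of_nonpos_left ht.2 hg.le
            linarith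
        rw [hslice y (Aset f' a b) (isOpen_Aset f' a b).measurableSet hset, ih a b hab,
          Set.indicator_of_mem (mem_Iio.mpr hy),
          Set.indicator_of_notMem (fun hm => absurd hm.1 (not_le.2 hy))]
        ring
      · rcases lt_or_ge y (g * a) with hy2 | hy2
        · have hv1 : a < y / g := by
            rw [lt_div_iff_of_neg hg, mul_comm]
            exact hy2
          have hv2 : y / g ≤ b := by
            rw [div_le_iff_of_neg hg, mul_comm]
            exact hy
          have hset : ∀ x' : Fin d → ℝ,
              (y, x') ∈ Bset g f' a b ↔ x' ∈ Aset f' a (y / g) := by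
            intro x'
            rw [mem_Bset, mem_Aset]
            constructor
            · rintro ⟨t, ht, h0, hs⟩
              have h1 : t < y / g := by
                rw [lt_div_iff_of_neg hg, mul_comm]
                exact h0
              exact ⟨t, ⟨ht.1, h1.le⟩, hs⟩
            · intro hx
              obtain ⟨t, ht, hs⟩ := exists_Ioo f' hv1 hx
              refine ⟨t, ⟨ht.1.le, le_trans ht.2.le hv2⟩, ?_, hs⟩
              have h1 := (lt_div_iff_of_neg hg).1 ht.2
              rw [mul_comm] at h1
              exact h1
          rw [hslice y (Aset f' a (y / g)) (isOpen_Aset f' a _).measurableSet hset,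
            ih a (y / g) hv1.le,
            Set.indicator_of_notMem (by simp only [mem_Iio, not_lt]; exact hy),
            Set.indicator_of_mem (show y ∈ Ico (g * b) (g * a) from ⟨hy, hy2⟩)]
          ring
        · have hset : ∀ x' : Fin d → ℝ,
              (y, x') ∈ Bset g f' a b ↔ x' ∈ (∅ : Set (Fin d → ℝ)) := by
            intro x'
            rw [mem_Bset]
            simp only [mem_empty_iff_false, iff_false]
            rintro ⟨t, ht, h0, hs⟩
            have h2 : g * t ≤ g * a := mul_le_mul_of_nonpos_left ht.1 hg.le
            linarith
          rw [hslice y ∅ MeasurableSet.empty hset,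
            Set.indicator_of_notMem (by simp only [mem_Iio, not_lt]; linarith),
            Set.indicator_of_notMem (fun hm => absurd hm.2 (not_lt.2 hy2))]
          simp
    simp_rw [hfun]
    have hφc : Continuous fun y : ℝ => exp ((∑ i, f' i) * a)
        + (∑ i, max (f' i) 0) * ∫ t in a..(y / g), exp ((∑ i, f' i) * t) :=
      continuous_const.add (continuous_const.mul
        ((continuous_K _ a).comp (continuous_id.div_const g)))
    have hgb_ga : g * b ≤ g * a := by nlinarith
    rw [outer_split hgb_ga
      (exp ((∑ i, f' i) * a) + (∑ i, max (f' i) 0) * ∫ t in a..b, exp ((∑ i, f' i) * t))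
      _ hφc, max_eq_right hg.le]
    rw [comp_mul_left (fun y => exp y * (exp ((∑ i, f' i) * a)
      + (∑ i, max (f' i) 0) * ∫ t in a..(y / g), exp ((∑ i, f' i) * t))) g b a,
      intervalIntegral.integral_symm a b]
    simp only [mul_div_cancel_left₀ _ hg0]
    have hi1 : IntervalIntegrable (fun u => exp ((g + ∑ i, f' i) * u)) volume a b :=
      (continuous_expmul _).intervalIntegrable a b
    have hi2 : IntervalIntegrable
        (fun u => exp (g * u) * ∫ t in a..u, exp ((∑ i, f' i) * t)) volume a b :=
      ((continuous_expmul g).mul (continuous_K _ a)).intervalIntegrable a b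
    have hi3 : IntervalIntegrable (fun u => exp (g * u)) volume a b :=
      (continuous_expmul g).intervalIntegrable a b
    have hexpand : ∫ u in a..b, exp (g * u) * (exp ((∑ i, f' i) * a)
          + (∑ i, max (f' i) 0) * ∫ t in a..u, exp ((∑ i, f' i) * t))
        = exp ((∑ i, f' i) * a) * (∫ u in a..b, exp (g * u))
          + (∑ i, max (f' i) 0)
            * ∫ u in a..b, exp (g * u) * ∫ t in a..u, exp ((∑ i, f' i) * t) := by
      have hfe : (fun u => exp (g * u) * (exp ((∑ i, f' i) * a)
          + (∑ i, max (f' i) 0) * ∫ t in a..u, exp ((∑ i, f' i) * t)))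
          = fun u => exp ((∑ i, f' i) * a) * exp (g * u)
            + (∑ i, max (f' i) 0)
              * (exp (g * u) * ∫ t in a..u, exp ((∑ i, f' i) * t)) := by
        funext u
        ring
      rw [hfe, intervalIntegral.integral_add (hi3.const_mul _) (hi2.const_mul _),
        intervalIntegral.integral_const_mul, intervalIntegral.integral_const_mul]
    have hparts : g * (∫ u in a..b, exp (g * u) * ∫ t in a..u, exp ((∑ i, f' i) * t))
        + (∫ u in a..b, exp ((g + ∑ i, f' i) * u))
        = exp (g * b) * ∫ t in a..b, exp ((∑ i, f' i) * t) := by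
      rw [← intervalIntegral.integral_const_mul,
        ← intervalIntegral.integral_add (hi2.const_mul g) hi1]
      exact parts2 g (∑ i, f' i) a b
    have hEg : g * ∫ u in a..b, exp (g * u) = exp (g * b) - exp (g * a) := by
      rw [integral_exp_mul hg0]
      field_simp
    rw [hexpand]
    have hea : exp ((g + ∑ i, f' i) * a) = exp (g * a) * exp ((∑ i, f' i) * a) := by
      rw [add_mul, Real.exp_add]
    rw [hea]
    linear_combination (-(exp ((∑ i, f' i) * a))) * hEg - (∑ i, max (f' i) 0) * hparts
  · -- g = 0
    subst hg
    have hfun : ∀ y : ℝ,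
        (∫ x' : Fin d → ℝ, Set.indicator (Bset 0 f' a b)
          (fun z : ℝ × (Fin d → ℝ) => exp z.1 * exp (∑ i, z.2 i)) (y, x'))
        = Set.indicator (Iio (0 : ℝ))
            (fun y => exp y * (exp ((∑ i, f' i) * a)
              + (∑ i, max (f' i) 0) * ∫ t in a..b, exp ((∑ i, f' i) * t))) y
          + Set.indicator (Ico (0 : ℝ) 0) (fun y => exp y * (0 : ℝ)) y := by
      intro y
      rcases lt_or_ge y 0 with hy | hy
      · have hset : ∀ x' : Fin d → ℝ, (y, x') ∈ Bset 0 f' a b ↔ x' ∈ Aset f' a b := by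
          intro x'
          rw [mem_Bset, mem_Aset]
          constructor
          · rintro ⟨t, ht, h0, hs⟩; exact ⟨t, ht, hs⟩
          · rintro ⟨t, ht, hs⟩
            exact ⟨t, ht, by simpa using hy, hs⟩
        rw [hslice y (Aset f' a b) (isOpen_Aset f' a b).measurableSet hset, ih a b hab,
          Set.indicator_of_mem (mem_Iio.mpr hy),
          Set.indicator_of_notMem (show y ∉ Ico (0:ℝ) 0 by simp)]
        ring
      · have hset : ∀ x' : Fin d → ℝ,
            (y, x') ∈ Bset 0 f' a b ↔ x' ∈ (∅ : Set (Fin d → ℝ)) := by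
          intro x'
          rw [mem_Bset]
          simp only [mem_empty_iff_false, iff_false]
          rintro ⟨t, ht, h0, hs⟩
          simp only [zero_mul] at h0
          exact absurd h0 (not_lt.2 hy)
        rw [hslice y ∅ MeasurableSet.empty hset,
          Set.indicator_of_notMem (by simp only [mem_Iio, not_lt]; exact hy),
          Set.indicator_of_notMem (show y ∉ Ico (0:ℝ) 0 by simp)]
        simp
    simp_rw [hfun]
    rw [outer_split (le_refl (0 : ℝ))
      (exp ((∑ i, f' i) * a) + (∑ i, max (f' i) 0) * ∫ t in a..b, exp ((∑ i, f' i) * t))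
      (fun _ => (0 : ℝ)) continuous_const]
    simp only [Real.exp_zero, one_mul, mul_zero, intervalIntegral.integral_same,
      intervalIntegral.integral_zero, add_zero, zero_add, max_self]
  · -- 0 < g
    have hg0 : g ≠ 0 := ne_of_gt hg
    have hfun : ∀ y : ℝ,
        (∫ x' : Fin d → ℝ, Set.indicator (Bset g f' a b)
          (fun z : ℝ × (Fin d → ℝ) => exp z.1 * exp (∑ i, z.2 i)) (y, x'))
        = Set.indicator (Iio (g * a))
            (fun y => exp y * (exp ((∑ i, f' i) * a)
              + (∑ i, max (f' i) 0) * ∫ t in a..b, exp ((∑ i, f' i) * t))) y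
          + Set.indicator (Ico (g * a) (g * b))
            (fun y => exp y * (exp ((∑ i, f' i) * (y / g))
              + (∑ i, max (f' i) 0) * ∫ t in (y / g)..b, exp ((∑ i, f' i) * t))) y := by
      intro y
      rcases lt_or_ge y (g * a) with hy | hy
      · have hset : ∀ x' : Fin d → ℝ, (y, x') ∈ Bset g f' a b ↔ x' ∈ Aset f' a b := by
          intro x'
          rw [mem_Bset, mem_Aset]
          constructor
          · rintro ⟨t, ht, h0, hs⟩; exact ⟨t, ht, hs⟩
          · rintro ⟨t, ht, hs⟩
            refine ⟨t, ht, ?_, hs⟩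
            have h2 : g * a ≤ g * t := mul_le_mul_of_nonneg_left ht.1 hg.le
            linarith
        rw [hslice y (Aset f' a b) (isOpen_Aset f' a b).measurableSet hset, ih a b hab,
          Set.indicator_of_mem (mem_Iio.mpr hy),
          Set.indicator_of_notMem (fun hm => absurd hm.1 (not_le.2 hy))]
        ring
      · rcases lt_or_ge y (g * b) with hy2 | hy2
        · have hyga : a ≤ y / g := by
            rw [le_div_iff₀ hg, mul_comm]
            exact hy
          have hygb : y / g < b := by
            rw [div_lt_iff₀ hg, mul_comm]
            exact hy2
          have hset : ∀ x' : Fin d → ℝ,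
              (y, x') ∈ Bset g f' a b ↔ x' ∈ Aset f' (y / g) b := by
            intro x'
            rw [mem_Bset, mem_Aset]
            constructor
            · rintro ⟨t, ht, h0, hs⟩
              have h1 : y / g < t := by
                rw [div_lt_iff₀ hg, mul_comm]
                exact h0
              exact ⟨t, ⟨h1.le, ht.2⟩, hs⟩
            · intro hx
              obtain ⟨t, ht, hs⟩ := exists_Ioo f' hygb hx
              refine ⟨t, ⟨le_trans hyga ht.1.le, ht.2.le⟩, ?_, hs⟩
              have h1 := (div_lt_iff₀ hg).1 ht.1
              rw [mul_comm] at h1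
              exact h1
          rw [hslice y (Aset f' (y / g) b) (isOpen_Aset f' _ b).measurableSet hset,
            ih (y / g) b hygb.le,
            Set.indicator_of_notMem (by simp only [mem_Iio, not_lt]; exact hy),
            Set.indicator_of_mem (show y ∈ Ico (g * a) (g * b) from ⟨hy, hy2⟩)]
          ring
        · have hset : ∀ x' : Fin d → ℝ,
              (y, x') ∈ Bset g f' a b ↔ x' ∈ (∅ : Set (Fin d → ℝ)) := by
            intro x'
            rw [mem_Bset]
            simp only [mem_empty_iff_false, iff_false]
            rintro ⟨t, ht, h0, hs⟩
            have h2 : g * t ≤ g * b := mul_le_mul_of_nonneg_left ht.2 hg.le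
            linarith
          rw [hslice y ∅ MeasurableSet.empty hset,
            Set.indicator_of_notMem (by simp only [mem_Iio, not_lt]; linarith),
            Set.indicator_of_notMem (fun hm => absurd hm.2 (not_lt.2 hy2))]
          simp
    simp_rw [hfun]
    have hφc : Continuous fun y : ℝ => exp ((∑ i, f' i) * (y / g))
        + (∑ i, max (f' i) 0) * ∫ t in (y / g)..b, exp ((∑ i, f' i) * t) := by
      have hdiv : Continuous fun y : ℝ => y / g := continuous_id.div_const g
      exact ((continuous_expmul _).comp hdiv).add
        (continuous_const.mul ((continuous_K' _ b).comp hdiv))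
    rw [outer_split (mul_le_mul_of_nonneg_left hab hg.le)
      (exp ((∑ i, f' i) * a) + (∑ i, max (f' i) 0) * ∫ t in a..b, exp ((∑ i, f' i) * t))
      _ hφc, max_eq_left hg.le]
    rw [comp_mul_left (fun y => exp y * (exp ((∑ i, f' i) * (y / g))
      + (∑ i, max (f' i) 0) * ∫ t in (y / g)..b, exp ((∑ i, f' i) * t))) g a b]
    simp only [mul_div_cancel_left₀ _ hg0]
    have hi1 : IntervalIntegrable (fun u => exp ((g + ∑ i, f' i) * u)) volume a b :=
      (continuous_expmul _).intervalIntegrable a b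
    have hi2 : IntervalIntegrable
        (fun u => exp (g * u) * ∫ t in u..b, exp ((∑ i, f' i) * t)) volume a b :=
      ((continuous_expmul g).mul (continuous_K' _ b)).intervalIntegrable a b
    have hexpand : ∫ u in a..b, exp (g * u) * (exp ((∑ i, f' i) * u)
          + (∑ i, max (f' i) 0) * ∫ t in u..b, exp ((∑ i, f' i) * t))
        = (∫ u in a..b, exp ((g + ∑ i, f' i) * u))
          + (∑ i, max (f' i) 0)
            * ∫ u in a..b, exp (g * u) * ∫ t in u..b, exp ((∑ i, f' i) * t) := by
      have hfe : (fun u => exp (g * u) * (exp ((∑ i, f' i) * u)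
          + (∑ i, max (f' i) 0) * ∫ t in u..b, exp ((∑ i, f' i) * t)))
          = fun u => exp ((g + ∑ i, f' i) * u)
            + (∑ i, max (f' i) 0)
              * (exp (g * u) * ∫ t in u..b, exp ((∑ i, f' i) * t)) := by
        funext u
        rw [add_mul, Real.exp_add]
        ring
      rw [hfe, intervalIntegral.integral_add hi1 (hi2.const_mul _),
        intervalIntegral.integral_const_mul]
    have hparts : g * (∫ u in a..b, exp (g * u) * ∫ t in u..b, exp ((∑ i, f' i) * t))
        - (∫ u in a..b, exp ((g + ∑ i, f' i) * u))
        = -(exp (g * a) * ∫ t in a..b, exp ((∑ i, f' i) * t)) := by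
      rw [← intervalIntegral.integral_const_mul,
        ← intervalIntegral.integral_sub (hi2.const_mul g) hi1]
      exact parts1 g (∑ i, f' i) a b
    rw [hexpand]
    have hea : exp ((g + ∑ i, f' i) * a) = exp (g * a) * exp ((∑ i, f' i) * a) := by
      rw [add_mul, Real.exp_add]
    rw [hea]
    linear_combination (∑ i, max (f' i) 0) * hparts

lemma key : ∀ {d : ℕ} (f : Fin d → ℝ) (a b : ℝ), a ≤ b →
    ∫ x in Aset f a b, exp (∑ i, x i) =
      exp ((∑ i, f i) * a) + (∑ i, max (f i) 0) * ∫ t in a..b, exp ((∑ i, f i) * t) := by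
  intro d
  induction d with
  | zero =>
    intro f a b hab
    have hA : Aset f a b = univ :=
      eq_univ_of_forall fun x => ⟨a, ⟨le_refl a, hab⟩, fun i => i.elim0⟩
    rw [hA, Measure.restrict_univ]
    have h1 : ∀ x : Fin 0 → ℝ, (∑ i, x i) = 0 := fun x => by simp
    have h2 : (∑ i : Fin 0, f i) = 0 := by simp
    have h3 : (∑ i : Fin 0, max (f i) 0) = 0 := by simp
    simp only [h1, h2, h3, zero_mul, Real.exp_zero, add_zero]
    rw [integral_const, smul_eq_mul, mul_one, volume_pi, measureReal_def, Measure.pi_empty_univ]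
    simp
  | succ d ihd =>
    intro f a b hab
    have hc : (Fin.cons (f 0) (fun i => f i.succ) : Fin (d + 1) → ℝ) = f :=
      Fin.cons_self_tail f
    have hs1 : (∑ i : Fin (d + 1), (Fin.cons (f 0) (fun i => f i.succ) : Fin (d + 1) → ℝ) i)
        = f 0 + ∑ i : Fin d, f i.succ := by
      simp [Fin.sum_univ_succ]
    have hs2 : (∑ i : Fin (d + 1),
          max ((Fin.cons (f 0) (fun i => f i.succ) : Fin (d + 1) → ℝ) i) 0)
        = max (f 0) 0 + ∑ i : Fin d, max (f i.succ) 0 := by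
      simp [Fin.sum_univ_succ]
    rw [← hc, hs1, hs2]
    exact step (f 0) (fun i => f i.succ) (fun u v huv => ihd _ u v huv) a b hab

end Stmt8Aux

open Stmt8Aux in
/-- Lemma 4.7 of the paper. For any `f ∈ ℝ^d` and `L > 0`, with
`f_i⁺ = max(f_i,0)`, `f_i⁻ = min(f_i,0)` and `S = Σ_i f_i`:
`∫_{ℝ^d} 1{∃ t ∈ [0,L] : x < f t} e^{Σ_i x_i} dx`
equals `1 + (Σ_i f_i⁺) L` if `S = 0`, and `(Σ_i f_i⁻)/S + (Σ_i f_i⁺)/S · e^{S L}`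
otherwise. -/
theorem stmt8 {d : ℕ} (f : Fin d → ℝ) (L : ℝ) (hL : 0 < L) :
    ((∑ i, f i) = 0 →
      (∫ x : Fin d → ℝ,
        Set.indicator {x : Fin d → ℝ | ∃ t ∈ Icc (0 : ℝ) L, ∀ i, x i < f i * t}
          (fun x => Real.exp (∑ i, x i)) x)
      = 1 + (∑ i, max (f i) 0) * L) ∧
    ((∑ i, f i) ≠ 0 →
      (∫ x : Fin d → ℝ,
        Set.indicator {x : Fin d → ℝ | ∃ t ∈ Icc (0 : ℝ) L, ∀ i, x i < f i * t}
          (fun x => Real.exp (∑ i, x i)) x)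
      = (∑ i, min (f i) 0) / (∑ i, f i) +
        (∑ i, max (f i) 0) / (∑ i, f i) * Real.exp ((∑ i, f i) * L)) := by
  have h0 : {x : Fin d → ℝ | ∃ t ∈ Icc (0 : ℝ) L, ∀ i, x i < f i * t} = Aset f 0 L := rfl
  have hbase : (∫ x : Fin d → ℝ,
      Set.indicator {x : Fin d → ℝ | ∃ t ∈ Icc (0 : ℝ) L, ∀ i, x i < f i * t}
        (fun x => Real.exp (∑ i, x i)) x)
      = exp ((∑ i, f i) * 0) + (∑ i, max (f i) 0) * ∫ t in (0:ℝ)..L, exp ((∑ i, f i) * t) := by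
    rw [h0, MeasureTheory.integral_indicator (isOpen_Aset f 0 L).measurableSet]
    exact key f 0 L hL.le
  constructor
  · intro hS
    rw [hbase, hS]
    simp
  · intro hS
    rw [hbase, integral_exp_mul hS 0 L]
    have hmin : (∑ i, min (f i) 0) = (∑ i, f i) - (∑ i, max (f i) 0) := by
      rw [← Finset.sum_sub_distrib]
      exact Finset.sum_congr rfl fun i _ => by
        have := min_add_max (f i) (0 : ℝ)
        linarith
    rw [hmin]
    simp only [mul_zero, Real.exp_zero]
    field_simp
    ring
end
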